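/- arXiv:1302.4401 — 8 statements merged into one kernel-verified Lean document; each statement's English description precedes it below -/
import Mathlib

section
/- Every extremal pure simplicial complex is shellable. (Combinatorial form of the Herzog–Hibi theorem, obtained from the main theorem together with the implication 'vertex decomposable ⇒ shellable'.) -/
open Finset

/-- The least possible number of `(k-1)`-element sets in the shadow of a family
of `n` distinct `k`-element sets. -/
noncomputable def minShadow (n k : ℕ) : ℕ :=
  sInf {m | ∃ U : Finset (Finset ℕ),
    U.card = n ∧ (∀ A ∈ U, A.card = k) ∧ (Finset.shadow U).card = m}

/-- A (finite abstract) simplicial complex: a nonempty family of finite sets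
closed under taking subsets. -/
def IsComplex (Δ : Finset (Finset ℕ)) : Prop :=
  Δ.Nonempty ∧ ∀ σ ∈ Δ, ∀ τ ⊆ σ, τ ∈ Δ

/-- The facets (maximal faces) of `Δ`. -/
def facets (Δ : Finset (Finset ℕ)) : Finset (Finset ℕ) :=
  Δ.filter fun σ => ∀ τ ∈ Δ, σ ⊆ τ → σ = τ

/-- `Δ` is pure of dimension `d`: every facet has `d + 1` elements. -/
def IsPureDim (Δ : Finset (Finset ℕ)) (d : ℕ) : Prop :=
  ∀ σ ∈ facets Δ, σ.card = d + 1

/-- `Δ` is pure: all facets have the same number of elements. -/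
def IsPure (Δ : Finset (Finset ℕ)) : Prop :=
  ∃ k, ∀ σ ∈ facets Δ, σ.card = k

/-- The link of the vertex `x` in `Δ`:
`lk_Δ(x) = {τ ∈ Δ : x ∉ τ and τ ∪ {x} ∈ Δ}`. -/
def link (Δ : Finset (Finset ℕ)) (x : ℕ) : Finset (Finset ℕ) :=
  Δ.filter fun τ => x ∉ τ ∧ insert x τ ∈ Δ

/-- The deletion of the vertex `x` from `Δ`: `Δ ∖ x = {τ ∈ Δ : x ∉ τ}`. -/
def deletion (Δ : Finset (Finset ℕ)) (x : ℕ) : Finset (Finset ℕ) :=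
  Δ.filter fun τ => x ∉ τ

/-- `Δ` is an extremal complex of dimension `d`: it is a pure simplicial complex
of dimension `d` whose number of `d`-element faces is the least possible among
all families of `(facets Δ).card` sets of size `d + 1`. -/
def IsExtremal (Δ : Finset (Finset ℕ)) (d : ℕ) : Prop :=
  IsComplex Δ ∧ IsPureDim Δ d ∧
  (Δ.filter fun σ => σ.card = d).card = minShadow (facets Δ).card (d + 1)

/-- Vertex decomposability of a pure simplicial complex: either `Δ` consists only
of the empty face, or `Δ` is a single vertex, or some vertex `x` has both link and
deletion pure and vertex decomposable. -/
inductive VertexDecomposable : Finset (Finset ℕ) → Prop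
  | emptyFace : VertexDecomposable {∅}
  | point (x : ℕ) : VertexDecomposable {∅, {x}}
  | step (Δ : Finset (Finset ℕ)) (x : ℕ) (hx : {x} ∈ Δ)
      (hl₁ : IsPure (link Δ x)) (hl₂ : VertexDecomposable (link Δ x))
      (hd₁ : IsPure (deletion Δ x)) (hd₂ : VertexDecomposable (deletion Δ x)) :
      VertexDecomposable Δ

/-- Shellability of a pure simplicial complex: the facets can be ordered
`F 0, F 1, …, F (n-1)` so that for each `j ≥ 1` and each `i < j` there is
`i' < j` with `|F j ∩ F i'| = |F j| - 1` and `F j ∩ F i ⊆ F j ∩ F i'`. -/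
def IsShellable (Δ : Finset (Finset ℕ)) : Prop :=
  ∃ (n : ℕ) (F : ℕ → Finset ℕ),
    facets Δ = (Finset.range n).image F ∧
    (∀ i < n, ∀ j < n, F i = F j → i = j) ∧
    ∀ j, 1 ≤ j → j < n → ∀ i < j, ∃ i' < j,
      (F j ∩ F i').card = (F j).card - 1 ∧ F j ∩ F i ⊆ F j ∩ F i'


attribute [-instance] instDecidableEqFin

open Finset.Colex

section MapFam
variable {α β : Type*} [DecidableEq α] [DecidableEq β] {f : α → β} {U : Finset (Finset α)}

/-- Pushing a family of finsets forward along a map. -/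
def mapFam (f : α → β) [DecidableEq β] (U : Finset (Finset α)) : Finset (Finset β) :=
  U.image fun A => A.image f

lemma card_mapFam (hf : Function.Injective f) : (mapFam f U).card = U.card :=
  Finset.card_image_of_injective _ (Finset.image_injective hf)

lemma mem_mapFam {B : Finset β} : B ∈ mapFam f U ↔ ∃ A ∈ U, A.image f = B := by
  simp [mapFam]

lemma sized_mapFam (hf : Function.Injective f) {k : ℕ} (h : ∀ A ∈ U, A.card = k) :
    ∀ B ∈ mapFam f U, B.card = k := by
  rintro B hB
  obtain ⟨A, hA, rfl⟩ := mem_mapFam.1 hB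
  rw [Finset.card_image_of_injective _ hf]
  exact h A hA

lemma shadow_mapFam (hf : Function.Injective f) :
    Finset.shadow (mapFam f U) = mapFam f (Finset.shadow U) := by
  ext T
  simp only [mem_shadow_iff, mem_mapFam]
  constructor
  · rintro ⟨S, ⟨A, hA, rfl⟩, b, hb, rfl⟩
    obtain ⟨a, ha, rfl⟩ := Finset.mem_image.1 hb
    exact ⟨A.erase a, ⟨A, hA, a, ha, rfl⟩, Finset.image_erase hf A a⟩
  · rintro ⟨R, ⟨A, hA, a, ha, rfl⟩, rfl⟩
    exact ⟨A.image f, ⟨A, hA, rfl⟩, f a, Finset.mem_image_of_mem f ha,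
      (Finset.image_erase hf A a).symm⟩

lemma card_shadow_mapFam (hf : Function.Injective f) :
    (Finset.shadow (mapFam f U)).card = (Finset.shadow U).card := by
  rw [shadow_mapFam hf, card_mapFam hf]

end MapFam

lemma minShadow_le {n k : ℕ} (U : Finset (Finset ℕ)) (hcard : U.card = n)
    (hsized : ∀ A ∈ U, A.card = k) : minShadow n k ≤ (Finset.shadow U).card :=
  Nat.sInf_le ⟨U, hcard, hsized, rfl⟩

lemma exists_sized_family (n k : ℕ) (hk : 1 ≤ k) :
    ∃ U : Finset (Finset ℕ), U.card = n ∧ ∀ A ∈ U, A.card = k := by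
  classical
  refine ⟨(Finset.range n).image fun i => insert (k - 1 + i) (Finset.range (k - 1)), ?_, ?_⟩
  · rw [Finset.card_image_of_injective, Finset.card_range]
    intro i j hij
    have hi : k - 1 + i ∈ insert (k - 1 + j) (Finset.range (k - 1)) := by
      simp only at hij
      rw [← hij]; exact Finset.mem_insert_self _ _
    rcases Finset.mem_insert.1 hi with h | h
    · omega
    · rw [Finset.mem_range] at h; omega
  · rintro A hA
    obtain ⟨i, -, rfl⟩ := Finset.mem_image.1 hA
    rw [Finset.card_insert_of_notMem (by simp), Finset.card_range]
    omega

lemma exists_minShadow_family (n k : ℕ) (hk : 1 ≤ k) :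
    ∃ U : Finset (Finset ℕ), U.card = n ∧ (∀ A ∈ U, A.card = k) ∧
      (Finset.shadow U).card = minShadow n k := by
  have hne : {m | ∃ U : Finset (Finset ℕ),
      U.card = n ∧ (∀ A ∈ U, A.card = k) ∧ (Finset.shadow U).card = m}.Nonempty := by
    obtain ⟨U, h1, h2⟩ := exists_sized_family n k hk
    exact ⟨_, U, h1, h2, rfl⟩
  obtain ⟨U, h1, h2, h3⟩ := Nat.sInf_mem hne
  exact ⟨U, h1, h2, h3⟩

lemma minShadow_zero (k : ℕ) : minShadow 0 k = 0 :=
  Nat.le_zero.1 (by simpa using minShadow_le (∅ : Finset (Finset ℕ)) rfl (by simp))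

/-- transfer: a family in `Fin N` bounds `minShadow`. -/
lemma minShadow_le_fin {N n k : ℕ} (U : Finset (Finset (Fin N))) (hcard : U.card = n)
    (hsized : ∀ A ∈ U, A.card = k) : minShadow n k ≤ (Finset.shadow U).card := by
  have hval : Function.Injective (Fin.val : Fin N → ℕ) := Fin.val_injective
  calc minShadow n k ≤ (Finset.shadow (mapFam Fin.val U)).card :=
        minShadow_le _ (by rw [card_mapFam hval, hcard]) (sized_mapFam hval hsized)
    _ = (Finset.shadow U).card := card_shadow_mapFam hval

/-- transfer: a `ℕ`-family with bounded elements comes from a `Fin N` family. -/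
lemma exists_fin_family {N : ℕ} (U : Finset (Finset ℕ)) (hN : ∀ A ∈ U, ∀ a ∈ A, a < N) :
    ∃ V : Finset (Finset (Fin N)), mapFam Fin.val V = U := by
  classical
  refine ⟨U.attach.image fun A => Finset.attachFin A.1 (hN A.1 A.2), ?_⟩
  unfold mapFam
  rw [Finset.image_image]
  have : ∀ A ∈ U.attach, (Finset.attachFin A.1 (hN A.1 A.2)).image Fin.val = A.1 := by
    rintro A -
    ext a
    simp only [Finset.mem_image, Finset.mem_attachFin]
    constructor
    · rintro ⟨b, hb, rfl⟩; exact hb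
    · rintro ha; exact ⟨⟨a, hN A.1 A.2 a ha⟩, ha, rfl⟩
  ext A
  simp only [Finset.mem_image, Finset.mem_attach, true_and, Subtype.exists, Function.comp]
  constructor
  · rintro ⟨a, ha, rfl⟩
    rw [this ⟨a, ha⟩ (Finset.mem_attach _ _)]
    exact ha
  · intro hA
    exact ⟨A, hA, this ⟨A, hA⟩ (Finset.mem_attach _ _)⟩

lemma le_choose : ∀ (k : ℕ), 1 ≤ k → ∀ n, n ≤ (n + k - 1).choose k
  | 0, h, _ => absurd h (by omega)
  | 1, _, n => by simp
  | (k+2), _, n => by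
    have ih := le_choose (k+1) (by omega) n
    have h2 : n + (k + 2) - 1 = (n + (k+1) - 1) + 1 := by omega
    rw [h2, Nat.choose_succ_succ']
    omega

lemma exists_isInitSeg (N k : ℕ) : ∀ n, n ≤ N.choose k →
    ∃ 𝒞 : Finset (Finset (Fin N)), IsInitSeg 𝒞 k ∧ 𝒞.card = n := by
  intro n
  induction n with
  | zero => exact fun _ => ⟨∅, isInitSeg_empty, card_empty⟩
  | succ n ih =>
    intro hn
    obtain ⟨𝒞, h𝒞, hcard⟩ := ih (by omega)
    classical
    set P : Finset (Finset (Fin N)) := Finset.powersetCard k Finset.univ with hP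
    have hPcard : P.card = N.choose k := by
      rw [hP, Finset.card_powersetCard, Finset.card_univ, Fintype.card_fin]
    have h𝒞P : 𝒞 ⊆ P := by
      intro A hA
      rw [hP, Finset.mem_powersetCard]
      exact ⟨Finset.subset_univ _, h𝒞.1 hA⟩
    have hne : (P \ 𝒞).Nonempty := by
      rw [Finset.sdiff_nonempty]
      intro hsub
      have := Finset.card_le_card hsub
      omega
    obtain ⟨A, hA, hmin⟩ := Finset.exists_min_image (P \ 𝒞) (fun A => toColex A) hne
    rw [Finset.mem_sdiff] at hA
    refine ⟨insert A 𝒞, ⟨?_, ?_⟩, ?_⟩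
    · intro B hB
      rcases Finset.mem_insert.1 hB with rfl | hB
      · exact (Finset.mem_powersetCard.1 hA.1).2
      · exact h𝒞.1 hB
    · rintro s t hs ⟨hts, htcard⟩
      rcases Finset.mem_insert.1 hs with rfl | hs
      · by_cases ht : t ∈ 𝒞
        · exact Finset.mem_insert_of_mem ht
        · have htP : t ∈ P := by
            rw [hP, Finset.mem_powersetCard]; exact ⟨Finset.subset_univ _, htcard⟩
          have := hmin t (Finset.mem_sdiff.2 ⟨htP, ht⟩)
          exact absurd this (not_le_of_gt hts)
      · exact Finset.mem_insert_of_mem (h𝒞.2 hs ⟨hts, htcard⟩)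
    · rw [Finset.card_insert_of_notMem hA.2, hcard]

lemma initSeg_avoid {N k : ℕ} {𝒞 : Finset (Finset (Fin (N+1)))} (h : IsInitSeg 𝒞 k)
    (hcard : 𝒞.card ≤ N.choose k) : ∀ A ∈ 𝒞, Fin.last N ∉ A := by
  classical
  by_contra hcon
  push_neg at hcon
  obtain ⟨T, hT, hvT⟩ := hcon
  set v := Fin.last N
  set Q : Finset (Finset (Fin (N+1))) := Finset.powersetCard k (Finset.univ.erase v) with hQ
  have hQcard : Q.card = N.choose k := by
    rw [hQ, Finset.card_powersetCard, Finset.card_erase_of_mem (Finset.mem_univ _),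
      Finset.card_univ, Fintype.card_fin]
    simp
  have hQ𝒞 : Q ⊆ 𝒞 := by
    intro S hS
    rw [hQ, Finset.mem_powersetCard] at hS
    have hvS : v ∉ S := fun hv => (Finset.mem_erase.1 (hS.1 hv)).1 rfl
    have hST : S ≠ T := fun hST => hvS (hST ▸ hvT)
    have hlt : toColex S < toColex T := by
      rw [toColex_lt_toColex]
      exact ⟨hST, fun a _ _ => ⟨v, hvT, hvS, Fin.le_last a⟩⟩
    exact h.2 hT ⟨hlt, hS.2⟩
  have hTQ : T ∉ Q := by
    intro hTQ
    rw [hQ, Finset.mem_powersetCard] at hTQ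
    exact (Finset.mem_erase.1 (hTQ.1 hvT)).1 rfl
  have : (insert T Q).card ≤ 𝒞.card :=
    Finset.card_le_card (Finset.insert_subset hT hQ𝒞)
  rw [Finset.card_insert_of_notMem hTQ, hQcard] at this
  omega

lemma exists_preimage_castLE {M K : ℕ} (h : M ≤ K) (t : Finset (Fin K))
    (ht : ∀ b ∈ t, (b : ℕ) < M) : ∃ t₀ : Finset (Fin M), t₀.image (Fin.castLE h) = t := by
  classical
  refine ⟨(t.image Fin.val).attachFin (fun m hm => ?_), ?_⟩
  · obtain ⟨b, hb, rfl⟩ := Finset.mem_image.1 hm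
    exact ht b hb
  · ext a
    simp only [Finset.mem_image, Finset.mem_attachFin]
    constructor
    · rintro ⟨b, hb, rfl⟩
      obtain ⟨c, hc, hcb⟩ := hb
      have : c = Fin.castLE h b := Fin.ext (by simpa using hcb)
      rwa [← this]
    · intro ha
      exact ⟨⟨(a : ℕ), ht a ha⟩, ⟨a, ha, rfl⟩, Fin.ext rfl⟩

lemma isInitSeg_mapFam_castLE {M K k : ℕ} (h : M ≤ K) {𝒞 : Finset (Finset (Fin M))}
    (hC : IsInitSeg 𝒞 k) : IsInitSeg (mapFam (Fin.castLE h) 𝒞) k := by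
  classical
  constructor
  · intro B hB
    exact sized_mapFam (Fin.castLE_injective h) (fun A hA => hC.1 hA) B hB
  · rintro s t hs ⟨hts, htcard⟩
    obtain ⟨s₀, hs₀, rfl⟩ := mem_mapFam.1 hs
    have htlt : ∀ b ∈ t, (b : ℕ) < M := by
      intro b hb
      by_cases hbs : b ∈ s₀.image (Fin.castLE h)
      · obtain ⟨a, _, rfl⟩ := Finset.mem_image.1 hbs
        exact a.2
      · rw [toColex_lt_toColex] at hts
        obtain ⟨c, hcs, -, hbc⟩ := hts.2 hb hbs
        obtain ⟨a, -, rfl⟩ := Finset.mem_image.1 hcs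
        exact lt_of_le_of_lt hbc a.2
    obtain ⟨t₀, rfl⟩ := exists_preimage_castLE h t htlt
    have hmono : StrictMono (Fin.castLE h) := Fin.strictMono_castLE h
    have hlt₀ : toColex t₀ < toColex s₀ := (toColex_image_lt_toColex_image hmono).1 hts
    have hcard₀ : t₀.card = k := by
      rwa [Finset.card_image_of_injective _ (Fin.castLE_injective h)] at htcard
    exact mem_mapFam.2 ⟨t₀, hC.2 hs₀ ⟨hlt₀, hcard₀⟩, rfl⟩

lemma card_shadow_initSeg_eq {M n k : ℕ} (hk : 1 ≤ k) (𝒞 : Finset (Finset (Fin M)))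
    (hC : IsInitSeg 𝒞 k) (hcard : 𝒞.card = n) :
    (Finset.shadow 𝒞).card = minShadow n k := by
  classical
  refine le_antisymm ?_ (minShadow_le_fin 𝒞 hcard (fun A hA => hC.1 hA))
  obtain ⟨U, hU1, hU2, hU3⟩ := exists_minShadow_family n k hk
  set B := (U.sup fun A => A.sup id) + 1 with hB
  have hbound : ∀ A ∈ U, ∀ a ∈ A, a < B := by
    intro A hA a ha
    have h1 : a ≤ A.sup id := Finset.le_sup (f := id) ha
    have h2 : A.sup id ≤ U.sup fun A => A.sup id := Finset.le_sup (f := fun A => A.sup id) hA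
    omega
  obtain ⟨V, hV⟩ := exists_fin_family U hbound
  have hvinj : Function.Injective (Fin.val : Fin B → ℕ) := Fin.val_injective
  have hVcard : V.card = n := by rw [← hU1, ← hV, card_mapFam hvinj]
  have hVsized : ∀ A ∈ V, A.card = k := by
    intro A hA
    have : A.image Fin.val ∈ U := hV ▸ mem_mapFam.2 ⟨A, hA, rfl⟩
    rw [← hU2 _ this, Finset.card_image_of_injective _ hvinj]
  have hVshadow : (Finset.shadow V).card = minShadow n k := by
    rw [← hU3, ← hV, card_shadow_mapFam hvinj]
  set K := max M B with hK
  have hMK : M ≤ K := le_max_left _ _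
  have hBK : B ≤ K := le_max_right _ _
  set 𝒞' := mapFam (Fin.castLE hMK) 𝒞 with h𝒞'
  set V' := mapFam (Fin.castLE hBK) V with hV'
  have h1 : IsInitSeg 𝒞' k := isInitSeg_mapFam_castLE hMK hC
  have hsz : (V' : Set (Finset (Fin K))).Sized k := by
    intro A hA
    exact sized_mapFam (Fin.castLE_injective hBK) hVsized A hA
  have hcc : 𝒞'.card ≤ V'.card := by
    rw [h𝒞', hV', card_mapFam (Fin.castLE_injective hMK),
      card_mapFam (Fin.castLE_injective hBK), hcard, hVcard]
  have hKK := Finset.kruskal_katona hsz hcc h1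
  have e1 : (Finset.shadow 𝒞').card = (Finset.shadow 𝒞).card :=
    card_shadow_mapFam (Fin.castLE_injective hMK)
  have e2 : (Finset.shadow V').card = (Finset.shadow V).card :=
    card_shadow_mapFam (Fin.castLE_injective hBK)
  calc (Finset.shadow 𝒞).card = (Finset.shadow 𝒞').card := e1.symm
    _ ≤ (Finset.shadow V').card := hKK
    _ = (Finset.shadow V).card := e2
    _ = minShadow n k := hVshadow

lemma minShadow_le_split {n m k : ℕ} (hm : m ≤ n) (hk : 2 ≤ k) :
    minShadow n k ≤ max m (minShadow (n - m) k) + minShadow m (k - 1) := by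
  classical
  set N := n + k with hN
  have hc1 : n - m ≤ N.choose k := by
    calc n - m ≤ ((n - m) + k - 1).choose k := le_choose k (by omega) (n - m)
      _ ≤ N.choose k := Nat.choose_le_choose k (by omega)
  have hc2 : m ≤ N.choose (k - 1) := by
    calc m ≤ (m + (k-1) - 1).choose (k-1) := le_choose (k-1) (by omega) m
      _ ≤ N.choose (k-1) := Nat.choose_le_choose (k-1) (by omega)
  obtain ⟨𝒞₁, h𝒞₁, hcard₁⟩ := exists_isInitSeg (N+1) k (n - m)
    (le_trans hc1 (Nat.choose_le_choose k (by omega)))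
  obtain ⟨𝒞₂, h𝒞₂, hcard₂⟩ := exists_isInitSeg (N+1) (k-1) m
    (le_trans hc2 (Nat.choose_le_choose (k-1) (by omega)))
  set v := Fin.last N with hv
  have havoid₁ : ∀ A ∈ 𝒞₁, v ∉ A := initSeg_avoid h𝒞₁ (hcard₁ ▸ hc1)
  have havoid₂ : ∀ A ∈ 𝒞₂, v ∉ A := initSeg_avoid h𝒞₂ (hcard₂ ▸ hc2)
  set F : Finset (Finset (Fin (N+1))) := 𝒞₁ ∪ 𝒞₂.image (fun B => insert v B) with hF
  have hdisj : Disjoint 𝒞₁ (𝒞₂.image (fun B => insert v B)) := by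
    rw [Finset.disjoint_left]
    rintro A hA hA'
    obtain ⟨B, -, rfl⟩ := Finset.mem_image.1 hA'
    exact havoid₁ _ hA (Finset.mem_insert_self _ _)
  have hinj : Set.InjOn (fun B => insert v B) (𝒞₂ : Set (Finset (Fin (N+1)))) := by
    intro B hB B' hB' hBB'
    simp only [Finset.mem_coe] at hB hB'
    have h1 : Finset.erase (insert v B) v = Finset.erase (insert v B') v := by
      simp only at hBB'
      rw [hBB']
    rwa [Finset.erase_insert (havoid₂ _ hB), Finset.erase_insert (havoid₂ _ hB')] at h1
  have hFcard : F.card = n := by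
    rw [hF, Finset.card_union_of_disjoint hdisj, Finset.card_image_of_injOn hinj,
      hcard₁, hcard₂]
    omega
  have hFsized : ∀ A ∈ F, A.card = k := by
    intro A hA
    rcases Finset.mem_union.1 hA with hA | hA
    · exact h𝒞₁.1 hA
    · obtain ⟨B, hB, rfl⟩ := Finset.mem_image.1 hA
      rw [Finset.card_insert_of_notMem (havoid₂ _ hB), h𝒞₂.1 hB]
      omega
  have hsub : Finset.shadow F ⊆ (Finset.shadow 𝒞₁ ∪ 𝒞₂) ∪
      (Finset.shadow 𝒞₂).image (fun B => insert v B) := by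
    intro T hT
    rw [mem_shadow_iff] at hT
    obtain ⟨S, hS, a, ha, rfl⟩ := hT
    rcases Finset.mem_union.1 hS with hS | hS
    · exact Finset.mem_union_left _ (Finset.mem_union_left _ (erase_mem_shadow hS ha))
    · obtain ⟨B, hB, rfl⟩ := Finset.mem_image.1 hS
      by_cases hav : a = v
      · subst hav
        rw [Finset.erase_insert (havoid₂ _ hB)]
        exact Finset.mem_union_left _ (Finset.mem_union_right _ hB)
      · have haB : a ∈ B := Finset.mem_of_mem_insert_of_ne ha hav
        rw [Finset.erase_insert_of_ne (Ne.symm hav)]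
        exact Finset.mem_union_right _ (Finset.mem_image_of_mem _ (erase_mem_shadow hB haB))
  have hsh₁ : (Finset.shadow 𝒞₁).card = minShadow (n - m) k :=
    card_shadow_initSeg_eq (by omega) _ h𝒞₁ hcard₁
  have hsh₂ : (Finset.shadow 𝒞₂).card = minShadow m (k - 1) :=
    card_shadow_initSeg_eq (by omega) _ h𝒞₂ hcard₂
  have hunion : (Finset.shadow 𝒞₁ ∪ 𝒞₂).card ≤ max m (minShadow (n - m) k) := by
    have hinit : IsInitSeg (Finset.shadow 𝒞₁) (k - 1) := h𝒞₁.shadow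
    rcases hinit.total h𝒞₂ with hsub' | hsub'
    · rw [Finset.union_eq_right.2 hsub', hcard₂]
      exact le_max_left _ _
    · rw [Finset.union_eq_left.2 hsub', hsh₁]
      exact le_max_right _ _
  have himgcard : ((Finset.shadow 𝒞₂).image (fun B => insert v B)).card
      ≤ minShadow m (k-1) := by
    rw [← hsh₂]
    exact Finset.card_image_le
  calc minShadow n k ≤ (Finset.shadow F).card := minShadow_le_fin F hFcard hFsized
    _ ≤ ((Finset.shadow 𝒞₁ ∪ 𝒞₂) ∪ (Finset.shadow 𝒞₂).image (fun B => insert v B)).card :=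
        Finset.card_le_card hsub
    _ ≤ (Finset.shadow 𝒞₁ ∪ 𝒞₂).card
        + ((Finset.shadow 𝒞₂).image (fun B => insert v B)).card := Finset.card_union_le _ _
    _ ≤ max m (minShadow (n - m) k) + minShadow m (k - 1) := Nat.add_le_add hunion himgcard

lemma choose_le_minShadow {a k : ℕ} (hk : 1 ≤ k) (hka : k ≤ a) :
    a.choose (k - 1) ≤ minShadow (a.choose k) k := by
  classical
  obtain ⟨U, hU1, hU2, hU3⟩ := exists_minShadow_family (a.choose k) k hk
  set B := max ((U.sup fun A => A.sup id) + 1) a with hB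
  have hbound : ∀ A ∈ U, ∀ a ∈ A, a < B := by
    intro A hA x hx
    have h1 : x ≤ A.sup id := Finset.le_sup (f := id) hx
    have h2 : A.sup id ≤ U.sup fun A => A.sup id := Finset.le_sup (f := fun A => A.sup id) hA
    have : (U.sup fun A => A.sup id) + 1 ≤ B := le_max_left _ _
    omega
  obtain ⟨V, hV⟩ := exists_fin_family U hbound
  have hvinj : Function.Injective (Fin.val : Fin B → ℕ) := Fin.val_injective
  have hVcard : V.card = a.choose k := by rw [← hU1, ← hV, card_mapFam hvinj]
  have hVsized : (V : Set (Finset (Fin B))).Sized k := by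
    intro A hA
    have : A.image Fin.val ∈ U := hV ▸ mem_mapFam.2 ⟨A, hA, rfl⟩
    rw [← hU2 _ this, Finset.card_image_of_injective _ hvinj]
  have hKK := Finset.kruskal_katona_lovasz_form (i := 1) (r := k) (k := a) (n := B)
    hk hka (le_max_right _ _) hVsized (le_of_eq hVcard.symm)
  rw [Function.iterate_one] at hKK
  have : (Finset.shadow V).card = minShadow (a.choose k) k := by
    rw [← hU3, ← hV, card_shadow_mapFam hvinj]
  calc a.choose (k-1) = a.choose (k - 1) := rfl
    _ ≤ (Finset.shadow V).card := hKK
    _ = minShadow (a.choose k) k := this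

section VertexSplit

variable {F : Finset (Finset ℕ)} {x : ℕ}

/-- facets containing x, with x removed -/
def linkFam (F : Finset (Finset ℕ)) (x : ℕ) : Finset (Finset ℕ) :=
  (F.filter fun σ => x ∈ σ).image fun σ => σ.erase x

/-- facets not containing x -/
def delFam (F : Finset (Finset ℕ)) (x : ℕ) : Finset (Finset ℕ) :=
  F.filter fun σ => x ∉ σ

lemma mem_linkFam {G : Finset ℕ} : G ∈ linkFam F x ↔ x ∉ G ∧ insert x G ∈ F := by
  unfold linkFam
  simp only [Finset.mem_image, Finset.mem_filter]
  constructor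
  · rintro ⟨σ, ⟨hσ, hxσ⟩, rfl⟩
    exact ⟨Finset.notMem_erase _ _, by rwa [Finset.insert_erase hxσ]⟩
  · rintro ⟨hxG, hG⟩
    exact ⟨insert x G, ⟨hG, Finset.mem_insert_self _ _⟩, Finset.erase_insert hxG⟩

lemma card_linkFam : (linkFam F x).card = (F.filter fun σ => x ∈ σ).card := by
  unfold linkFam
  apply Finset.card_image_of_injOn
  intro σ hσ τ hτ hst
  rw [Finset.mem_coe, Finset.mem_filter] at hσ hτ
  calc σ = insert x (σ.erase x) := (Finset.insert_erase hσ.2).symm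
    _ = insert x (τ.erase x) := by simp only at hst; rw [hst]
    _ = τ := Finset.insert_erase hτ.2

lemma linkFam_sized {k : ℕ} (hF : ∀ A ∈ F, A.card = k) :
    ∀ G ∈ linkFam F x, G.card = k - 1 := by
  intro G hG
  rw [mem_linkFam] at hG
  have := hF _ hG.2
  rw [Finset.card_insert_of_notMem hG.1] at this
  omega

lemma delFam_sized {k : ℕ} (hF : ∀ A ∈ F, A.card = k) : ∀ A ∈ delFam F x, A.card = k :=
  fun A hA => hF A (Finset.mem_filter.1 hA).1

lemma card_delFam_add : (delFam F x).card + (F.filter fun σ => x ∈ σ).card = F.card := by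
  unfold delFam
  have := Finset.card_filter_add_card_filter_not (s := F) (p := fun σ => x ∉ σ)
  rw [← this]
  congr 2
  ext σ
  simp

lemma notMem_of_mem_shadow_delFam {S : Finset ℕ} (hS : S ∈ Finset.shadow (delFam F x)) :
    x ∉ S := by
  rw [mem_shadow_iff] at hS
  obtain ⟨σ, hσ, a, ha, rfl⟩ := hS
  intro hx
  exact (Finset.mem_filter.1 hσ).2 (Finset.mem_of_mem_erase hx)

lemma notMem_of_mem_linkFam {G : Finset ℕ} (hG : G ∈ linkFam F x) : x ∉ G :=
  (mem_linkFam.1 hG).1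

lemma notMem_of_mem_shadow_linkFam {S : Finset ℕ} (hS : S ∈ Finset.shadow (linkFam F x)) :
    x ∉ S := by
  rw [mem_shadow_iff] at hS
  obtain ⟨σ, hσ, a, ha, rfl⟩ := hS
  intro hx
  exact notMem_of_mem_linkFam hσ (Finset.mem_of_mem_erase hx)

/-- The key decomposition of the shadow of a family along a vertex. -/
lemma shadow_eq_split : Finset.shadow F =
    (Finset.shadow (delFam F x) ∪ linkFam F x) ∪
      (Finset.shadow (linkFam F x)).image (fun S => insert x S) := by
  classical
  ext T
  simp only [Finset.mem_union, Finset.mem_image]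
  constructor
  · intro hT
    rw [mem_shadow_iff] at hT
    obtain ⟨σ, hσ, a, ha, rfl⟩ := hT
    by_cases hxσ : x ∈ σ
    · by_cases hax : a = x
      · subst hax
        exact Or.inl (Or.inr (mem_linkFam.2 ⟨Finset.notMem_erase _ _, by
          rwa [Finset.insert_erase hxσ]⟩))
      · refine Or.inr ⟨(σ.erase x).erase a, ?_, ?_⟩
        · apply erase_mem_shadow (mem_linkFam.2 ⟨Finset.notMem_erase _ _, by
            rwa [Finset.insert_erase hxσ]⟩)
          exact Finset.mem_erase.2 ⟨hax, ha⟩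
        · rw [Finset.erase_right_comm, Finset.insert_erase
            (Finset.mem_erase.2 ⟨fun h => hax h.symm, hxσ⟩)]
    · exact Or.inl (Or.inl (erase_mem_shadow (Finset.mem_filter.2 ⟨hσ, hxσ⟩) ha))
  · rintro (hT | hT)
    · rcases hT with hT | hT
      · exact Finset.shadow_mono (Finset.filter_subset _ _) hT
      · rw [mem_linkFam] at hT
        have : Finset.erase (insert x T) x = T := Finset.erase_insert hT.1
        rw [← this]
        exact erase_mem_shadow hT.2 (Finset.mem_insert_self _ _)
    · obtain ⟨S, hS, rfl⟩ := hT
      rw [mem_shadow_iff] at hS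
      obtain ⟨G, hG, a, ha, rfl⟩ := hS
      rw [mem_linkFam] at hG
      have hax : a ≠ x := fun h => hG.1 (h ▸ ha)
      have : insert x (G.erase a) = (insert x G).erase a := by
        rw [Finset.erase_insert_of_ne (Ne.symm hax)]
      rw [this]
      exact erase_mem_shadow hG.2 (Finset.mem_insert.2 (Or.inr ha))

lemma card_shadow_split : (Finset.shadow F).card =
    (Finset.shadow (delFam F x) ∪ linkFam F x).card + (Finset.shadow (linkFam F x)).card := by
  classical
  rw [shadow_eq_split (F := F) (x := x)]
  rw [Finset.card_union_of_disjoint, Finset.card_image_of_injOn]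
  · intro S hS S' hS' hSS'
    rw [Finset.mem_coe] at hS hS'
    simp only at hSS'
    have h1 := notMem_of_mem_shadow_linkFam hS
    have h2 := notMem_of_mem_shadow_linkFam hS'
    calc S = (insert x S).erase x := (Finset.erase_insert h1).symm
      _ = (insert x S').erase x := by rw [hSS']
      _ = S' := Finset.erase_insert h2
  · rw [Finset.disjoint_left]
    rintro S hS hS'
    obtain ⟨S', hS', rfl⟩ := Finset.mem_image.1 hS'
    rcases Finset.mem_union.1 hS with h | h
    · exact notMem_of_mem_shadow_delFam h (Finset.mem_insert_self _ _)
    · exact notMem_of_mem_linkFam h (Finset.mem_insert_self _ _)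

end VertexSplit

section GoodVertex

variable {F : Finset (Finset ℕ)} {x : ℕ} {n k : ℕ}

/-- For a shadow-minimal family and a "good" vertex, everything collapses. -/
lemma good_vertex_collapse (hk : 2 ≤ k) (hsized : ∀ A ∈ F, A.card = k) (hn : F.card = n)
    (hmin : (Finset.shadow F).card = minShadow n k)
    (hm : (F.filter fun σ => x ∈ σ).card ≤ minShadow (n - (F.filter fun σ => x ∈ σ).card) k) :
    linkFam F x ⊆ Finset.shadow (delFam F x) ∧
    (Finset.shadow (delFam F x)).card
      = minShadow (n - (F.filter fun σ => x ∈ σ).card) k ∧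
    (Finset.shadow (linkFam F x)).card = minShadow (F.filter fun σ => x ∈ σ).card (k - 1) := by
  classical
  set m := (F.filter fun σ => x ∈ σ).card with hmdef
  have hmn : m ≤ n := by
    rw [← hn]
    exact Finset.card_le_card (Finset.filter_subset _ _)
  have hdelcard : (delFam F x).card = n - m := by
    have := card_delFam_add (F := F) (x := x)
    omega
  have hlinkcard : (linkFam F x).card = m := card_linkFam
  have hsplit := card_shadow_split (F := F) (x := x)
  have hb1 : minShadow (n - m) k ≤ (Finset.shadow (delFam F x)).card :=
    minShadow_le _ hdelcard (delFam_sized hsized)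
  have hb2 : minShadow m (k-1) ≤ (Finset.shadow (linkFam F x)).card :=
    minShadow_le _ hlinkcard (linkFam_sized hsized)
  have hsub1 : Finset.shadow (delFam F x) ⊆ Finset.shadow (delFam F x) ∪ linkFam F x :=
    Finset.subset_union_left
  have hsub2 : linkFam F x ⊆ Finset.shadow (delFam F x) ∪ linkFam F x :=
    Finset.subset_union_right
  have hub : minShadow n k ≤ max m (minShadow (n - m) k) + minShadow m (k - 1) :=
    minShadow_le_split hmn hk
  rw [max_eq_right hm] at hub
  have hbu1 := Finset.card_le_card hsub1
  have e1 : (Finset.shadow (delFam F x) ∪ linkFam F x).card = minShadow (n - m) k := by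
    rw [hmin] at hsplit
    omega
  have e2 : (Finset.shadow (linkFam F x)).card = minShadow m (k - 1) := by
    rw [hmin] at hsplit
    omega
  have e3 : Finset.shadow (delFam F x) ∪ linkFam F x = Finset.shadow (delFam F x) :=
    (Finset.eq_of_subset_of_card_le hsub1 (by omega)).symm
  refine ⟨?_, by rw [← e3, e1], e2⟩
  rw [← e3]
  exact hsub2

/-- For a shadow-minimal family and a "bad" vertex, the deletion shadow is inside the link. -/
lemma bad_vertex_collapse (hk : 2 ≤ k) (hsized : ∀ A ∈ F, A.card = k) (hn : F.card = n)
    (hmin : (Finset.shadow F).card = minShadow n k)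
    (hm : minShadow (n - (F.filter fun σ => x ∈ σ).card) k < (F.filter fun σ => x ∈ σ).card) :
    Finset.shadow (delFam F x) ⊆ linkFam F x := by
  classical
  set m := (F.filter fun σ => x ∈ σ).card with hmdef
  have hmn : m ≤ n := by
    rw [← hn]
    exact Finset.card_le_card (Finset.filter_subset _ _)
  have hlinkcard : (linkFam F x).card = m := card_linkFam
  have hdelcard : (delFam F x).card = n - m := by
    have := card_delFam_add (F := F) (x := x)
    omega
  have hsplit := card_shadow_split (F := F) (x := x)
  have hb2 : minShadow m (k-1) ≤ (Finset.shadow (linkFam F x)).card :=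
    minShadow_le _ hlinkcard (linkFam_sized hsized)
  have hsub2 : linkFam F x ⊆ Finset.shadow (delFam F x) ∪ linkFam F x :=
    Finset.subset_union_right
  have hbu2 := Finset.card_le_card hsub2
  have hub : minShadow n k ≤ max m (minShadow (n - m) k) + minShadow m (k - 1) :=
    minShadow_le_split hmn hk
  rw [max_eq_left (le_of_lt hm)] at hub
  have e1 : linkFam F x = Finset.shadow (delFam F x) ∪ linkFam F x := by
    apply Finset.eq_of_subset_of_card_le hsub2
    rw [hmin] at hsplit
    omega
  intro S hS
  rw [e1]
  exact Finset.subset_union_left hS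

/-- In a shadow-minimal family with at least two members, some vertex is good. -/
lemma exists_good_vertex (hk : 2 ≤ k) (hsized : ∀ A ∈ F, A.card = k) (hn : F.card = n)
    (hn2 : 2 ≤ n) (hmin : (Finset.shadow F).card = minShadow n k) :
    ∃ x ∈ F.biUnion id, (F.filter fun σ => x ∈ σ).card
      ≤ minShadow (n - (F.filter fun σ => x ∈ σ).card) k := by
  classical
  by_contra hcon
  push_neg at hcon
  -- every vertex is bad, so the family is closed under swaps
  have hswap : ∀ σ ∈ F, ∀ x ∈ F.biUnion id, x ∉ σ → ∀ a ∈ σ, insert x (σ.erase a) ∈ F := by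
    intro σ hσ x hx hxσ a ha
    have hbad := bad_vertex_collapse hk hsized hn hmin (hcon x hx)
    have h1 : σ.erase a ∈ Finset.shadow (delFam F x) :=
      erase_mem_shadow (Finset.mem_filter.2 ⟨hσ, hxσ⟩) ha
    have h2 := hbad h1
    rw [mem_linkFam] at h2
    exact h2.2
  set V := F.biUnion id with hV
  -- the family contains every k-subset of V
  have hcomplete : ∀ S : Finset ℕ, S ⊆ V → S.card = k → S ∈ F := by
    intro S hSV hScard
    by_contra hSF
    have hFne : F.Nonempty := Finset.card_pos.1 (by omega)
    obtain ⟨σ, hσ, hmax⟩ := F.exists_max_image (fun τ => (S ∩ τ).card) hFne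
    -- σ ≠ S
    have hSσ : S ≠ σ := fun h => hSF (h ▸ hσ)
    have hiltk : (S ∩ σ).card < k := by
      rcases lt_or_eq_of_le (Finset.card_le_card (Finset.inter_subset_left : S ∩ σ ⊆ S)) with h | h
      · omega
      · exfalso
        have : S ∩ σ = S := Finset.eq_of_subset_of_card_le Finset.inter_subset_left
          (by omega)
        have hSsub : S ⊆ σ := by
          rw [← this]
          exact Finset.inter_subset_right
        exact hSσ (Finset.eq_of_subset_of_card_le hSsub (by rw [hsized σ hσ, hScard]))
    -- get x ∈ S \ σ
    have hex : ∃ x ∈ S, x ∉ σ := by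
      by_contra hcc
      push_neg at hcc
      have : S ⊆ σ := hcc
      exact hSσ (Finset.eq_of_subset_of_card_le this (by rw [hsized σ hσ, hScard]))
    obtain ⟨x, hxS, hxσ⟩ := hex
    -- get a ∈ σ \ S
    have hea : ∃ a ∈ σ, a ∉ S := by
      by_contra hcc
      push_neg at hcc
      exact hSσ ((Finset.eq_of_subset_of_card_le hcc
        (by rw [hsized σ hσ, hScard])).symm)
    obtain ⟨a, haσ, haS⟩ := hea
    have hxV : x ∈ V := hSV hxS
    have hσ' : insert x (σ.erase a) ∈ F := hswap σ hσ x hxV hxσ a haσ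
    -- intersection got bigger
    have hbigger : (S ∩ σ).card < (S ∩ insert x (σ.erase a)).card := by
      have hsub : insert x (S ∩ σ) ⊆ S ∩ insert x (σ.erase a) := by
        intro b hb
        rcases Finset.mem_insert.1 hb with rfl | hb
        · exact Finset.mem_inter.2 ⟨hxS, Finset.mem_insert_self _ _⟩
        · rw [Finset.mem_inter] at hb
          refine Finset.mem_inter.2 ⟨hb.1, Finset.mem_insert_of_mem ?_⟩
          exact Finset.mem_erase.2 ⟨fun h => haS (h ▸ hb.1), hb.2⟩
      calc (S ∩ σ).card < (insert x (S ∩ σ)).card := by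
            rw [Finset.card_insert_of_notMem (fun h => hxσ (Finset.mem_inter.1 h).2)]
            omega
        _ ≤ (S ∩ insert x (σ.erase a)).card := Finset.card_le_card hsub
    exact absurd (hmax _ hσ') (by omega)
  -- hence F is the complete family on V
  have hFV : F = Finset.powersetCard k V := by
    ext σ
    rw [Finset.mem_powersetCard]
    constructor
    · intro hσ
      exact ⟨fun a ha => Finset.mem_biUnion.2 ⟨σ, hσ, ha⟩, hsized σ hσ⟩
    · rintro ⟨h1, h2⟩
      exact hcomplete σ h1 h2
  -- |V| ≥ k + 1
  have hVcard : k + 1 ≤ V.card := by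
    obtain ⟨σ, hσ, τ, hτ, hστ⟩ := Finset.one_lt_card.1 (by omega : 1 < F.card)
    have hsub : σ ∪ τ ⊆ V := by
      intro a ha
      rcases Finset.mem_union.1 ha with h | h
      · exact Finset.mem_biUnion.2 ⟨σ, hσ, h⟩
      · exact Finset.mem_biUnion.2 ⟨τ, hτ, h⟩
    have h1 : σ ⊂ σ ∪ τ := by
      refine Finset.ssubset_iff_subset_ne.2 ⟨Finset.subset_union_left, fun h => hστ ?_⟩
      have hts : τ ⊆ σ := by
        rw [h]
        exact Finset.subset_union_right
      exact (Finset.eq_of_subset_of_card_le hts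
        (by rw [hsized σ hσ, hsized τ hτ])).symm
    calc k + 1 = σ.card + 1 := by rw [hsized σ hσ]
      _ ≤ (σ ∪ τ).card := Finset.card_lt_card h1
      _ ≤ V.card := Finset.card_le_card hsub
  -- pick any vertex and contradict badness
  have hVne : V.Nonempty := Finset.card_pos.1 (by omega)
  obtain ⟨x, hxV⟩ := hVne
  set v := V.card - 1 with hv
  -- compute the degree and the deletion count
  have hdel : delFam F x = Finset.powersetCard k (V.erase x) := by
    ext σ
    unfold delFam
    rw [Finset.mem_filter, hFV, Finset.mem_powersetCard, Finset.mem_powersetCard]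
    constructor
    · rintro ⟨⟨h1, h2⟩, h3⟩
      exact ⟨fun a ha => Finset.mem_erase.2 ⟨fun h => h3 (h ▸ ha), h1 ha⟩, h2⟩
    · rintro ⟨h1, h2⟩
      refine ⟨⟨fun a ha => Finset.mem_of_mem_erase (h1 ha), h2⟩, fun hx => ?_⟩
      exact (Finset.mem_erase.1 (h1 hx)).1 rfl
  have hdelcard : (delFam F x).card = v.choose k := by
    rw [hdel, Finset.card_powersetCard, Finset.card_erase_of_mem hxV]
  have hncard : n = (v + 1).choose k := by
    rw [← hn, hFV, Finset.card_powersetCard]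
    congr 1
    omega
  set m := (F.filter fun σ => x ∈ σ).card with hm
  have hmcard : m = v.choose (k - 1) := by
    have h1 := card_delFam_add (F := F) (x := x)
    have h2 : (v+1).choose k = v.choose (k-1) + v.choose k := by
      have hk1 : k = (k - 1) + 1 := by omega
      rw [hk1, Nat.choose_succ_succ']
      congr 2
      all_goals omega
    rw [← hm] at h1
    omega
  have hlov : v.choose (k-1) ≤ minShadow (v.choose k) k :=
    choose_le_minShadow (by omega) (by omega)
  have hbad := hcon x hxV
  rw [← hm] at hbad
  have hnm : n - m = v.choose k := by
    have h1 := card_delFam_add (F := F) (x := x)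
    rw [← hm] at h1
    omega
  rw [hnm, hmcard] at hbad
  omega

end GoodVertex
section ComplexBasic

variable {Δ : Finset (Finset ℕ)} {d : ℕ} {σ τ : Finset ℕ}

lemma facets_subset : facets Δ ⊆ Δ := Finset.filter_subset _ _

lemma mem_facets_iff : σ ∈ facets Δ ↔ σ ∈ Δ ∧ ∀ τ ∈ Δ, σ ⊆ τ → σ = τ := by
  simp [facets]

lemma face_subset_facet (hσ : σ ∈ Δ) : ∃ τ ∈ facets Δ, σ ⊆ τ := by
  classical
  obtain ⟨τ, hτ, hmax⟩ := (Δ.filter fun τ => σ ⊆ τ).exists_max_image (fun t => t.card)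
    ⟨σ, by simp [hσ]⟩
  rw [Finset.mem_filter] at hτ
  refine ⟨τ, mem_facets_iff.2 ⟨hτ.1, fun ρ hρ hsub => ?_⟩, hτ.2⟩
  have := hmax ρ (by simp [hρ, hτ.2.trans hsub])
  exact Finset.eq_of_subset_of_card_le hsub this

lemma empty_mem_complex (hΔ : IsComplex Δ) : ∅ ∈ Δ := by
  obtain ⟨σ, hσ⟩ := hΔ.1
  exact hΔ.2 σ hσ ∅ (Finset.empty_subset _)

lemma facets_nonempty (hΔ : IsComplex Δ) : (facets Δ).Nonempty := by
  obtain ⟨σ, hσ⟩ := hΔ.1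
  obtain ⟨τ, hτ, -⟩ := face_subset_facet hσ
  exact ⟨τ, hτ⟩

lemma faces_eq_shadow_facets (hΔ : IsComplex Δ) (hp : IsPureDim Δ d) :
    Δ.filter (fun σ => σ.card = d) = Finset.shadow (facets Δ) := by
  ext τ
  rw [Finset.mem_filter, mem_shadow_iff_exists_mem_card_add_one]
  constructor
  · rintro ⟨hτ, hcard⟩
    obtain ⟨σ, hσ, hsub⟩ := face_subset_facet hτ
    exact ⟨σ, hσ, hsub, by rw [hp σ hσ, hcard]⟩
  · rintro ⟨σ, hσ, hsub, hcard⟩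
    have hσΔ := facets_subset hσ
    refine ⟨hΔ.2 σ hσΔ τ hsub, ?_⟩
    have := hp σ hσ
    omega

lemma face_card_le (hΔ : IsComplex Δ) (hp : IsPureDim Δ d) (hσ : σ ∈ Δ) : σ.card ≤ d + 1 := by
  obtain ⟨τ, hτ, hsub⟩ := face_subset_facet hσ
  calc σ.card ≤ τ.card := Finset.card_le_card hsub
    _ = d + 1 := hp τ hτ

/-- singleton vertices from membership in a face -/
lemma singleton_mem_of_mem_face (hΔ : IsComplex Δ) (hσ : σ ∈ Δ) {x : ℕ} (hx : x ∈ σ) :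
    {x} ∈ Δ :=
  hΔ.2 σ hσ {x} (Finset.singleton_subset_iff.2 hx)

end ComplexBasic

section LinkDel

variable {Δ : Finset (Finset ℕ)} {d x : ℕ} {σ τ : Finset ℕ}

lemma deletion_isComplex (hΔ : IsComplex Δ) : IsComplex (deletion Δ x) := by
  constructor
  · exact ⟨∅, Finset.mem_filter.2 ⟨empty_mem_complex hΔ, Finset.notMem_empty _⟩⟩
  · rintro σ hσ τ hτσ
    simp only [deletion, Finset.mem_filter] at hσ ⊢
    exact ⟨hΔ.2 σ hσ.1 τ hτσ, fun hx => hσ.2 (hτσ hx)⟩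

lemma link_isComplex (hΔ : IsComplex Δ) (hx : {x} ∈ Δ) : IsComplex (link Δ x) := by
  constructor
  · refine ⟨∅, Finset.mem_filter.2 ⟨empty_mem_complex hΔ, Finset.notMem_empty _, ?_⟩⟩
    simpa using hx
  · rintro σ hσ τ hτσ
    simp only [link, Finset.mem_filter] at hσ ⊢
    refine ⟨hΔ.2 σ hσ.1 τ hτσ, fun hxτ => hσ.2.1 (hτσ hxτ), ?_⟩
    exact hΔ.2 _ hσ.2.2 _ (Finset.insert_subset_insert _ hτσ)

/-- The facets of the link are the link family of the facets. -/
lemma facets_link (hΔ : IsComplex Δ) (hp : IsPureDim Δ d) :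
    facets (link Δ x) = linkFam (facets Δ) x := by
  ext τ
  rw [mem_facets_iff, mem_linkFam]
  constructor
  · rintro ⟨hτ, hmax⟩
    rw [link, Finset.mem_filter] at hτ
    obtain ⟨hτΔ, hxτ, hins⟩ := hτ
    obtain ⟨ρ, hρ, hsub⟩ := face_subset_facet hins
    have hxρ : x ∈ ρ := hsub (Finset.mem_insert_self _ _)
    have hρΔ := facets_subset hρ
    have herase : ρ.erase x ∈ link Δ x := by
      rw [link, Finset.mem_filter]
      refine ⟨hΔ.2 ρ hρΔ _ (Finset.erase_subset _ _), Finset.notMem_erase _ _, ?_⟩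
      rwa [Finset.insert_erase hxρ]
    have hτρ : τ ⊆ ρ.erase x := by
      intro a ha
      exact Finset.mem_erase.2 ⟨fun h => hxτ (h ▸ ha), hsub (Finset.mem_insert_of_mem ha)⟩
    have := hmax _ herase hτρ
    subst this
    refine ⟨Finset.notMem_erase _ _, ?_⟩
    rwa [Finset.insert_erase hxρ]
  · rintro ⟨hxτ, hins⟩
    have hinsΔ := facets_subset hins
    have hτlink : τ ∈ link Δ x := by
      rw [link, Finset.mem_filter]
      exact ⟨hΔ.2 _ hinsΔ τ (Finset.subset_insert _ _), hxτ, hinsΔ⟩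
    refine ⟨hτlink, fun ρ hρ hτρ => ?_⟩
    rw [link, Finset.mem_filter] at hρ
    have hsub : insert x τ ⊆ insert x ρ := Finset.insert_subset_insert _ hτρ
    have := (mem_facets_iff.1 hins).2 _ hρ.2.2 hsub
    calc τ = (insert x τ).erase x := by rw [Finset.erase_insert hxτ]
      _ = (insert x ρ).erase x := by rw [this]
      _ = ρ := Finset.erase_insert hρ.2.1

/-- With a good vertex, the facets of the deletion are the facets avoiding `x`. -/
lemma facets_deletion (hΔ : IsComplex Δ) (hp : IsPureDim Δ d)
    (hgood : linkFam (facets Δ) x ⊆ Finset.shadow (delFam (facets Δ) x)) :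
    facets (deletion Δ x) = delFam (facets Δ) x := by
  ext σ
  rw [mem_facets_iff]
  unfold delFam
  constructor
  · rintro ⟨hσ, hmax⟩
    rw [deletion, Finset.mem_filter] at hσ
    obtain ⟨hσΔ, hxσ⟩ := hσ
    obtain ⟨ρ, hρ, hsub⟩ := face_subset_facet hσΔ
    by_cases hxρ : x ∈ ρ
    · have hlk : ρ.erase x ∈ linkFam (facets Δ) x :=
        mem_linkFam.2 ⟨Finset.notMem_erase _ _, by rwa [Finset.insert_erase hxρ]⟩
      have := hgood hlk
      rw [mem_shadow_iff] at this
      obtain ⟨π, hπ, a, ha, hπa⟩ := this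
      have hπΔ : π ∈ deletion Δ x := by
        simp only [deletion, Finset.mem_filter]
        simp only [delFam, Finset.mem_filter] at hπ
        exact ⟨facets_subset hπ.1, hπ.2⟩
      have hσπ : σ ⊆ π := by
        intro b hb
        have hbρ : b ∈ ρ.erase x := Finset.mem_erase.2 ⟨fun h => hxσ (h ▸ hb), hsub hb⟩
        rw [← hπa] at hbρ
        exact Finset.mem_of_mem_erase hbρ
      have := hmax π hπΔ hσπ
      subst this
      simp only [delFam, Finset.mem_filter] at hπ
      exact Finset.mem_filter.2 ⟨hπ.1, hπ.2⟩
    · have hρdel : ρ ∈ deletion Δ x := by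
        simp only [deletion, Finset.mem_filter]
        exact ⟨facets_subset hρ, hxρ⟩
      have := hmax ρ hρdel hsub
      subst this
      exact Finset.mem_filter.2 ⟨hρ, hxρ⟩
  · rintro hσ
    simp only [Finset.mem_filter] at hσ
    obtain ⟨hσF, hxσ⟩ := hσ
    have hσΔ := facets_subset hσF
    refine ⟨Finset.mem_filter.2 ⟨hσΔ, hxσ⟩, fun ρ hρ hσρ => ?_⟩
    simp only [deletion, Finset.mem_filter] at hρ
    exact (mem_facets_iff.1 hσF).2 ρ hρ.1 hσρ

end LinkDel

section FamilySplit

variable {F : Finset (Finset ℕ)} {x : ℕ}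

lemma family_split : F = delFam F x ∪ (linkFam F x).image (fun G => insert x G) := by
  classical
  ext σ
  rw [Finset.mem_union, Finset.mem_image]
  constructor
  · intro hσ
    by_cases hx : x ∈ σ
    · refine Or.inr ⟨σ.erase x, mem_linkFam.2 ⟨Finset.notMem_erase _ _, ?_⟩,
        Finset.insert_erase hx⟩
      rwa [Finset.insert_erase hx]
    · exact Or.inl (Finset.mem_filter.2 ⟨hσ, hx⟩)
  · rintro (hσ | ⟨G, hG, rfl⟩)
    · exact (Finset.mem_filter.1 hσ).1
    · exact (mem_linkFam.1 hG).2

end FamilySplit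

section Builders

variable {Δ : Finset (Finset ℕ)} {d x : ℕ}

lemma shellable_of_one_facet (h : (facets Δ).card = 1) : IsShellable Δ := by
  obtain ⟨σ, hσ⟩ := Finset.card_eq_one.1 h
  refine ⟨1, fun _ => σ, ?_, ?_, ?_⟩
  · rw [hσ, Finset.range_one, Finset.image_singleton]
  · intro i hi j hj _
    omega
  · intro j hj hj1
    omega

lemma shellable_of_dim_zero (hΔ : IsComplex Δ) (hp : IsPureDim Δ 0) : IsShellable Δ := by
  classical
  set l := (facets Δ).toList with hl
  refine ⟨l.length, fun i => l.getD i ∅, ?_, ?_, ?_⟩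
  · ext σ
    rw [Finset.mem_image]
    constructor
    · intro hσ
      have : σ ∈ l := by rw [hl]; exact Finset.mem_toList.2 hσ
      obtain ⟨i, hi, hiσ⟩ := List.mem_iff_getElem.1 this
      exact ⟨i, Finset.mem_range.2 hi, by rw [List.getD_eq_getElem l ∅ hi, hiσ]⟩
    · rintro ⟨i, hi, rfl⟩
      rw [Finset.mem_range] at hi
      rw [← Finset.mem_toList, ← hl, List.getD_eq_getElem l ∅ hi]
      exact List.getElem_mem _
  · intro i hi j hj hij
    simp only at hij
    rw [List.getD_eq_getElem l ∅ hi, List.getD_eq_getElem l ∅ hj] at hij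
    exact (Finset.nodup_toList (facets Δ)).getElem_inj_iff.1 hij
  · intro j hj1 hj i hi
    refine ⟨i, hi, ?_, Finset.Subset.refl _⟩
    simp only
    have hjf : l.getD j ∅ ∈ facets Δ := by
      rw [← Finset.mem_toList, ← hl, List.getD_eq_getElem l ∅ hj]
      exact List.getElem_mem _
    have hif : l.getD i ∅ ∈ facets Δ := by
      rw [← Finset.mem_toList, ← hl, List.getD_eq_getElem l ∅ (by omega)]
      exact List.getElem_mem _
    have hne : l.getD j ∅ ≠ l.getD i ∅ := by
      rw [List.getD_eq_getElem l ∅ hj, List.getD_eq_getElem l ∅ (by omega : i < l.length)]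
      intro hcc
      have := (Finset.nodup_toList (facets Δ)).getElem_inj_iff.1 hcc
      omega
    obtain ⟨a, ha⟩ := Finset.card_eq_one.1 (hp _ hjf)
    obtain ⟨b, hb⟩ := Finset.card_eq_one.1 (hp _ hif)
    have hab : a ≠ b := by
      intro hcc
      rw [ha, hb, hcc] at hne
      exact hne rfl
    rw [ha, hb]
    rw [ha] at *
    simp [Finset.singleton_inter_of_notMem, hab]

end Builders

section Combine

variable {Δ : Finset (Finset ℕ)}

lemma shellable_combine {d x : ℕ} (hΔ : IsComplex Δ) (hp : IsPureDim Δ d) (hd : 1 ≤ d)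
    (hfd : facets (deletion Δ x) = delFam (facets Δ) x)
    (hfl : facets (link Δ x) = linkFam (facets Δ) x)
    (hgood : linkFam (facets Δ) x ⊆ Finset.shadow (delFam (facets Δ) x))
    (h1 : IsShellable (deletion Δ x)) (h2 : IsShellable (link Δ x)) :
    IsShellable Δ := by
  classical
  obtain ⟨n₁, F₁, he₁, hi₁, hs₁⟩ := h1
  obtain ⟨n₂, F₂, he₂, hi₂, hs₂⟩ := h2
  rw [hfd] at he₁
  rw [hfl] at he₂
  set Φ : ℕ → Finset ℕ := fun i => if i < n₁ then F₁ i else insert x (F₂ (i - n₁)) with hΦ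
  have hmem₁ : ∀ i, i < n₁ → F₁ i ∈ delFam (facets Δ) x := by
    intro i hi
    rw [he₁]
    exact Finset.mem_image_of_mem F₁ (Finset.mem_range.2 hi)
  have hmem₂ : ∀ t, t < n₂ → F₂ t ∈ linkFam (facets Δ) x := by
    intro t ht
    rw [he₂]
    exact Finset.mem_image_of_mem F₂ (Finset.mem_range.2 ht)
  have hx₁ : ∀ i, i < n₁ → x ∉ F₁ i := by
    intro i hi
    exact (Finset.mem_filter.1 (hmem₁ i hi)).2
  have hx₂ : ∀ t, t < n₂ → x ∉ F₂ t := by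
    intro t ht
    exact (mem_linkFam.1 (hmem₂ t ht)).1
  have hsized : ∀ A ∈ facets Δ, A.card = d + 1 := hp
  have hcard₂ : ∀ t, t < n₂ → (F₂ t).card = d := by
    intro t ht
    have := linkFam_sized hsized _ (hmem₂ t ht)
    omega
  have hΦval₂ : ∀ j, n₁ ≤ j → Φ j = insert x (F₂ (j - n₁)) := by
    intro j hj
    rw [hΦ]
    simp only
    rw [if_neg (by omega)]
  have hΦval₁ : ∀ j, j < n₁ → Φ j = F₁ j := by
    intro j hj
    rw [hΦ]
    simp only
    rw [if_pos hj]
  refine ⟨n₁ + n₂, Φ, ?_, ?_, ?_⟩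
  · rw [family_split (F := facets Δ) (x := x), he₁, he₂]
    ext σ
    simp only [Finset.mem_union, Finset.mem_image, Finset.mem_range]
    constructor
    · rintro (⟨i, hi, rfl⟩ | ⟨G, ⟨t, ht, rfl⟩, rfl⟩)
      · exact ⟨i, by omega, hΦval₁ i hi⟩
      · refine ⟨n₁ + t, by omega, ?_⟩
        rw [hΦval₂ (n₁ + t) (by omega)]
        have e : n₁ + t - n₁ = t := by omega
        rw [e]
    · rintro ⟨i, hi, rfl⟩
      by_cases hin : i < n₁
      · exact Or.inl ⟨i, hin, by rw [hΦval₁ i hin]⟩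
      · refine Or.inr ⟨F₂ (i - n₁), ⟨i - n₁, by omega, rfl⟩, ?_⟩
        rw [hΦval₂ i (by omega)]
  · intro i hi j hj hij
    by_cases hin : i < n₁ <;> by_cases hjn : j < n₁
    · rw [hΦval₁ i hin, hΦval₁ j hjn] at hij
      exact hi₁ i hin j hjn hij
    · rw [hΦval₁ i hin, hΦval₂ j (by omega)] at hij
      exact absurd (hij ▸ Finset.mem_insert_self x (F₂ (j - n₁))) (hx₁ i hin)
    · rw [hΦval₂ i (by omega), hΦval₁ j hjn] at hij
      exact absurd (hij.symm ▸ Finset.mem_insert_self x (F₂ (i - n₁))) (hx₁ j hjn)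
    · rw [hΦval₂ i (by omega), hΦval₂ j (by omega)] at hij
      have h1 : F₂ (i - n₁) = F₂ (j - n₁) := by
        have e1 := hx₂ (i - n₁) (by omega)
        have e2 := hx₂ (j - n₁) (by omega)
        calc F₂ (i - n₁) = (insert x (F₂ (i - n₁))).erase x := (Finset.erase_insert e1).symm
          _ = (insert x (F₂ (j - n₁))).erase x := by rw [hij]
          _ = F₂ (j - n₁) := Finset.erase_insert e2
      have := hi₂ (i - n₁) (by omega) (j - n₁) (by omega) h1
      omega
  · intro j hj1 hjn i hij
    by_cases hjn₁ : j < n₁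
    · obtain ⟨i', hi', hc, hsub⟩ := hs₁ j hj1 hjn₁ i hij
      refine ⟨i', hi', ?_, ?_⟩
      · rwa [hΦval₁ j hjn₁, hΦval₁ i' (by omega)]
      · rwa [hΦval₁ j hjn₁, hΦval₁ i' (by omega), hΦval₁ i (by omega)]
    · -- j is in the link block
      set t := j - n₁ with htdef
      have htn₂ : t < n₂ := by omega
      have hGj := hmem₂ t htn₂
      have hxGj := hx₂ t htn₂
      have hΦj : Φ j = insert x (F₂ t) := hΦval₂ j (by omega)
      have hΦjcard : (Φ j).card = d + 1 := by
        rw [hΦj, Finset.card_insert_of_notMem hxGj, hcard₂ t htn₂]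
      by_cases hin₁ : i < n₁
      · -- use a deletion facet containing F₂ t
        have hsh := hgood hGj
        rw [mem_shadow_iff] at hsh
        obtain ⟨ρ, hρ, a, ha, hρa⟩ := hsh
        rw [he₁] at hρ
        obtain ⟨i'', hi'', rfl⟩ := Finset.mem_image.1 hρ
        rw [Finset.mem_range] at hi''
        have hρx : x ∉ F₁ i'' := hx₁ i'' hi''
        have hGρ : F₂ t ⊆ F₁ i'' := by
          rw [← hρa]
          exact Finset.erase_subset _ _
        refine ⟨i'', by omega, ?_, ?_⟩
        · rw [hΦj, hΦval₁ i'' hi'', Finset.insert_inter_of_notMem hρx,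
            Finset.inter_eq_left.2 hGρ, hcard₂ t htn₂,
            Finset.card_insert_of_notMem hxGj, hcard₂ t htn₂]
          omega
        · rw [hΦj, hΦval₁ i'' hi'', hΦval₁ i hin₁,
            Finset.insert_inter_of_notMem hρx, Finset.insert_inter_of_notMem (hx₁ i hin₁),
            Finset.inter_eq_left.2 hGρ]
          exact Finset.inter_subset_left
      · -- both in the link block
        set s := i - n₁ with hsdef
        have hsn₂ : s < n₂ := by omega
        have hst : s < t := by omega
        have ht1 : 1 ≤ t := by omega
        obtain ⟨t', ht', hc, hsub⟩ := hs₂ t ht1 htn₂ s hst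
        have ht'n₂ : t' < n₂ := by omega
        refine ⟨n₁ + t', by omega, ?_, ?_⟩
        · rw [hΦj, hΦval₂ (n₁ + t') (by omega)]
          have e : n₁ + t' - n₁ = t' := by omega
          rw [e, ← Finset.insert_inter_distrib,
            Finset.card_insert_of_notMem (fun h => hxGj (Finset.mem_inter.1 h).1),
            hc, hcard₂ t htn₂, Finset.card_insert_of_notMem hxGj, hcard₂ t htn₂]
          omega
        · rw [hΦj, hΦval₂ (n₁ + t') (by omega), hΦval₂ i (by omega)]
          have e : n₁ + t' - n₁ = t' := by omega
          rw [e, ← Finset.insert_inter_distrib, ← Finset.insert_inter_distrib]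
          exact Finset.insert_subset_insert _ hsub

end Combine

section Main

variable {Δ : Finset (Finset ℕ)}

lemma shadow_facets_card (hE : IsExtremal Δ d) :
    (Finset.shadow (facets Δ)).card = minShadow (facets Δ).card (d + 1) := by
  rw [← faces_eq_shadow_facets hE.1 hE.2.1]
  exact hE.2.2

lemma good_vertex_package {d : ℕ} (hE : IsExtremal Δ d) (hd : 1 ≤ d)
    (hn2 : 2 ≤ (facets Δ).card) :
    ∃ x, {x} ∈ Δ ∧
      IsExtremal (deletion Δ x) d ∧ IsExtremal (link Δ x) (d - 1) ∧
      (deletion Δ x).card < Δ.card ∧ (link Δ x).card < Δ.card ∧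
      facets (deletion Δ x) = delFam (facets Δ) x ∧
      facets (link Δ x) = linkFam (facets Δ) x ∧
      linkFam (facets Δ) x ⊆ Finset.shadow (delFam (facets Δ) x) := by
  classical
  obtain ⟨hΔ, hp, hcount⟩ := hE
  set F := facets Δ with hF
  set n := F.card with hn
  set k := d + 1 with hk
  have hsized : ∀ A ∈ F, A.card = k := hp
  have hminF : (Finset.shadow F).card = minShadow n k := shadow_facets_card ⟨hΔ, hp, hcount⟩
  obtain ⟨x, hxV, hxgood⟩ := exists_good_vertex (by omega) hsized rfl hn2 hminF
  obtain ⟨σx, hσxF, hxσx⟩ := Finset.mem_biUnion.1 hxV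
  have hm1 : 1 ≤ (F.filter fun σ => x ∈ σ).card :=
    Finset.card_pos.2 ⟨σx, Finset.mem_filter.2 ⟨hσxF, hxσx⟩⟩
  have hxΔ : {x} ∈ Δ := singleton_mem_of_mem_face hΔ (facets_subset hσxF) hxσx
  obtain ⟨hsubL, hdelc, hlinkc⟩ := good_vertex_collapse (by omega) hsized rfl hminF hxgood
  set m := (F.filter fun σ => x ∈ σ).card with hm
  have hfd : facets (deletion Δ x) = delFam F x := facets_deletion hΔ hp hsubL
  have hfl : facets (link Δ x) = linkFam F x := facets_link hΔ hp
  have hdelcomplex : IsComplex (deletion Δ x) := deletion_isComplex hΔ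
  have hlinkcomplex : IsComplex (link Δ x) := link_isComplex hΔ hxΔ
  have hdelpure : IsPureDim (deletion Δ x) d := by
    intro σ hσ
    rw [hfd] at hσ
    exact delFam_sized hsized σ hσ
  have hlinkpure : IsPureDim (link Δ x) (d - 1) := by
    intro σ hσ
    rw [hfl] at hσ
    have := linkFam_sized hsized σ hσ
    omega
  have hcard_delFam : (delFam F x).card = n - m := by
    have := card_delFam_add (F := F) (x := x)
    have hmn : m ≤ n := by
      rw [hn]
      exact Finset.card_le_card (Finset.filter_subset _ _)
    omega
  have hcard_linkFam : (linkFam F x).card = m := card_linkFam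
  refine ⟨x, hxΔ, ⟨hdelcomplex, hdelpure, ?_⟩, ⟨hlinkcomplex, hlinkpure, ?_⟩, ?_, ?_,
    hfd, hfl, hsubL⟩
  · rw [faces_eq_shadow_facets hdelcomplex hdelpure, hfd, hcard_delFam, hdelc]
  · rw [faces_eq_shadow_facets hlinkcomplex hlinkpure, hfl, hcard_linkFam]
    have e1 : (d - 1) + 1 = k - 1 := by omega
    rw [e1, hlinkc]
  · apply Finset.card_lt_card
    refine ⟨Finset.filter_subset _ _, fun hsub => ?_⟩
    have : σx ∈ deletion Δ x := hsub (facets_subset hσxF)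
    exact (Finset.mem_filter.1 this).2 hxσx
  · apply Finset.card_lt_card
    refine ⟨Finset.filter_subset _ _, fun hsub => ?_⟩
    have : σx ∈ link Δ x := hsub (facets_subset hσxF)
    exact (Finset.mem_filter.1 this).2.1 hxσx

lemma extremal_shellable_aux : ∀ (N : ℕ) (Δ : Finset (Finset ℕ)) (d : ℕ),
    Δ.card ≤ N → IsExtremal Δ d → IsShellable Δ := by
  intro N
  induction N with
  | zero =>
    intro Δ d hcard hE
    obtain ⟨σ, hσ⟩ := hE.1.1
    have := Finset.card_pos.2 ⟨σ, hσ⟩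
    omega
  | succ N ih =>
    intro Δ d hcard hE
    by_cases hn1 : (facets Δ).card ≤ 1
    · have h1 : (facets Δ).card = 1 := by
        have := Finset.card_pos.2 (facets_nonempty hE.1)
        omega
      exact shellable_of_one_facet h1
    · by_cases hd0 : d = 0
      · exact shellable_of_dim_zero hE.1 (hd0 ▸ hE.2.1)
      · obtain ⟨x, hxΔ, hEdel, hElink, hcdel, hclink, hfd, hfl, hsub⟩ :=
          good_vertex_package hE (by omega) (by omega)
        have hdel_shell : IsShellable (deletion Δ x) :=
          ih (deletion Δ x) d (by omega) hEdel
        have hlink_shell : IsShellable (link Δ x) :=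
          ih (link Δ x) (d - 1) (by omega) hElink
        exact shellable_combine hE.1 hE.2.1 (by omega) hfd hfl hsub hdel_shell hlink_shell


end Main

/-- Every extremal pure simplicial complex is shellable. -/
theorem extremal_shellable (Δ : Finset (Finset ℕ)) (d : ℕ)
    (h : IsExtremal Δ d) : IsShellable Δ := by
  exact extremal_shellable_aux Δ.card Δ d le_rfl h
end

section
/- Let U be a finite family of n distinct k-element sets (k ≥ 1, n ≥ 1), let V = ⋃_{A∈U} A, and for i ∈ V set B_i = {A ∈ U : i ∉ A} and C_i = {A∖{i} : i ∈ A ∈ U}. Then either there exists i ∈ V such that |∂B_i| > |C_i|, or U consists of all k-element subsets of V. (Lemma 2.1.) -/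
open Finset

private def NN (U : Finset (Finset ℕ)) (V T : Finset ℕ) : Finset ℕ :=
  (V \ T).filter (fun z => insert z T ∈ U)

private lemma mem_NN {U : Finset (Finset ℕ)} {V T : Finset ℕ} {z : ℕ} :
    z ∈ NN U V T ↔ z ∈ V ∧ z ∉ T ∧ insert z T ∈ U := by
  simp [NN, mem_filter, mem_sdiff, and_assoc]

/-- **Lemma 2.1.** For a family `U` of `n` distinct `k`-element sets with underlying
set `V = ⋃_{A ∈ U} A`, `B i = {A ∈ U : i ∉ A}` and `C i = {A \ {i} : i ∈ A ∈ U}`: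
either there is `i ∈ V` with `|∂(B i)| > |C i|`, or `U` consists of all `k`-element
subsets of `V`. -/
theorem lemma_two_one (n k : ℕ) (hk : 1 ≤ k) (hn : 1 ≤ n)
    (U : Finset (Finset ℕ)) (hUn : U.card = n) (hUk : ∀ A ∈ U, A.card = k) :
    (∃ i ∈ U.sup id,
      ((U.filter fun A => i ∈ A).image fun A => A.erase i).card <
        (Finset.shadow (U.filter fun A => i ∉ A)).card) ∨
    U = Finset.powersetCard k (U.sup id) := by
  classical
  by_contra hcon
  push_neg at hcon
  obtain ⟨h1, h2⟩ := hcon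
  set V := U.sup id with hVdef
  have hU0 : U.Nonempty := card_pos.mp (by rw [hUn]; omega)
  have hsubV : ∀ A ∈ U, A ⊆ V := fun A hA => le_sup (f := id) hA
  obtain ⟨A₀, hA₀⟩ := id hU0
  have hVk : k ≤ V.card := by
    calc k = A₀.card := (hUk A₀ hA₀).symm
    _ ≤ V.card := card_le_card (hsubV A₀ hA₀)
  have hUsub : U ⊆ powersetCard k V :=
    fun A hA => mem_powersetCard.mpr ⟨hsubV A hA, hUk A hA⟩
  have hTsub : ∀ T ∈ U.shadow, T ⊆ V ∧ T.card = k - 1 := by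
    intro T hT
    rw [mem_shadow_iff] at hT
    obtain ⟨A, hA, a, haA, rfl⟩ := hT
    exact ⟨(erase_subset _ _).trans (hsubV A hA),
      by rw [card_erase_of_mem haA, hUk A hA]⟩
  by_cases hVeq : V.card = k
  · apply h2
    have hpk : Finset.powersetCard k V = {V} := by
      conv_lhs => rw [← hVeq]
      exact powersetCard_self V
    rw [hpk]
    refine Finset.eq_singleton_iff_nonempty_unique_mem.mpr ⟨hU0, fun A hA => ?_⟩
    exact eq_of_subset_of_card_le (hsubV A hA) (by rw [hUk A hA, hVeq])
  by_cases hVeq1 : V.card = k + 1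
  · have hform : ∀ A ∈ U, ∃ w ∈ V, A = V.erase w ∧ V \ A = {w} := by
      intro A hA
      have hcd : (V \ A).card = 1 := by
        rw [card_sdiff_of_subset (hsubV A hA), hUk A hA, hVeq1]; omega
      obtain ⟨w, hw⟩ := card_eq_one.mp hcd
      have hwV : w ∈ V := (mem_sdiff.mp (hw ▸ mem_singleton_self w)).1
      refine ⟨w, hwV, ?_, hw⟩
      have : V \ (V \ A) = A := Finset.sdiff_sdiff_eq_self (hsubV A hA)
      rw [erase_eq, ← hw, this]
    obtain ⟨X, hXp, hXU⟩ := exists_of_ssubset (ssubset_of_subset_of_ne hUsub h2)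
    obtain ⟨hXV, hXk⟩ := mem_powersetCard.mp hXp
    obtain ⟨v, hvV, hXv⟩ : ∃ v ∈ V, X = V.erase v := by
      have hcd : (V \ X).card = 1 := by rw [card_sdiff_of_subset hXV, hXk, hVeq1]; omega
      obtain ⟨w, hw⟩ := card_eq_one.mp hcd
      have hwV : w ∈ V := (mem_sdiff.mp (hw ▸ mem_singleton_self w)).1
      refine ⟨w, hwV, ?_⟩
      have : V \ (V \ X) = X := Finset.sdiff_sdiff_eq_self hXV
      rw [erase_eq, ← hw, this]
    obtain ⟨i, hiV, hA₀i, -⟩ := hform A₀ hA₀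
    have hvi : v ≠ i := by
      rintro rfl
      exact hXU (hXv ▸ hA₀i ▸ hA₀)
    -- B_i = {V.erase i}
    have hB : U.filter (fun A => i ∉ A) = {V.erase i} := by
      ext A
      rw [mem_filter, mem_singleton]
      constructor
      · rintro ⟨hAU, hiA⟩
        obtain ⟨w, hwV, rfl, -⟩ := hform A hAU
        by_cases hwi : w = i
        · rw [hwi]
        · exact absurd (mem_erase.mpr ⟨fun h => hwi h.symm, hiV⟩) hiA
      · rintro rfl
        exact ⟨hA₀i ▸ hA₀, notMem_erase _ _⟩
    have hshadB : (Finset.shadow (U.filter fun A => i ∉ A)).card = k := by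
      rw [hB]
      have himg : Finset.shadow ({V.erase i} : Finset (Finset ℕ)) =
          (V.erase i).image (fun a => (V.erase i).erase a) := by
        ext T
        rw [mem_shadow_iff, mem_image]
        simp only [mem_singleton]
        constructor
        · rintro ⟨A, rfl, a, ha, rfl⟩; exact ⟨a, ha, rfl⟩
        · rintro ⟨a, ha, rfl⟩; exact ⟨V.erase i, rfl, a, ha, rfl⟩
      rw [himg, card_image_of_injOn (erase_injOn _), card_erase_of_mem hiV, hVeq1]
      omega
    have hC : ((U.filter fun A => i ∈ A).image fun A => A.erase i).card ≤ k - 1 := by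
      calc ((U.filter fun A => i ∈ A).image fun A => A.erase i).card
          ≤ (U.filter fun A => i ∈ A).card := card_image_le
        _ = ((U.filter fun A => i ∈ A).image (fun A => V \ A)).card := by
            refine (card_image_of_injOn ?_).symm
            intro A hA B hB hAB
            have hA' := hsubV A (mem_filter.mp hA).1
            have hB' := hsubV B (mem_filter.mp hB).1
            have hAB' : V \ A = V \ B := hAB
            have : V \ (V \ A) = V \ (V \ B) := by rw [hAB']
            rwa [Finset.sdiff_sdiff_eq_self hA', Finset.sdiff_sdiff_eq_self hB'] at this
        _ ≤ (((V.erase v).erase i).image (fun w => ({w} : Finset ℕ))).card := by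
            apply card_le_card
            intro Y hY
            obtain ⟨A, hA, rfl⟩ := mem_image.mp hY
            rw [mem_filter] at hA
            obtain ⟨hAU, hiA⟩ := hA
            obtain ⟨w, hwV, hAw, hVA⟩ := hform A hAU
            refine mem_image.mpr ⟨w, ?_, hVA.symm⟩
            have hwi : w ≠ i := by rintro rfl; exact (notMem_erase w V) (hAw ▸ hiA)
            have hwv : w ≠ v := by
              rintro rfl
              exact hXU (hXv ▸ hAw ▸ hAU)
            exact mem_erase.mpr ⟨hwi, mem_erase.mpr ⟨hwv, hwV⟩⟩
        _ = ((V.erase v).erase i).card := card_image_of_injective _ singleton_injective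
        _ = k - 1 := by
            rw [card_erase_of_mem (mem_erase.mpr ⟨fun h => hvi h.symm, hiV⟩),
              card_erase_of_mem hvV, hVeq1]
            omega
    have := h1 i hiV
    omega
  have hV2 : k + 2 ≤ V.card := by omega
  classical
  have hNne : ∀ T ∈ U.shadow, (NN U V T).Nonempty := by
    intro T hT
    obtain ⟨a, haT, haU⟩ := mem_shadow_iff_insert_mem.mp hT
    exact ⟨a, mem_NN.mpr ⟨hsubV _ haU (mem_insert_self a T), haT, haU⟩⟩
  have hBeq : ∀ i ∈ V, Finset.shadow (U.filter fun A => i ∉ A)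
      = (U.shadow).filter (fun T => i ∉ T ∧ ((NN U V T).erase i).Nonempty) := by
    intro i _
    ext T
    rw [mem_shadow_iff_insert_mem, mem_filter]
    constructor
    · rintro ⟨a, haT, haU⟩
      rw [mem_filter] at haU
      obtain ⟨haU, hia⟩ := haU
      have hai : a ≠ i := fun h => hia (h ▸ mem_insert_self a T)
      have hiT : i ∉ T := fun h => hia (mem_insert_of_mem h)
      have haV : a ∈ V := hsubV _ haU (mem_insert_self a T)
      exact ⟨mem_shadow_iff_insert_mem.mpr ⟨a, haT, haU⟩, hiT,
        ⟨a, mem_erase.mpr ⟨hai, mem_NN.mpr ⟨haV, haT, haU⟩⟩⟩⟩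
    · rintro ⟨-, hiT, a, ha⟩
      rw [mem_erase, mem_NN] at ha
      obtain ⟨hai, -, haT, haU⟩ := ha
      refine ⟨a, haT, mem_filter.mpr ⟨haU, ?_⟩⟩
      rw [mem_insert]
      rintro (rfl | h)
      · exact hai rfl
      · exact hiT h
  have hCeq : ∀ i ∈ V, ((U.filter fun A => i ∈ A).image fun A => A.erase i)
      = (U.shadow).filter (fun T => i ∈ NN U V T) := by
    intro i hiV
    ext T
    rw [mem_image, mem_filter]
    constructor
    · rintro ⟨A, hA, rfl⟩
      rw [mem_filter] at hA
      obtain ⟨hAU, hiA⟩ := hA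
      refine ⟨mem_shadow_iff.mpr ⟨A, hAU, i, hiA, rfl⟩, mem_NN.mpr
        ⟨hiV, notMem_erase _ _, by rw [insert_erase hiA]; exact hAU⟩⟩
    · rintro ⟨hT, hiN⟩
      rw [mem_NN] at hiN
      obtain ⟨-, hiT, hins⟩ := hiN
      exact ⟨insert i T, mem_filter.mpr ⟨hins, mem_insert_self i T⟩, erase_insert hiT⟩
  -- the summed inequality, reindexed over the shadow
  have hsum : ∑ T ∈ U.shadow, ((V \ T).filter (fun i => ((NN U V T).erase i).Nonempty)).card
      ≤ ∑ T ∈ U.shadow, (NN U V T).card := by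
    have L : ∑ i ∈ V, (Finset.shadow (U.filter fun A => i ∉ A)).card
        = ∑ T ∈ U.shadow, ((V \ T).filter (fun i => ((NN U V T).erase i).Nonempty)).card := by
      rw [Finset.sum_congr rfl (fun i hi => by rw [hBeq i hi, card_filter])]
      rw [Finset.sum_comm]
      refine Finset.sum_congr rfl (fun T _ => ?_)
      rw [← card_filter]
      congr 1
      ext i
      simp only [mem_filter, mem_sdiff]
      tauto
    have R : ∑ i ∈ V, ((U.filter fun A => i ∈ A).image fun A => A.erase i).card
        = ∑ T ∈ U.shadow, (NN U V T).card := by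
      rw [Finset.sum_congr rfl (fun i hi => by rw [hCeq i hi, card_filter])]
      rw [Finset.sum_comm]
      refine Finset.sum_congr rfl (fun T _ => ?_)
      rw [← card_filter]
      congr 1
      ext i
      simp only [mem_filter]
      exact ⟨fun h => h.2, fun h => ⟨(mem_NN.mp h).1, h⟩⟩
    rw [← L, ← R]
    exact Finset.sum_le_sum h1
  have hcd : ∀ T ∈ U.shadow,
      (NN U V T).card ≤ ((V \ T).filter (fun i => ((NN U V T).erase i).Nonempty)).card ∧
      ((∃ z ∈ V \ T, insert z T ∉ U) →
        (NN U V T).card < ((V \ T).filter (fun i => ((NN U V T).erase i).Nonempty)).card) := by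
    intro T hT
    obtain ⟨hTV, hTc⟩ := hTsub T hT
    have hm : 3 ≤ (V \ T).card := by
      rw [card_sdiff_of_subset hTV, hTc]; omega
    have hNsub : NN U V T ⊆ V \ T := filter_subset _ _
    by_cases h1c : (NN U V T).card = 1
    · obtain ⟨z, hz⟩ := card_eq_one.mp h1c
      have hzmem : z ∈ V \ T := hNsub (hz ▸ mem_singleton_self z)
      have hfe : (V \ T).filter (fun i => ((NN U V T).erase i).Nonempty)
          = (V \ T).erase z := by
        rw [hz]
        ext i
        rw [mem_filter, mem_erase]
        constructor
        · rintro ⟨hi, w, hw⟩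
          rw [mem_erase, mem_singleton] at hw
          obtain ⟨hwi, rfl⟩ := hw
          exact ⟨fun h => hwi h.symm, hi⟩
        · rintro ⟨hiz, hi⟩
          exact ⟨hi, z, mem_erase.mpr ⟨fun h => hiz h.symm, mem_singleton_self z⟩⟩
      rw [hfe, h1c, card_erase_of_mem hzmem]
      exact ⟨by omega, fun _ => by omega⟩
    · have h2c : 2 ≤ (NN U V T).card := by
        have := card_pos.mpr (hNne T hT)
        omega
      have hfil : (V \ T).filter (fun i => ((NN U V T).erase i).Nonempty) = V \ T := by
        apply filter_true_of_mem
        intro i _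
        obtain ⟨a, ha, b, hb, hab⟩ := one_lt_card.mp h2c
        rcases eq_or_ne a i with rfl | h
        · exact ⟨b, mem_erase.mpr ⟨fun h => hab h.symm, hb⟩⟩
        · exact ⟨a, mem_erase.mpr ⟨h, ha⟩⟩
      rw [hfil]
      have hsplit : (NN U V T).card
          + ((V \ T).filter (fun z => ¬ insert z T ∈ U)).card = (V \ T).card :=
        card_filter_add_card_filter_not (s := V \ T) (p := fun z => insert z T ∈ U)
      refine ⟨card_le_card hNsub, ?_⟩
      rintro ⟨z, hzVT, hzU⟩
      have hpos : 0 < ((V \ T).filter (fun z => ¬ insert z T ∈ U)).card :=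
        card_pos.mpr ⟨z, mem_filter.mpr ⟨hzVT, hzU⟩⟩
      omega
  have key : ∀ T ∈ U.shadow, ∀ z ∈ V \ T, insert z T ∈ U := by
    by_contra hbad
    push_neg at hbad
    obtain ⟨T₀, hT₀, z₀, hz₀, hz₀U⟩ := hbad
    exact absurd hsum (not_le.mpr (Finset.sum_lt_sum (fun T hT => (hcd T hT).1)
      ⟨T₀, hT₀, (hcd T₀ hT₀).2 ⟨z₀, hz₀, hz₀U⟩⟩))
  apply h2
  refine Finset.Subset.antisymm hUsub (fun S hS => ?_)
  obtain ⟨hSV, hSk⟩ := mem_powersetCard.mp hS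
  obtain ⟨A, hA, hAmax⟩ := Finset.exists_max_image U (fun A => (A ∩ S).card) hU0
  by_contra hSU
  have hAS : A ≠ S := fun h => hSU (h ▸ hA)
  have hAn : (A \ S).Nonempty := by
    rw [sdiff_nonempty]
    intro hsub
    exact hAS (eq_of_subset_of_card_le hsub (by rw [hSk, hUk A hA]))
  have hSn : (S \ A).Nonempty := by
    rw [sdiff_nonempty]
    intro hsub
    exact hAS (eq_of_subset_of_card_le hsub (by rw [hSk, hUk A hA])).symm
  obtain ⟨j, hj⟩ := hAn
  obtain ⟨i, hi⟩ := hSn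
  rw [mem_sdiff] at hi hj
  have hT : A.erase j ∈ U.shadow := mem_shadow_iff.mpr ⟨A, hA, j, hj.1, rfl⟩
  have hiT : i ∈ V \ A.erase j :=
    mem_sdiff.mpr ⟨hSV hi.1, fun h => hi.2 (erase_subset _ _ h)⟩
  have hnew := key _ hT _ hiT
  have hts : (A.erase j) ∩ S = A ∩ S := by
    ext x
    simp only [mem_inter, mem_erase]
    constructor
    · rintro ⟨⟨-, hx⟩, hxS⟩; exact ⟨hx, hxS⟩
    · rintro ⟨hxA, hxS⟩
      exact ⟨⟨fun h => hj.2 (h ▸ hxS), hxA⟩, hxS⟩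
  have hiAS : i ∉ A.erase j ∩ S := fun h => hi.2 (erase_subset _ _ (mem_inter.mp h).1)
  have hcard : ((insert i (A.erase j)) ∩ S).card = (A ∩ S).card + 1 := by
    rw [insert_inter_of_mem hi.1, card_insert_of_notMem hiAS, hts]
  have hle := hAmax _ hnew
  rw [hcard] at hle
  omega
end

section
/- If Δ is an extremal pure simplicial complex of positive dimension, then there exists a vertex x of Δ such that both lk_Δ(x) and Δ∖x are (pure and) extremal. (Lemma 2.2.) -/
open Finset

open Finset.Colex Function
open scoped FinsetFamily

namespace KKAux



variable {M : ℕ}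

/-- Push a finset of `Fin M` up to `ℕ`. -/
def up (A : Finset (Fin M)) : Finset ℕ := A.image Fin.val

/-- Push a family up to `ℕ`. -/
def upF (V : Finset (Finset (Fin M))) : Finset (Finset ℕ) := V.image up

/-- Pull a finset of `ℕ` down to `Fin M`. -/
def down (M : ℕ) (A : Finset ℕ) : Finset (Fin M) :=
  Finset.univ.filter fun i => (i : ℕ) ∈ A

/-- Pull a family down to `Fin M`. -/
def downF (M : ℕ) (U : Finset (Finset ℕ)) : Finset (Finset (Fin M)) := U.image (down M)

lemma up_injective : Injective (up (M := M)) :=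
  Finset.image_injective Fin.val_injective

lemma card_up (A : Finset (Fin M)) : (up A).card = A.card :=
  card_image_of_injective _ Fin.val_injective

lemma mem_up {A : Finset (Fin M)} {a : ℕ} : a ∈ up A ↔ ∃ i ∈ A, (i : ℕ) = a := by
  simp [up]

lemma mem_up_lt {A : Finset (Fin M)} {a : ℕ} (h : a ∈ up A) : a < M := by
  obtain ⟨i, _, rfl⟩ := mem_up.1 h; exact i.isLt

lemma up_down {A : Finset ℕ} (h : ∀ a ∈ A, a < M) : up (down M A) = A := by
  ext a
  simp only [up, down, mem_image, mem_filter, mem_univ, true_and]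
  constructor
  · rintro ⟨i, hi, rfl⟩; exact hi
  · intro ha; exact ⟨⟨a, h a ha⟩, ha, rfl⟩

lemma down_up (B : Finset (Fin M)) : down M (up B) = B := by
  ext i
  simp only [down, mem_filter, mem_univ, true_and, mem_up]
  constructor
  · rintro ⟨j, hj, hji⟩; rwa [Fin.val_injective hji] at hj
  · intro hi; exact ⟨i, hi, rfl⟩

lemma upF_downF {U : Finset (Finset ℕ)} (h : ∀ A ∈ U, ∀ a ∈ A, a < M) :
    upF (downF M U) = U := by
  rw [upF, downF, image_image]
  rw [show (up ∘ down M : Finset ℕ → Finset ℕ) = _ from rfl]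
  refine (image_congr ?_).trans image_id
  intro A hA
  exact up_down (h A hA)

lemma card_upF (V : Finset (Finset (Fin M))) : (upF V).card = V.card :=
  card_image_of_injective _ up_injective

lemma card_downF {U : Finset (Finset ℕ)} (h : ∀ A ∈ U, ∀ a ∈ A, a < M) :
    (downF M U).card = U.card := by
  conv_rhs => rw [← upF_downF h]
  rw [card_upF]

lemma shadow_upF (V : Finset (Finset (Fin M))) : ∂ (upF V) = upF (∂ V) := by
  ext σ
  simp only [mem_shadow_iff, upF, mem_image]
  constructor
  · rintro ⟨s, ⟨B, hB, rfl⟩, a, ha, rfl⟩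
    obtain ⟨i, hi, rfl⟩ := mem_up.1 ha
    exact ⟨B.erase i, ⟨B, hB, i, hi, rfl⟩, image_erase Fin.val_injective B i⟩
  · rintro ⟨t, ht, rfl⟩
    obtain ⟨B, hB, i, hi, rfl⟩ := ht
    exact ⟨up B, ⟨B, hB, rfl⟩, (i : ℕ), mem_up.2 ⟨i, hi, rfl⟩,
      (image_erase Fin.val_injective B i).symm⟩

lemma toColex_up_le {A B : Finset (Fin M)} :
    toColex (up A) ≤ toColex (up B) ↔ toColex A ≤ toColex B :=
  toColex_image_le_toColex_image Fin.val_strictMono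

lemma toColex_up_lt {A B : Finset (Fin M)} :
    toColex (up A) < toColex (up B) ↔ toColex A < toColex B :=
  toColex_image_lt_toColex_image Fin.val_strictMono

lemma sized_upF {V : Finset (Finset (Fin M))} {r : ℕ} (h : (V : Set (Finset (Fin M))).Sized r) :
    ((upF V : Finset (Finset ℕ)) : Set (Finset ℕ)).Sized r := by
  rintro A hA
  simp only [upF, coe_image, Set.mem_image, mem_coe] at hA
  obtain ⟨B, hB, rfl⟩ := hA
  rw [card_up]; exact h hB

lemma isInitSeg_upF {V : Finset (Finset (Fin M))} {r : ℕ} (hV : IsInitSeg V r) :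
    IsInitSeg (upF V) r := by
  refine ⟨sized_upF hV.1, ?_⟩
  rintro s t hs ⟨hts, htr⟩
  simp only [upF, mem_image] at hs ⊢
  obtain ⟨B, hB, rfl⟩ := hs
  -- every element of t is < M
  have hbd : ∀ a ∈ t, a < M := by
    intro a ha
    rcases (up B).eq_empty_or_nonempty with he | ⟨m, hm⟩
    · rw [he] at hts
      simp only [Colex.lt_iff_exists_filter_lt] at hts
      obtain ⟨w, hw, _⟩ := hts
      simp at hw
    · have hmax : ∀ b ∈ up B, b < M := fun b hb => mem_up_lt hb
      exact forall_lt_mono hts.le hmax a ha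
  refine ⟨down M t, hV.2 hB ⟨?_, ?_⟩, up_down hbd⟩
  · rwa [← toColex_up_lt, up_down hbd]
  · have := card_up (down M t)
    rw [up_down hbd] at this
    rw [← this]; exact htr

lemma isInitSeg_downF {C : Finset (Finset ℕ)} {r : ℕ} (hC : IsInitSeg C r)
    (h : ∀ A ∈ C, ∀ a ∈ A, a < M) : IsInitSeg (downF M C) r := by
  constructor
  · rintro A hA
    simp only [downF, coe_image, Set.mem_image, mem_coe] at hA
    obtain ⟨B, hB, rfl⟩ := hA
    have := card_up (down M B)
    rw [up_down (h B hB)] at this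
    rw [← this]; exact hC.1 hB
  · rintro s t hs ⟨hts, htr⟩
    simp only [downF, mem_image] at hs ⊢
    obtain ⟨B, hB, rfl⟩ := hs
    refine ⟨up t, hC.2 hB ⟨?_, ?_⟩, down_up t⟩
    · have := toColex_up_lt.2 hts
      rwa [up_down (h B hB)] at this
    · rw [card_up]; exact htr



/-- A strict upper bound for all naturals appearing in members of `U`. -/
def bnd (U : Finset (Finset ℕ)) : ℕ := (U.sup fun A => A.sup id) + 1

lemma lt_bnd {U : Finset (Finset ℕ)} {A : Finset ℕ} {a : ℕ} (hA : A ∈ U) (ha : a ∈ A) :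
    a < bnd U :=
  Nat.lt_succ_of_le <| le_trans (le_sup (f := id) ha) (le_sup (f := fun A => A.sup id) hA)

lemma sized_downF {U : Finset (Finset ℕ)} {k : ℕ} (hU : ∀ A ∈ U, A.card = k)
    (h : ∀ A ∈ U, ∀ a ∈ A, a < M) :
    ((downF M U : Finset (Finset (Fin M))) : Set (Finset (Fin M))).Sized k := by
  rintro B hB
  simp only [downF, coe_image, Set.mem_image, mem_coe] at hB
  obtain ⟨A, hA, rfl⟩ := hB
  have := card_up (down M A)
  rw [up_down (h A hA)] at this
  rw [← this]; exact hU A hA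

lemma card_shadow_eq_card_shadow_downF {U : Finset (Finset ℕ)}
    (h : ∀ A ∈ U, ∀ a ∈ A, a < M) : (∂ U).card = (∂ (downF M U)).card := by
  conv_lhs => rw [← upF_downF h, shadow_upF, card_upF]

/-- Kruskal–Katona over `ℕ`. -/
lemma kruskal_katona_nat {U C : Finset (Finset ℕ)} {k : ℕ}
    (hU : ∀ A ∈ U, A.card = k) (hC : IsInitSeg C k) (hcard : C.card ≤ U.card) :
    (∂ C).card ≤ (∂ U).card := by
  set M := bnd (U ∪ C) with hM
  have hbU : ∀ A ∈ U, ∀ a ∈ A, a < M := fun A hA a ha => lt_bnd (mem_union_left _ hA) ha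
  have hbC : ∀ A ∈ C, ∀ a ∈ A, a < M := fun A hA a ha => lt_bnd (mem_union_right _ hA) ha
  rw [card_shadow_eq_card_shadow_downF hbU, card_shadow_eq_card_shadow_downF hbC]
  refine kruskal_katona (sized_downF hU hbU) ?_ (isInitSeg_downF hC hbC)
  rw [card_downF hbU, card_downF hbC]; exact hcard

lemma minShadow_le {U : Finset (Finset ℕ)} {k : ℕ} (hU : ∀ A ∈ U, A.card = k) :
    minShadow U.card k ≤ (∂ U).card :=
  Nat.sInf_le ⟨U, rfl, hU, rfl⟩

lemma card_shadow_initSeg {C : Finset (Finset ℕ)} {k : ℕ} (hC : IsInitSeg C k) :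
    (∂ C).card = minShadow C.card k := by
  refine le_antisymm ?_ (minShadow_le fun A hA => hC.1 hA)
  refine le_csInf ⟨(∂ C).card, C, rfl, fun A hA => hC.1 hA, rfl⟩ ?_
  rintro m ⟨U, hn, hk, rfl⟩
  exact kruskal_katona_nat hk hC (by rw [hn])

/-- There are initial segments of every size. -/
lemma exists_isInitSeg (k N : ℕ) (hk : 1 ≤ k) :
    ∃ C : Finset (Finset ℕ), IsInitSeg C k ∧ C.card = N := by
  induction N with
  | zero => exact ⟨∅, isInitSeg_empty, card_empty⟩
  | succ N ih =>
    obtain ⟨C, hC, hCcard⟩ := ih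
    set b := (C.sup fun A => A.sup id) + 1 with hb
    set D := (range k).image (· + b) with hD
    have hDcard : D.card = k := by
      rw [hD, card_image_of_injective _ (add_left_injective b), card_range]
    have hDC : D ∉ C := by
      intro hmem
      have hbD : b ∈ D := by
        simp only [hD, mem_image, mem_range]
        exact ⟨0, hk, zero_add b⟩
      have : b ≤ C.sup fun A => A.sup id :=
        le_trans (le_sup (f := id) hbD) (le_sup (f := fun A => A.sup id) hmem)
      omega
    have hDbd : ∀ a ∈ D, a < D.sup id + 1 := fun a ha => Nat.lt_succ_of_le (le_sup (f := id) ha)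
    set T := (powersetCard k (range (D.sup id + 1))).filter
      (fun t => t ∉ C ∧ toColex t ≤ toColex D) with hT
    have hDT : D ∈ T := by
      rw [hT, mem_filter, mem_powersetCard]
      exact ⟨⟨fun a ha => mem_range.2 (hDbd a ha), hDcard⟩, hDC, le_refl _⟩
    have hTne : (T.image toColex).Nonempty := ⟨toColex D, mem_image_of_mem _ hDT⟩
    obtain ⟨t₀, ht₀T, ht₀⟩ := mem_image.1 ((T.image toColex).min'_mem hTne)
    have hmin : ∀ u ∈ T, toColex t₀ ≤ toColex u := by
      intro u hu
      rw [ht₀]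
      exact min'_le _ _ (mem_image_of_mem _ hu)
    rw [hT, mem_filter, mem_powersetCard] at ht₀T
    refine ⟨insert t₀ C, ⟨?_, ?_⟩, ?_⟩
    · rintro A hA
      rw [coe_insert, Set.mem_insert_iff] at hA
      rcases hA with rfl | hA
      · exact ht₀T.1.2
      · exact hC.1 hA
    · rintro s t hs ⟨hts, htk⟩
      rcases mem_insert.1 hs with rfl | hsC
      · by_contra htn
        rw [mem_insert, not_or] at htn
        have htle : toColex t ≤ toColex D := le_trans hts.le ht₀T.2.2
        have htbd : ∀ a ∈ t, a < D.sup id + 1 := forall_lt_mono htle hDbd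
        have htT : t ∈ T := by
          rw [hT, mem_filter, mem_powersetCard]
          exact ⟨⟨fun a ha => mem_range.2 (htbd a ha), htk⟩, htn.2, htle⟩
        exact absurd hts (not_lt.2 (hmin t htT))
      · exact mem_insert_of_mem (hC.2 hsC ⟨hts, htk⟩)
    · rw [card_insert_of_notMem ht₀T.2.1, hCcard]

lemma exists_extremal_initSeg (N k : ℕ) (hk : 1 ≤ k) :
    ∃ C : Finset (Finset ℕ), C.card = N ∧ (∀ A ∈ C, A.card = k) ∧ IsInitSeg C k ∧
      (∂ C).card = minShadow N k := by
  obtain ⟨C, hC, hCcard⟩ := exists_isInitSeg k N hk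
  exact ⟨C, hCcard, fun A hA => hC.1 hA, hC, by rw [← hCcard]; exact card_shadow_initSeg hC⟩

/-- The shadow of an initial segment over `ℕ` is an initial segment. -/
lemma isInitSeg_shadow_nat {C : Finset (Finset ℕ)} {k : ℕ} (hC : IsInitSeg C k) :
    IsInitSeg (∂ C) (k - 1) := by
  set M := bnd C
  have hb : ∀ A ∈ C, ∀ a ∈ A, a < M := fun A hA a ha => lt_bnd hA ha
  have : ∂ C = upF (∂ (downF M C)) := by rw [← shadow_upF, upF_downF hb]
  rw [this]
  exact isInitSeg_upF (isInitSeg_downF hC hb).shadow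

/-- Lovász-form lower bound for `minShadow`. -/
lemma choose_le_minShadow {m k : ℕ} (hk : 1 ≤ k) (hkm : k ≤ m) :
    Nat.choose m (k - 1) ≤ minShadow (Nat.choose m k) k := by
  have hwit : ∃ U : Finset (Finset ℕ), U.card = Nat.choose m k ∧ (∀ A ∈ U, A.card = k) ∧
      (∂ U).card = (∂ (powersetCard k (range m))).card := by
    refine ⟨powersetCard k (range m), ?_, ?_, rfl⟩
    · rw [card_powersetCard, card_range]
    · intro A hA; exact (mem_powersetCard.1 hA).2
  obtain ⟨U₀, h₀, h₁, _⟩ := hwit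
  refine le_csInf ⟨_, U₀, h₀, h₁, rfl⟩ ?_
  rintro m' ⟨U, hn, hs, rfl⟩
  set M := max (bnd U) m with hM
  have hbU : ∀ A ∈ U, ∀ a ∈ A, a < M := fun A hA a ha =>
    lt_of_lt_of_le (lt_bnd hA ha) (le_max_left _ _)
  rw [card_shadow_eq_card_shadow_downF hbU]
  have h := kruskal_katona_lovasz_form (i := 1) (r := k) (k := m) (n := M)
    hk hkm (le_max_right _ _) (sized_downF hs hbU)
    (by rw [card_downF hbU, hn])
  simpa using h

/-- The key numerical estimate. -/
lemma minShadow_split {n q k : ℕ} (hk : 1 ≤ k) (hq : q ≤ n) :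
    minShadow n (k + 1) ≤ minShadow q k + max q (minShadow (n - q) (k + 1)) := by
  obtain ⟨C₁, hC₁card, hC₁sized, hC₁, hC₁sh⟩ := exists_extremal_initSeg q k hk
  obtain ⟨C₂, hC₂card, hC₂sized, hC₂, hC₂sh⟩ :=
    exists_extremal_initSeg (n - q) (k + 1) (Nat.le_add_left 1 k)
  set z := max (bnd C₁) (bnd C₂) with hz
  have hz1 : ∀ c ∈ C₁, z ∉ c := fun c hc hzc =>
    absurd (lt_of_lt_of_le (lt_bnd hc hzc) (le_max_left _ _)) (lt_irrefl z)
  have hz2 : ∀ A ∈ C₂, z ∉ A := fun A hA hzA =>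
    absurd (lt_of_lt_of_le (lt_bnd hA hzA) (le_max_right _ _)) (lt_irrefl z)
  set W := C₂ ∪ C₁.image (insert z) with hW
  have hdisj : Disjoint C₂ (C₁.image (insert z)) := by
    rw [disjoint_right]
    rintro A hA hA2
    obtain ⟨c, hc, rfl⟩ := mem_image.1 hA
    exact hz2 _ hA2 (mem_insert_self z c)
  have himgcard : (C₁.image (insert z)).card = q := by
    rw [card_image_of_injOn, hC₁card]
    intro c₁ h₁ c₂ h₂ he
    have := congrArg (fun s => erase s z) he
    simpa [erase_insert (hz1 c₁ h₁), erase_insert (hz1 c₂ h₂)] using this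
  have hWcard : W.card = n := by
    rw [hW, card_union_of_disjoint hdisj, hC₂card, himgcard]
    omega
  have hWsized : ∀ A ∈ W, A.card = k + 1 := by
    intro A hA
    rcases mem_union.1 hA with hA | hA
    · exact hC₂sized A hA
    · obtain ⟨c, hc, rfl⟩ := mem_image.1 hA
      rw [card_insert_of_notMem (hz1 c hc), hC₁sized c hc]
  have hsub : ∂ W ⊆ (∂ C₂ ∪ C₁) ∪ (∂ C₁).image (insert z) := by
    intro σ hσ
    obtain ⟨s, hs, a, ha, rfl⟩ := mem_shadow_iff.1 hσ
    rcases mem_union.1 hs with hs | hs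
    · exact mem_union_left _ (mem_union_left _ (erase_mem_shadow hs ha))
    · obtain ⟨c, hc, rfl⟩ := mem_image.1 hs
      rcases eq_or_ne a z with rfl | hne
      · rw [erase_insert (hz1 c hc)]
        exact mem_union_left _ (mem_union_right _ hc)
      · have hac : a ∈ c := mem_of_mem_insert_of_ne ha hne
        rw [erase_insert_of_ne (Ne.symm hne)]
        exact mem_union_right _ (mem_image_of_mem _ (erase_mem_shadow hc hac))
  have hunion : (∂ C₂ ∪ C₁).card ≤ max q (minShadow (n - q) (k + 1)) := by
    have h₂ : IsInitSeg (∂ C₂) k := by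
      have := isInitSeg_shadow_nat hC₂
      simpa using this
    rcases h₂.total hC₁ with hss | hss
    · rw [union_eq_right.2 hss, hC₁card]
      exact le_max_left _ _
    · rw [union_eq_left.2 hss, hC₂sh]
      exact le_max_right _ _
  have hfinal : (∂ W).card ≤ minShadow q k + max q (minShadow (n - q) (k + 1)) := by
    calc (∂ W).card ≤ ((∂ C₂ ∪ C₁) ∪ (∂ C₁).image (insert z)).card := card_le_card hsub
      _ ≤ (∂ C₂ ∪ C₁).card + ((∂ C₁).image (insert z)).card := card_union_le _ _
      _ ≤ max q (minShadow (n - q) (k + 1)) + (∂ C₁).card :=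
          Nat.add_le_add hunion (card_image_le)
      _ = minShadow q k + max q (minShadow (n - q) (k + 1)) := by rw [hC₁sh]; omega
  calc minShadow n (k + 1) ≤ (∂ W).card := by
        have := minShadow_le hWsized
        rwa [hWcard] at this
    _ ≤ _ := hfinal

end KKAux

namespace Lem22


variable {Δ : Finset (Finset ℕ)} {d : ℕ}

lemma facets_subset : facets Δ ⊆ Δ := filter_subset _ _

lemma mem_facets {σ : Finset ℕ} : σ ∈ facets Δ ↔ σ ∈ Δ ∧ ∀ τ ∈ Δ, σ ⊆ τ → σ = τ :=
  mem_filter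

lemma exists_facet {σ : Finset ℕ} (hσ : σ ∈ Δ) : ∃ A ∈ facets Δ, σ ⊆ A := by
  obtain ⟨A, hA, hmax⟩ := (Δ.filter fun τ => σ ⊆ τ).exists_max_image card
    ⟨σ, mem_filter.2 ⟨hσ, Subset.refl σ⟩⟩
  rw [mem_filter] at hA
  refine ⟨A, mem_facets.2 ⟨hA.1, fun τ hτ hAτ => ?_⟩, hA.2⟩
  exact eq_of_subset_of_card_le hAτ (hmax τ (mem_filter.2 ⟨hτ, hA.2.trans hAτ⟩))

/-- In a pure `d`-dimensional complex, the `d`-element faces are exactly the shadow of the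
facets. -/
lemma faces_eq_shadow_facets (hc : IsComplex Δ) (hp : IsPureDim Δ d) :
    Δ.filter (fun σ => σ.card = d) = ∂ (facets Δ) := by
  ext τ
  rw [mem_filter]
  constructor
  · rintro ⟨hτ, hcard⟩
    obtain ⟨A, hA, hτA⟩ := exists_facet hτ
    refine mem_shadow_iff_exists_mem_card_add_one.2 ⟨A, hA, hτA, ?_⟩
    rw [hp A hA, hcard]
  · intro hτ
    obtain ⟨A, hA, hτA, hcard⟩ := mem_shadow_iff_exists_mem_card_add_one.1 hτ
    refine ⟨hc.2 A (facets_subset hA) τ hτA, ?_⟩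
    have := hp A hA
    omega

/-- The decomposition of the shadow of a family according to a vertex `x`. -/
lemma shadow_card_decomp (x : ℕ) (F : Finset (Finset ℕ)) :
    (∂ F).card = (∂ ((F.filter fun A => x ∈ A).image fun A => A.erase x)).card
      + (((F.filter fun A => x ∈ A).image fun A => A.erase x) ∪
          ∂ (F.filter fun A => x ∉ A)).card := by
  set L := (F.filter fun A => x ∈ A).image fun A => A.erase x with hL
  have hxL : ∀ c ∈ L, x ∉ c := by
    rintro c hc
    obtain ⟨A, _, rfl⟩ := mem_image.1 hc
    exact notMem_erase x A
  have hxdL : ∀ τ ∈ ∂ L, x ∉ τ := by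
    intro τ hτ hxτ
    obtain ⟨c, hc, hτc⟩ := exists_subset_of_mem_shadow hτ
    exact hxL c hc (hτc hxτ)
  have hsplit := card_filter_add_card_filter_not (s := ∂ F) (p := fun σ => x ∈ σ)
  have hA : (∂ F).filter (fun σ => x ∈ σ) = (∂ L).image (insert x) := by
    ext σ
    rw [mem_filter, mem_image]
    constructor
    · rintro ⟨hσ, hxσ⟩
      obtain ⟨A, hAF, y, hy, rfl⟩ := mem_shadow_iff.1 hσ
      have hyx : y ≠ x := by rintro rfl; exact notMem_erase y A hxσ
      have hxA : x ∈ A := mem_of_mem_erase hxσ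
      have hyAx : y ∈ A.erase x := mem_erase.2 ⟨hyx, hy⟩
      refine ⟨(A.erase x).erase y, ?_, ?_⟩
      · exact erase_mem_shadow (mem_image_of_mem _ (mem_filter.2 ⟨hAF, hxA⟩)) hyAx
      · rw [erase_right_comm, insert_erase hxσ]
    · rintro ⟨τ, hτ, rfl⟩
      refine ⟨?_, mem_insert_self x τ⟩
      obtain ⟨c, hc, y, hy, rfl⟩ := mem_shadow_iff.1 hτ
      obtain ⟨A, hAF, rfl⟩ := mem_image.1 hc
      rw [mem_filter] at hAF
      have hyx : y ≠ x := (mem_erase.1 hy).1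
      have hxAy : x ∈ A.erase y := mem_erase.2 ⟨fun hxy => hyx hxy.symm, hAF.2⟩
      have : insert x ((A.erase x).erase y) = A.erase y := by
        rw [erase_right_comm, insert_erase hxAy]
      rw [this]
      exact erase_mem_shadow hAF.1 (mem_erase.1 hy).2
  have hB : (∂ F).filter (fun σ => ¬ x ∈ σ) = L ∪ ∂ (F.filter fun A => x ∉ A) := by
    ext σ
    rw [mem_filter, mem_union]
    constructor
    · rintro ⟨hσ, hxσ⟩
      obtain ⟨A, hAF, y, hy, rfl⟩ := mem_shadow_iff.1 hσ
      by_cases hxA : x ∈ A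
      · left
        have hyx : y = x := by
          by_contra hyx
          exact hxσ (mem_erase.2 ⟨Ne.symm hyx, hxA⟩)
        subst hyx
        exact mem_image_of_mem _ (mem_filter.2 ⟨hAF, hxA⟩)
      · right
        exact erase_mem_shadow (mem_filter.2 ⟨hAF, hxA⟩) hy
    · rintro (hσ | hσ)
      · obtain ⟨A, hAF, rfl⟩ := mem_image.1 hσ
        rw [mem_filter] at hAF
        exact ⟨erase_mem_shadow hAF.1 hAF.2, notMem_erase x A⟩
      · obtain ⟨A, hAF, y, hy, rfl⟩ := mem_shadow_iff.1 hσ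
        rw [mem_filter] at hAF
        exact ⟨erase_mem_shadow hAF.1 hy, fun hxσ => hAF.2 (mem_of_mem_erase hxσ)⟩
  have hcardA : ((∂ L).image (insert x)).card = (∂ L).card := by
    apply card_image_of_injOn
    intro τ₁ h₁ τ₂ h₂ he
    have := congrArg (fun s => s.erase x) he
    simpa [erase_insert (hxdL τ₁ h₁), erase_insert (hxdL τ₂ h₂)] using this
  rw [← hsplit, hA, hB, hcardA]

section
variable {Δ : Finset (Finset ℕ)} {d x : ℕ}

/-- The facets of the link are the facets containing `x`, with `x` removed. -/
lemma facets_link (hc : IsComplex Δ) (hp : IsPureDim Δ d) :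
    facets (link Δ x) = ((facets Δ).filter fun A => x ∈ A).image fun A => A.erase x := by
  have hmemL : ∀ A ∈ (facets Δ).filter (fun A => x ∈ A), A.erase x ∈ link Δ x := by
    intro A hA
    rw [mem_filter] at hA
    have hAΔ := facets_subset hA.1
    refine mem_filter.2 ⟨hc.2 A hAΔ _ (erase_subset x A), notMem_erase x A, ?_⟩
    rwa [insert_erase hA.2]
  have hup : ∀ τ ∈ link Δ x, ∃ A ∈ (facets Δ).filter (fun A => x ∈ A), τ ⊆ A.erase x := by
    intro τ hτ
    rw [link, mem_filter] at hτ
    obtain ⟨A, hA, hxτA⟩ := exists_facet hτ.2.2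
    have hxA : x ∈ A := hxτA (mem_insert_self x τ)
    refine ⟨A, mem_filter.2 ⟨hA, hxA⟩, subset_erase.2 ⟨?_, hτ.2.1⟩⟩
    exact (subset_insert x τ).trans hxτA
  ext σ
  constructor
  · intro hσ
    rw [mem_facets] at hσ
    obtain ⟨A, hA, hσA⟩ := hup σ hσ.1
    have := hσ.2 _ (hmemL A hA) hσA
    rw [this]
    exact mem_image_of_mem _ hA
  · intro hσ
    obtain ⟨A, hA, rfl⟩ := mem_image.1 hσ
    refine mem_facets.2 ⟨hmemL A hA, ?_⟩
    intro τ hτ hsub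
    obtain ⟨A', hA', hτA'⟩ := hup τ hτ
    rw [mem_filter] at hA hA'
    apply eq_of_subset_of_card_le hsub
    have h1 : (A'.erase x).card = d := by
      rw [card_erase_of_mem hA'.2, hp A' hA'.1]; omega
    have h2 : (A.erase x).card = d := by
      rw [card_erase_of_mem hA.2, hp A hA.1]; omega
    rw [h2, ← h1]
    exact card_le_card hτA'

lemma link_isComplex (hc : IsComplex Δ) (hx : {x} ∈ Δ) : IsComplex (link Δ x) := by
  constructor
  · have hempty : ∅ ∈ Δ := hc.2 _ hx _ (empty_subset _)
    exact ⟨∅, mem_filter.2 ⟨hempty, notMem_empty x, by simpa using hx⟩⟩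
  · rintro σ hσ τ hτσ
    rw [link, mem_filter] at hσ ⊢
    exact ⟨hc.2 _ hσ.1 _ hτσ, fun hxτ => hσ.2.1 (hτσ hxτ),
      hc.2 _ hσ.2.2 _ (insert_subset_insert x hτσ)⟩

lemma link_filter (hc : IsComplex Δ) (hp : IsPureDim Δ d) (hd : 0 < d) :
    (link Δ x).filter (fun σ => σ.card = d - 1)
      = ∂ (((facets Δ).filter fun A => x ∈ A).image fun A => A.erase x) := by
  set L := ((facets Δ).filter fun A => x ∈ A).image fun A => A.erase x with hL
  have hLlink : L ⊆ link Δ x := by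
    intro c hcL
    obtain ⟨A, hA, rfl⟩ := mem_image.1 hcL
    rw [mem_filter] at hA
    have hAΔ := facets_subset hA.1
    refine mem_filter.2 ⟨hc.2 A hAΔ _ (erase_subset x A), notMem_erase x A, ?_⟩
    rwa [insert_erase hA.2]
  have hLcard : ∀ c ∈ L, c.card = d := by
    intro c hcL
    obtain ⟨A, hA, rfl⟩ := mem_image.1 hcL
    rw [mem_filter] at hA
    rw [card_erase_of_mem hA.2, hp A hA.1]; omega
  ext τ
  rw [mem_filter]
  constructor
  · rintro ⟨hτ, hcard⟩
    have hτ' := hτ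
    rw [link, mem_filter] at hτ'
    obtain ⟨A, hA, hxτA⟩ := exists_facet hτ'.2.2
    have hxA : x ∈ A := hxτA (mem_insert_self x τ)
    have hsub : τ ⊆ A.erase x :=
      subset_erase.2 ⟨(subset_insert x τ).trans hxτA, hτ'.2.1⟩
    refine mem_shadow_iff_exists_mem_card_add_one.2
      ⟨A.erase x, mem_image_of_mem _ (mem_filter.2 ⟨hA, hxA⟩), hsub, ?_⟩
    rw [card_erase_of_mem hxA, hp A hA, hcard]
    omega
  · intro hτ
    obtain ⟨c, hcL, hτc, hcard⟩ := mem_shadow_iff_exists_mem_card_add_one.1 hτ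
    have hclink := hLlink hcL
    rw [link, mem_filter] at hclink
    have hτΔ : τ ∈ Δ := hc.2 _ hclink.1 _ hτc
    have hcd := hLcard c hcL
    refine ⟨mem_filter.2 ⟨hτΔ, fun hxτ => hclink.2.1 (hτc hxτ), ?_⟩, by omega⟩
    exact hc.2 _ hclink.2.2 _ (insert_subset_insert x hτc)

lemma card_linkFacets :
    ((((facets Δ).filter fun A => x ∈ A).image fun A => A.erase x)).card
      = ((facets Δ).filter fun A => x ∈ A).card := by
  apply card_image_of_injOn
  intro A₁ h₁ A₂ h₂ he
  rw [mem_coe, mem_filter] at h₁ h₂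
  have := congrArg (insert x) he
  rwa [insert_erase h₁.2, insert_erase h₂.2] at this

/-- Link extremality from the shadow-count equality. -/
lemma link_extremal (hc : IsComplex Δ) (hp : IsPureDim Δ d) (hd : 0 < d) (hx : {x} ∈ Δ)
    (heq : (∂ (((facets Δ).filter fun A => x ∈ A).image fun A => A.erase x)).card
      = minShadow ((facets Δ).filter fun A => x ∈ A).card d) :
    IsExtremal (link Δ x) (d - 1) := by
  refine ⟨link_isComplex hc hx, ?_, ?_⟩
  · intro σ hσ
    rw [facets_link hc hp] at hσ
    obtain ⟨A, hA, rfl⟩ := mem_image.1 hσ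
    rw [mem_filter] at hA
    rw [card_erase_of_mem hA.2, hp A hA.1]
    omega
  · rw [link_filter hc hp hd, facets_link hc hp, card_linkFacets, heq]
    congr 1
    omega

lemma deletion_isComplex (hc : IsComplex Δ) : IsComplex (deletion Δ x) := by
  constructor
  · obtain ⟨σ, hσ⟩ := hc.1
    have hempty : ∅ ∈ Δ := hc.2 _ hσ _ (empty_subset _)
    exact ⟨∅, mem_filter.2 ⟨hempty, notMem_empty x⟩⟩
  · rintro σ hσ τ hτσ
    rw [deletion, mem_filter] at hσ ⊢
    exact ⟨hc.2 _ hσ.1 _ hτσ, fun hxτ => hσ.2 (hτσ hxτ)⟩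

lemma cone_deletion_eq_link (hc : IsComplex Δ) (hp : IsPureDim Δ d)
    (hcone : ∀ A ∈ facets Δ, x ∈ A) : deletion Δ x = link Δ x := by
  ext τ
  rw [deletion, link, mem_filter, mem_filter]
  constructor
  · rintro ⟨hτ, hxτ⟩
    obtain ⟨A, hA, hτA⟩ := exists_facet hτ
    refine ⟨hτ, hxτ, hc.2 A (facets_subset hA) _ ?_⟩
    exact insert_subset (hcone A hA) hτA
  · rintro ⟨hτ, hxτ, _⟩
    exact ⟨hτ, hxτ⟩

/-- The facets of the deletion, assuming purity of the deletion (`hLsub`). -/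
lemma facets_deletion (hc : IsComplex Δ) (hp : IsPureDim Δ d)
    (hLsub : (((facets Δ).filter fun A => x ∈ A).image fun A => A.erase x)
      ⊆ ∂ ((facets Δ).filter fun A => x ∉ A)) :
    facets (deletion Δ x) = (facets Δ).filter fun A => x ∉ A := by
  have hmem : ∀ B ∈ (facets Δ).filter (fun A => x ∉ A), B ∈ deletion Δ x := by
    intro B hB
    rw [mem_filter] at hB
    exact mem_filter.2 ⟨facets_subset hB.1, hB.2⟩
  ext σ
  constructor
  · intro hσ
    rw [mem_facets] at hσ
    have hσ' := hσ.1
    rw [deletion, mem_filter] at hσ'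
    obtain ⟨A, hA, hσA⟩ := exists_facet hσ'.1
    by_cases hxA : x ∈ A
    · have hσAx : σ ⊆ A.erase x := subset_erase.2 ⟨hσA, hσ'.2⟩
      have : A.erase x ∈ ∂ ((facets Δ).filter fun A => x ∉ A) :=
        hLsub (mem_image_of_mem _ (mem_filter.2 ⟨hA, hxA⟩))
      obtain ⟨B, hB, hAxB⟩ := exists_subset_of_mem_shadow this
      have hσB : σ = B := hσ.2 B (hmem B hB) (hσAx.trans hAxB)
      rw [hσB]; exact hB
    · have : σ = A := hσ.2 A (hmem A (mem_filter.2 ⟨hA, hxA⟩)) hσA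
      rw [this]; exact mem_filter.2 ⟨hA, hxA⟩
  · intro hσ
    refine mem_facets.2 ⟨hmem σ hσ, ?_⟩
    intro τ hτ hστ
    rw [mem_filter] at hσ
    rw [deletion, mem_filter] at hτ
    exact (mem_facets.1 hσ.1).2 τ hτ.1 hστ

lemma deletion_filter (hc : IsComplex Δ) (hp : IsPureDim Δ d)
    (hLsub : (((facets Δ).filter fun A => x ∈ A).image fun A => A.erase x)
      ⊆ ∂ ((facets Δ).filter fun A => x ∉ A)) :
    (deletion Δ x).filter (fun σ => σ.card = d)
      = ∂ ((facets Δ).filter fun A => x ∉ A) := by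
  ext τ
  rw [mem_filter]
  constructor
  · rintro ⟨hτ, hcard⟩
    rw [deletion, mem_filter] at hτ
    obtain ⟨A, hA, hτA⟩ := exists_facet hτ.1
    by_cases hxA : x ∈ A
    · have hτAx : τ ⊆ A.erase x := subset_erase.2 ⟨hτA, hτ.2⟩
      have hAx : (A.erase x).card = d := by rw [card_erase_of_mem hxA, hp A hA]; omega
      have : τ = A.erase x := eq_of_subset_of_card_le hτAx (by omega)
      rw [this]
      exact hLsub (mem_image_of_mem _ (mem_filter.2 ⟨hA, hxA⟩))
    · refine mem_shadow_iff_exists_mem_card_add_one.2 ⟨A, mem_filter.2 ⟨hA, hxA⟩, hτA, ?_⟩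
      rw [hp A hA, hcard]
  · intro hτ
    obtain ⟨B, hB, hτB, hcard⟩ := mem_shadow_iff_exists_mem_card_add_one.1 hτ
    rw [mem_filter] at hB
    have hBd := hp B hB.1
    refine ⟨mem_filter.2 ⟨hc.2 B (facets_subset hB.1) τ hτB, fun hxτ => hB.2 (hτB hxτ)⟩, ?_⟩
    omega

lemma deletion_extremal (hc : IsComplex Δ) (hp : IsPureDim Δ d)
    (hLsub : (((facets Δ).filter fun A => x ∈ A).image fun A => A.erase x)
      ⊆ ∂ ((facets Δ).filter fun A => x ∉ A))
    (heq : (∂ ((facets Δ).filter fun A => x ∉ A)).card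
      = minShadow ((facets Δ).filter fun A => x ∉ A).card (d + 1)) :
    IsExtremal (deletion Δ x) d := by
  refine ⟨deletion_isComplex hc, ?_, ?_⟩
  · intro σ hσ
    rw [facets_deletion hc hp hLsub, mem_filter] at hσ
    exact hp σ hσ.1
  · rw [deletion_filter hc hp hLsub, facets_deletion hc hp hLsub, heq]

end
end Lem22

/-- **Lemma 2.2.** If `Δ` is an extremal simplicial complex of positive dimension,
then there exists a vertex `x` of `Δ` such that both the link of `x` and the
deletion of `x` are (pure and) extremal. -/
theorem lemma_two_two (Δ : Finset (Finset ℕ)) (d : ℕ) (hd : 0 < d)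
    (h : IsExtremal Δ d) :
    ∃ x, {x} ∈ Δ ∧ (∃ d', IsExtremal (link Δ x) d') ∧
      (∃ d'', IsExtremal (deletion Δ x) d'') := by
  classical
  obtain ⟨hc, hp, hcount⟩ := h
  set F := facets Δ with hF
  set n := F.card with hn
  have hsF : ∀ A ∈ F, A.card = d + 1 := hp
  set W := F.sup id with hW
  have hvert : ∀ v ∈ W, {v} ∈ Δ := by
    intro v hv
    obtain ⟨A, hA, hvA⟩ := mem_sup.1 hv
    exact hc.2 A (Lem22.facets_subset hA) _ (singleton_subset_iff.2 hvA)
  have hFne : F.Nonempty := by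
    obtain ⟨σ, hσ⟩ := hc.1
    obtain ⟨A, hA, -⟩ := Lem22.exists_facet hσ
    exact ⟨A, hA⟩
  have hFsh : (∂ F).card = minShadow n (d + 1) := by
    rw [← Lem22.faces_eq_shadow_facets hc hp]
    exact hcount
  -- The key equalities, for every `x`.
  have key : ∀ x : ℕ,
      (∂ ((F.filter fun A => x ∈ A).image fun A => A.erase x)).card
        = minShadow (F.filter fun A => x ∈ A).card d
      ∧ (((F.filter fun A => x ∈ A).image fun A => A.erase x)
          ∪ ∂ (F.filter fun A => x ∉ A)).card
        = max (F.filter fun A => x ∈ A).card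
            (minShadow (n - (F.filter fun A => x ∈ A).card) (d + 1)) := by
    intro x
    set Fx := F.filter fun A => x ∈ A with hFx
    set F0 := F.filter fun A => x ∉ A with hF0
    set L := Fx.image fun A => A.erase x with hLdef
    have hsplitc : Fx.card + F0.card = n :=
      card_filter_add_card_filter_not (s := F) (p := fun A => x ∈ A)
    have hLsized : ∀ c ∈ L, c.card = d := by
      intro c hcL
      obtain ⟨A, hA, rfl⟩ := mem_image.1 hcL
      rw [mem_filter] at hA
      rw [card_erase_of_mem hA.2, hsF A hA.1]; omega
    have hLcard : L.card = Fx.card := by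
      have h' := Lem22.card_linkFacets (Δ := Δ) (x := x)
      rw [← hF, ← hFx, ← hLdef] at h'
      exact h'
    have hF0sized : ∀ B ∈ F0, B.card = d + 1 := by
      intro B hB; exact hsF B (mem_filter.1 hB).1
    have low1 : minShadow Fx.card d ≤ (∂ L).card := by
      have := KKAux.minShadow_le hLsized
      rwa [hLcard] at this
    have low2 : minShadow F0.card (d + 1) ≤ (∂ F0).card := KKAux.minShadow_le hF0sized
    have hF0card : F0.card = n - Fx.card := by omega
    have hux : Fx.card ≤ (L ∪ ∂ F0).card := by
      rw [← hLcard]; exact card_le_card subset_union_left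
    have huy : minShadow (n - Fx.card) (d + 1) ≤ (L ∪ ∂ F0).card := by
      rw [← hF0card]
      exact low2.trans (card_le_card subset_union_right)
    have hmax : max Fx.card (minShadow (n - Fx.card) (d + 1)) ≤ (L ∪ ∂ F0).card :=
      max_le hux huy
    have decomp := Lem22.shadow_card_decomp x F
    rw [hFsh] at decomp
    rw [← hFx, ← hF0, ← hLdef] at decomp
    have splitIneq := KKAux.minShadow_split (n := n) (q := Fx.card) (k := d) hd
      (card_filter_le F _)
    constructor
    · omega
    · omega
  by_cases hgood : ∃ x ∈ W, (F.filter fun A => x ∈ A) = F ∨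
      (F.filter fun A => x ∈ A).card ≤ minShadow (n - (F.filter fun A => x ∈ A).card) (d + 1)
  · -- A good vertex exists; build the link and deletion.
    obtain ⟨x, hxW, hgx⟩ := hgood
    have hxΔ : {x} ∈ Δ := hvert x hxW
    obtain ⟨eq1, eq2⟩ := key x
    have hlink : IsExtremal (link Δ x) (d - 1) := Lem22.link_extremal hc hp hd hxΔ eq1
    refine ⟨x, hxΔ, ⟨d - 1, hlink⟩, ?_⟩
    by_cases hcone : (F.filter fun A => x ∈ A) = F
    · refine ⟨d - 1, ?_⟩
      have hcone' : ∀ A ∈ facets Δ, x ∈ A := by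
        intro A hA
        have : A ∈ F.filter (fun A => x ∈ A) := by rw [hcone]; exact hA
        exact (mem_filter.1 this).2
      rw [Lem22.cone_deletion_eq_link hc hp hcone']
      exact hlink
    · have hple : (F.filter fun A => x ∈ A).card
          ≤ minShadow (n - (F.filter fun A => x ∈ A).card) (d + 1) :=
        hgx.resolve_left hcone
      set Fx := F.filter fun A => x ∈ A with hFx
      set F0 := F.filter fun A => x ∉ A with hF0
      set L := Fx.image fun A => A.erase x with hLdef
      have hsplitc : Fx.card + F0.card = n :=
        card_filter_add_card_filter_not (s := F) (p := fun A => x ∈ A)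
      have hF0card : F0.card = n - Fx.card := by omega
      have hF0sized : ∀ B ∈ F0, B.card = d + 1 := by
        intro B hB; exact hsF B (mem_filter.1 hB).1
      have low2 : minShadow F0.card (d + 1) ≤ (∂ F0).card := KKAux.minShadow_le hF0sized
      rw [max_eq_right hple] at eq2
      have hunion_eq : ∂ F0 = L ∪ ∂ F0 := by
        refine eq_of_subset_of_card_le subset_union_right ?_
        rw [eq2, ← hF0card]
        exact low2
      have hLsub : L ⊆ ∂ F0 := by
        intro c hcL
        rw [hunion_eq]
        exact mem_union_left _ hcL
      have heq2' : (∂ F0).card = minShadow F0.card (d + 1) := by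
        rw [hF0card, ← eq2]
        exact congrArg card hunion_eq
      exact ⟨d, Lem22.deletion_extremal hc hp hLsub heq2'⟩
  · -- No good vertex: derive a contradiction.
    exfalso
    push_neg at hgood
    -- the swap property
    have hswap : ∀ v ∈ W, ∀ B ∈ F, v ∉ B → ∀ y ∈ B, insert v (B.erase y) ∈ F := by
      intro v hv B hB hvB y hyB
      obtain ⟨eq1, eq2⟩ := key v
      obtain ⟨hne, hlt⟩ := hgood v hv
      set Fv := F.filter fun A => v ∈ A with hFv
      set F0 := F.filter fun A => v ∉ A with hF0
      set L := Fv.image fun A => A.erase v with hLdef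
      rw [max_eq_left hlt.le] at eq2
      have hLcard : L.card = Fv.card := by
        have h' := Lem22.card_linkFacets (Δ := Δ) (x := v)
        rw [← hF, ← hFv, ← hLdef] at h'
        exact h'
      have hLeq : L = L ∪ ∂ F0 := by
        refine eq_of_subset_of_card_le subset_union_left ?_
        rw [eq2, hLcard]
      have hsub0 : ∂ F0 ⊆ L := by
        intro t ht
        rw [hLeq]
        exact mem_union_right _ ht
      have hBy : B.erase y ∈ ∂ F0 := erase_mem_shadow (mem_filter.2 ⟨hB, hvB⟩) hyB
      obtain ⟨A, hA, hAe⟩ := mem_image.1 (hsub0 hBy)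
      rw [mem_filter] at hA
      rw [← hAe, insert_erase hA.2]
      exact hA.1
    -- completeness by repeated swapping
    have complete : ∀ m : ℕ, ∀ B ∈ F, ∀ S : Finset ℕ, S ⊆ W → S.card = d + 1 →
        (S \ B).card = m → S ∈ F := by
      intro m
      induction m with
      | zero =>
        intro B hB S hSW hScard hm
        have hSB : S ⊆ B := sdiff_eq_empty_iff_subset.1 (card_eq_zero.1 hm)
        have : S = B := eq_of_subset_of_card_le hSB (by rw [hsF B hB, hScard])
        rw [this]; exact hB
      | succ m ih =>
        intro B hB S hSW hScard hm
        obtain ⟨v, hv⟩ := card_pos.1 (show 0 < (S \ B).card by omega)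
        rw [mem_sdiff] at hv
        have hBS : (B \ S).card = (S \ B).card :=
          card_sdiff_comm (by rw [hsF B hB, hScard])
        obtain ⟨y, hy⟩ := card_pos.1 (show 0 < (B \ S).card by omega)
        rw [mem_sdiff] at hy
        have hB' : insert v (B.erase y) ∈ F := hswap v (hSW hv.1) B hB hv.2 y hy.1
        refine ih _ hB' S hSW hScard ?_
        have hset : S \ insert v (B.erase y) = (S \ B).erase v := by
          ext u
          simp only [mem_sdiff, mem_insert, mem_erase, not_or]
          constructor
          · rintro ⟨huS, hnev, hnB⟩
            refine ⟨hnev, huS, fun huB => ?_⟩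
            have huy : u ≠ y := fun e => hy.2 (e ▸ huS)
            exact hnB ⟨huy, huB⟩
          · rintro ⟨hnev, huS, hnB⟩
            exact ⟨huS, hnev, fun hcn => hnB hcn.2⟩
        rw [hset, card_erase_of_mem (mem_sdiff.2 ⟨hv.1, hv.2⟩), hm]; omega
    obtain ⟨A₀, hA₀⟩ := hFne
    obtain ⟨x, hxA₀⟩ := card_pos.1 (show 0 < A₀.card by rw [hsF A₀ hA₀]; omega)
    have hxW : x ∈ W := mem_sup.2 ⟨A₀, hA₀, hxA₀⟩
    have hcomplete : ∀ S : Finset ℕ, S ⊆ W → S.card = d + 1 → S ∈ F :=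
      fun S h1 h2 => complete _ A₀ hA₀ S h1 h2 rfl
    have hFW : ∀ A ∈ F, A ⊆ W := fun A hA a ha => mem_sup.2 ⟨A, hA, ha⟩
    have hF0eq : F.filter (fun A => x ∉ A) = powersetCard (d + 1) (W.erase x) := by
      ext B
      rw [mem_filter, mem_powersetCard, subset_erase]
      constructor
      · rintro ⟨hB, hxB⟩
        exact ⟨⟨hFW B hB, hxB⟩, hsF B hB⟩
      · rintro ⟨⟨hBW, hxB⟩, hcard⟩
        exact ⟨hcomplete B hBW hcard, hxB⟩
    have hFxeq : F.filter (fun A => x ∈ A) = (powersetCard d (W.erase x)).image (insert x) := by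
      ext A
      rw [mem_filter, mem_image]
      constructor
      · rintro ⟨hA, hxA⟩
        refine ⟨A.erase x, ?_, insert_erase hxA⟩
        rw [mem_powersetCard, subset_erase]
        refine ⟨⟨(erase_subset x A).trans (hFW A hA), notMem_erase x A⟩, ?_⟩
        rw [card_erase_of_mem hxA, hsF A hA]; omega
      · rintro ⟨S, hS, rfl⟩
        rw [mem_powersetCard, subset_erase] at hS
        have hxS : x ∉ S := hS.1.2
        have hsubW : insert x S ⊆ W := insert_subset hxW hS.1.1
        exact ⟨hcomplete _ hsubW (by rw [card_insert_of_notMem hxS, hS.2]),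
          mem_insert_self x S⟩
    have hcard0 : (F.filter fun A => x ∉ A).card = Nat.choose (W.card - 1) (d + 1) := by
      rw [hF0eq, card_powersetCard, card_erase_of_mem hxW]
    have hcardx : (F.filter fun A => x ∈ A).card = Nat.choose (W.card - 1) d := by
      rw [hFxeq, card_image_of_injOn, card_powersetCard, card_erase_of_mem hxW]
      intro S₁ h₁ S₂ h₂ he
      rw [mem_coe, mem_powersetCard, subset_erase] at h₁ h₂
      have := congrArg (fun s => s.erase x) he
      simpa [erase_insert h₁.1.2, erase_insert h₂.1.2] using this
    obtain ⟨hne, hlt⟩ := hgood x hxW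
    have hsplitc : (F.filter fun A => x ∈ A).card + (F.filter fun A => x ∉ A).card = n :=
      card_filter_add_card_filter_not (s := F) (p := fun A => x ∈ A)
    have hF0pos : 0 < (F.filter fun A => x ∉ A).card := by
      rcases (F.filter fun A => x ∉ A).eq_empty_or_nonempty with he | hne0
      · exfalso
        apply hne
        apply eq_of_subset_of_card_le (filter_subset _ _)
        have : (F.filter fun A => x ∉ A).card = 0 := by rw [he]; rfl
        omega
      · exact card_pos.2 hne0
    have hdW : d + 1 ≤ W.card - 1 := by
      by_contra hcon
      push_neg at hcon
      rw [hcard0, Nat.choose_eq_zero_of_lt hcon] at hF0pos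
      exact lt_irrefl 0 hF0pos
    have hlov := KKAux.choose_le_minShadow (k := d + 1) (m := W.card - 1) (by omega) hdW
    simp only [Nat.add_sub_cancel] at hlov
    have hnsub : n - (F.filter fun A => x ∈ A).card = (F.filter fun A => x ∉ A).card := by
      omega
    rw [hnsub, hcard0, hcardx] at hlt
    omega
end

section
/- (Kruskal–Katona) For positive integers n, k and any family U of n distinct k-element sets, |∂U| ≥ |∂S_k(n)|, where S_k(n) is the set of the first n k-element subsets of ℕ in the squashed order. -/
set_option maxHeartbeats 1000000
open Finset

/-- The squashed (colexicographic) order on finite subsets of `ℕ`: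
`A < B` iff `max (A ∖ B) < max (B ∖ A)`. -/
def SquashedLT (A B : Finset ℕ) : Prop :=
  (A \ B).max < (B \ A).max

/-- `S` is the family of the first `n` `k`-element subsets of `ℕ` in the squashed
order: it has `n` members, all of size `k`, and is downward closed in the squashed
order among `k`-element sets. -/
def IsSquashedInitSeg (k n : ℕ) (S : Finset (Finset ℕ)) : Prop :=
  S.card = n ∧ (∀ A ∈ S, A.card = k) ∧
  ∀ A ∈ S, ∀ B : Finset ℕ, B.card = k → SquashedLT B A → B ∈ S

/-- `S` is the family of the first `n` `k`-element subsets of `ℕ` not containing `i`,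
in the squashed order. -/
def IsSquashedInitSegAvoiding (i k n : ℕ) (S : Finset (Finset ℕ)) : Prop :=
  S.card = n ∧ (∀ A ∈ S, A.card = k ∧ i ∉ A) ∧
  ∀ A ∈ S, ∀ B : Finset ℕ, B.card = k → i ∉ B → SquashedLT B A → B ∈ S

lemma squashedLT_iff_toColex_lt {A B : Finset ℕ} :
    SquashedLT A B ↔ toColex A < toColex B := by
  rw [Colex.toColex_lt_toColex_iff_exists_forall_lt]
  constructor
  · intro h
    have hBA : (B \ A).Nonempty := by
      by_contra hne
      rw [not_nonempty_iff_eq_empty] at hne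
      simp only [SquashedLT, hne, Finset.max_empty] at h
      exact (not_lt_bot h)
    refine ⟨(B \ A).max' hBA, (mem_sdiff.1 ((B \ A).max'_mem hBA)).1,
      (mem_sdiff.1 ((B \ A).max'_mem hBA)).2, fun b hbA hbB => ?_⟩
    have h1 : (b : WithBot ℕ) ≤ (A \ B).max := Finset.le_max (mem_sdiff.2 ⟨hbA, hbB⟩)
    have h4 := h1.trans_lt h
    rw [← Finset.coe_max' hBA] at h4
    exact WithBot.coe_lt_coe.1 h4
  · rintro ⟨w, hwB, hwA, h⟩
    have h2 : (w : WithBot ℕ) ≤ (B \ A).max := Finset.le_max (mem_sdiff.2 ⟨hwB, hwA⟩)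
    refine lt_of_lt_of_le ?_ h2
    rcases (A \ B).eq_empty_or_nonempty with he | hne
    · simp only [he, Finset.max_empty]
      exact WithBot.bot_lt_coe w
    · rw [← Finset.coe_max' hne]
      have hm := mem_sdiff.1 ((A \ B).max'_mem hne)
      exact WithBot.coe_lt_coe.2 (h _ hm.1 hm.2)

lemma shadow_image_map {α β : Type*} [DecidableEq α] [DecidableEq β] (f : α ↪ β)
    (𝒜 : Finset (Finset α)) :
    Finset.shadow (𝒜.image (Finset.map f)) = (Finset.shadow 𝒜).image (Finset.map f) := by
  ext t
  simp only [Finset.mem_shadow_iff, Finset.mem_image]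
  constructor
  · rintro ⟨s', ⟨s, hs, rfl⟩, b, hb, rfl⟩
    rw [Finset.mem_map] at hb
    obtain ⟨a, ha, rfl⟩ := hb
    exact ⟨Finset.erase s a, ⟨s, hs, a, ha, rfl⟩, (Finset.map_erase f s a)⟩
  · rintro ⟨t', ⟨s, hs, a, ha, rfl⟩, rfl⟩
    exact ⟨s.map f, ⟨s, hs, rfl⟩, f a, Finset.mem_map_of_mem f ha,
      (Finset.map_erase f s a).symm⟩

/-- **Kruskal–Katona theorem.** For positive integers `n, k` and any family `U` of
`n` distinct `k`-element sets, `|∂U| ≥ |∂(S_k(n))|`, where `S_k(n)` is the family of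
the first `n` `k`-element subsets of `ℕ` in the squashed order. -/
theorem kruskal_katona (n k : ℕ) (hn : 0 < n) (hk : 0 < k)
    (U : Finset (Finset ℕ)) (hUn : U.card = n) (hUk : ∀ A ∈ U, A.card = k)
    (S : Finset (Finset ℕ)) (hS : IsSquashedInitSeg k n S) :
    (Finset.shadow S).card ≤ (Finset.shadow U).card := by
  classical
  obtain ⟨hSn, hSk, hSdown⟩ := hS
  -- choose a bound `N` on all elements appearing in `U ∪ S`
  set N : ℕ := (U ∪ S).sup (fun A => A.sup id) + 1 with hN
  have hbound : ∀ A ∈ U ∪ S, ∀ x ∈ A, x < N := by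
    intro A hA x hx
    have : A.sup id ≤ (U ∪ S).sup (fun A => A.sup id) := Finset.le_sup hA
    have hx' : x ≤ A.sup id := Finset.le_sup (f := id) hx
    omega
  -- transfer to `Fin N`
  let toFin : Finset ℕ → Finset (Fin N) := fun A => Finset.univ.filter fun i => (i : ℕ) ∈ A
  have hmap : ∀ A : Finset ℕ, (∀ x ∈ A, x < N) → (toFin A).map Fin.valEmbedding = A := by
    intro A hA
    ext x
    simp only [toFin, Finset.mem_map, Finset.mem_filter, Finset.mem_univ, true_and,
      Fin.valEmbedding_apply]
    constructor
    · rintro ⟨i, hi, rfl⟩; exact hi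
    · intro hx; exact ⟨⟨x, hA x hx⟩, hx, rfl⟩
  have hmap' : ∀ t : Finset (Fin N), toFin (t.map Fin.valEmbedding) = t := by
    intro t
    ext i
    simp [toFin, Fin.val_injective.eq_iff]
  let U' : Finset (Finset (Fin N)) := U.image toFin
  let S' : Finset (Finset (Fin N)) := S.image toFin
  have hUimg : U'.image (Finset.map Fin.valEmbedding) = U := by
    rw [Finset.image_image]
    have : ∀ A ∈ U, (Finset.map Fin.valEmbedding ∘ toFin) A = A := fun A hA =>
      hmap A (hbound A (Finset.mem_union_left _ hA))
    rw [Finset.image_congr (fun A hA => this A hA), Finset.image_id']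
  have hSimg : S'.image (Finset.map Fin.valEmbedding) = S := by
    rw [Finset.image_image]
    have : ∀ A ∈ S, (Finset.map Fin.valEmbedding ∘ toFin) A = A := fun A hA =>
      hmap A (hbound A (Finset.mem_union_right _ hA))
    rw [Finset.image_congr (fun A hA => this A hA), Finset.image_id']
  have hinj : Function.Injective (Finset.map (Fin.valEmbedding : Fin N ↪ ℕ)) :=
    Finset.map_injective _
  -- sizes
  have hU'card : U'.card = n := by
    rw [← hUn, ← hUimg]
    exact (Finset.card_image_of_injective _ hinj).symm
  have hS'card : S'.card = n := by
    rw [← hSn, ← hSimg]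
    exact (Finset.card_image_of_injective _ hinj).symm
  have hU'sized : (U' : Set (Finset (Fin N))).Sized k := by
    intro A hA
    simp only [U', Finset.coe_image, Set.mem_image, Finset.mem_coe] at hA
    obtain ⟨B, hB, rfl⟩ := hA
    calc #(toFin B) = #((toFin B).map Fin.valEmbedding) := (Finset.card_map _).symm
      _ = #B := by rw [hmap B (hbound B (Finset.mem_union_left _ hB))]
      _ = k := hUk B hB
  -- S' is an initial segment of colex on Fin N
  have hS'init : Colex.IsInitSeg S' k := by
    constructor
    · intro A hA
      simp only [S', Finset.coe_image, Set.mem_image, Finset.mem_coe] at hA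
      obtain ⟨B, hB, rfl⟩ := hA
      calc #(toFin B) = #((toFin B).map Fin.valEmbedding) := (Finset.card_map _).symm
        _ = #B := by rw [hmap B (hbound B (Finset.mem_union_right _ hB))]
        _ = k := hSk B hB
    · rintro s t hs ⟨hts, htk⟩
      simp only [S', Finset.mem_image] at hs ⊢
      obtain ⟨A, hA, rfl⟩ := hs
      have hAeq : (toFin A).map Fin.valEmbedding = A :=
        hmap A (hbound A (Finset.mem_union_right _ hA))
      have hlt : SquashedLT (t.map Fin.valEmbedding) A := by
        rw [squashedLT_iff_toColex_lt, ← hAeq]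
        simpa only [Finset.map_eq_image, Fin.valEmbedding_apply]
          using (Colex.toColex_image_lt_toColex_image
            (Fin.val_strictMono (n := N))).2 hts
      have hmem : t.map Fin.valEmbedding ∈ S :=
        hSdown A hA _ (by rw [Finset.card_map, htk]) hlt
      exact ⟨t.map Fin.valEmbedding, hmem, hmap' t⟩
  -- apply mathlib's Kruskal-Katona
  have hkk : (Finset.shadow S').card ≤ (Finset.shadow U').card :=
    Finset.kruskal_katona hU'sized (by rw [hU'card, hS'card]) hS'init
  -- transfer shadows back
  have h1 : (Finset.shadow S).card = (Finset.shadow S').card := by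
    rw [← hSimg, shadow_image_map, Finset.card_image_of_injective _ hinj]
  have h2 : (Finset.shadow U).card = (Finset.shadow U').card := by
    rw [← hUimg, shadow_image_map, Finset.card_image_of_injective _ hinj]
  rw [h1, h2]
  exact hkk
end

section
/- For positive integers n, k, the size of the shadow of the initial segment of the squashed order satisfies |∂S_k(n)| = δ_{k-1}(n) = C(a_k,k-1)+C(a_{k-1},k-2)+…+C(a_t,t-1), where n = C(a_k,k)+C(a_{k-1},k-1)+…+C(a_t,t) is the unique cascade representation of n with a_k > a_{k-1} > … > a_t ≥ t ≥ 1. -/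
open Finset

/-- `a`, on the interval `[t, k]`, gives the cascade (binomial) representation of `n`
with respect to `k`:  `n = C(a k, k) + C(a (k-1), k-1) + ⋯ + C(a t, t)` where
`a k > a (k-1) > ⋯ > a t ≥ t ≥ 1`. -/
def IsCascade (n k t : ℕ) (a : ℕ → ℕ) : Prop :=
  1 ≤ t ∧ t ≤ k ∧ t ≤ a t ∧ (∀ j, t ≤ j → j < k → a j < a (j + 1)) ∧
  n = ∑ j ∈ Finset.Icc t k, (a j).choose j

namespace SqAux

/-- The "tail" `{a (j+1), …, a k}`. -/
def tail (a : ℕ → ℕ) (k j : ℕ) : Finset ℕ := (Ioc j k).image a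

/-- The generic family. -/
def fam (a : ℕ → ℕ) (t k : ℕ) (c : ℕ → ℕ) : Finset (Finset ℕ) :=
  (Icc t k).biUnion fun j =>
    ((range (a j)).powersetCard (c j)).image fun A => A ∪ tail a k j

variable {a : ℕ → ℕ} {t k : ℕ}

lemma mono (htk : t ≤ k) (hta : t ≤ a t)
    (hm : ∀ j, t ≤ j → j < k → a j < a (j + 1))
    {i j : ℕ} (hti : t ≤ i) (hij : i < j) (hjk : j ≤ k) : a i < a j := by
  induction j with
  | zero => omega
  | succ m ih =>
    rcases Nat.lt_succ_iff_lt_or_eq.1 hij with h | h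
    · exact (ih h (by omega)).trans (hm m (by omega) (by omega))
    · subst h; exact hm i hti (by omega)

lemma le_self (htk : t ≤ k) (hta : t ≤ a t)
    (hm : ∀ j, t ≤ j → j < k → a j < a (j + 1))
    {j : ℕ} (htj : t ≤ j) (hjk : j ≤ k) : j ≤ a j := by
  induction j with
  | zero => omega
  | succ m ih =>
    by_cases h : t = m + 1
    · subst h; exact hta
    · have h1 := ih (by omega) (by omega)
      have h2 := hm m (by omega) (by omega)
      omega

lemma lt_of_mem_tail (htk : t ≤ k) (hta : t ≤ a t)
    (hm : ∀ j, t ≤ j → j < k → a j < a (j + 1))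
    {j x : ℕ} (htj : t ≤ j) (hx : x ∈ tail a k j) : a j < x := by
  simp only [tail, mem_image, mem_Ioc] at hx
  obtain ⟨m, ⟨hm1, hm2⟩, rfl⟩ := hx
  exact mono htk hta hm htj hm1 hm2

lemma tail_card (htk : t ≤ k) (hta : t ≤ a t)
    (hm : ∀ j, t ≤ j → j < k → a j < a (j + 1))
    {j : ℕ} (htj : t ≤ j) : (tail a k j).card = k - j := by
  rw [tail, card_image_of_injOn, Nat.card_Ioc]
  intro x hx y hy hxy
  simp only [mem_coe, mem_Ioc] at hx hy
  by_contra hne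
  rcases Nat.lt_or_ge x y with h | h
  · exact absurd hxy (ne_of_lt (mono htk hta hm (by omega) h hy.2))
  · have : y < x := by omega
    exact absurd hxy.symm (ne_of_lt (mono htk hta hm (by omega) this hx.2))

lemma disj_tail (htk : t ≤ k) (hta : t ≤ a t)
    (hm : ∀ j, t ≤ j → j < k → a j < a (j + 1))
    {j : ℕ} (htj : t ≤ j) {A : Finset ℕ} (hA : A ⊆ range (a j)) :
    Disjoint A (tail a k j) := by
  rw [disjoint_left]
  intro x hx hx'
  have h1 := mem_range.1 (hA hx)
  have h2 := lt_of_mem_tail htk hta hm htj hx'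
  omega

lemma union_tail_sdiff (htk : t ≤ k) (hta : t ≤ a t)
    (hm : ∀ j, t ≤ j → j < k → a j < a (j + 1))
    {j : ℕ} (htj : t ≤ j) {A : Finset ℕ} (hA : A ⊆ range (a j)) :
    (A ∪ tail a k j) \ tail a k j = A := by
  have hd := disj_tail htk hta hm htj hA
  ext x
  simp only [mem_sdiff, mem_union]
  constructor
  · rintro ⟨h1 | h1, h2⟩
    · exact h1
    · exact absurd h1 h2
  · intro hx
    exact ⟨Or.inl hx, fun hx' => (disjoint_left.1 hd hx hx')⟩

/-- The cardinality of the generic family. -/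
lemma card_fam (htk : t ≤ k) (hta : t ≤ a t)
    (hm : ∀ j, t ≤ j → j < k → a j < a (j + 1)) (c : ℕ → ℕ) :
    (fam a t k c).card = ∑ j ∈ Icc t k, (a j).choose (c j) := by
  rw [fam, card_biUnion]
  · refine Finset.sum_congr rfl fun j hj => ?_
    rw [mem_Icc] at hj
    rw [card_image_of_injOn, card_powersetCard, card_range]
    intro A hA B hB hAB
    simp only [mem_coe, mem_powersetCard] at hA hB
    have h1 := union_tail_sdiff htk hta hm hj.1 hA.1
    have h2 := union_tail_sdiff htk hta hm hj.1 hB.1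
    simp only at hAB
    rw [← h1, hAB, h2]
  · intro i hi j hj hij
    rw [mem_coe, mem_Icc] at hi hj
    simp only [Function.onFun]
    wlog hlt : i < j generalizing i j
    · exact (this hj hi hij.symm (by omega)).symm
    rw [disjoint_left]
    rintro B hB hB'
    simp only [mem_image, mem_powersetCard] at hB hB'
    obtain ⟨A, ⟨hA1, hA2⟩, rfl⟩ := hB
    obtain ⟨A', ⟨hA'1, hA'2⟩, hEq⟩ := hB'
    -- `a j` belongs to the `i`-piece but not to the `j`-piece.
    have haj : a j ∈ A ∪ tail a k i := by
      refine mem_union_right _ ?_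
      simp only [tail, mem_image, mem_Ioc]
      exact ⟨j, ⟨hlt, hj.2⟩, rfl⟩
    rw [← hEq] at haj
    rcases mem_union.1 haj with h | h
    · have := mem_range.1 (hA'1 h); omega
    · have := lt_of_mem_tail htk hta hm hj.1 h; omega

/-- Members of pieces: every element of `fam` with `c j = j + r - k`-type parameter. -/
lemma card_mem_fam (htk : t ≤ k) (hta : t ≤ a t)
    (hm : ∀ j, t ≤ j → j < k → a j < a (j + 1)) (c : ℕ → ℕ)
    {B : Finset ℕ} (hB : B ∈ fam a t k c) :
    ∃ j, t ≤ j ∧ j ≤ k ∧ B.card = c j + (k - j) := by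
  simp only [fam, mem_biUnion, mem_image, mem_powersetCard, mem_Icc] at hB
  obtain ⟨j, hj, A, ⟨hA1, hA2⟩, rfl⟩ := hB
  refine ⟨j, hj.1, hj.2, ?_⟩
  rw [card_union_of_disjoint (disj_tail htk hta hm hj.1 hA1), hA2,
    tail_card htk hta hm hj.1]

end SqAux

section Squashed

lemma exists_pivot {A B : Finset ℕ} (h : SquashedLT B A) :
    ∃ d, d ∈ A ∧ d ∉ B ∧ (∀ x ∈ A, x ∉ B → x ≤ d) ∧ ∀ x ∈ B, x ∉ A → x < d := by
  unfold SquashedLT at h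
  have hne : (A \ B).Nonempty := by
    by_contra hc
    rw [not_nonempty_iff_eq_empty.1 hc] at h
    simp at h
  set d := (A \ B).max' hne with hd
  have hmax : (A \ B).max = (d : WithBot ℕ) := (coe_max' hne).symm
  have hdm : d ∈ A \ B := max'_mem _ hne
  rw [mem_sdiff] at hdm
  refine ⟨d, hdm.1, hdm.2, ?_, ?_⟩
  · intro x hx hx'
    exact le_max' _ _ (mem_sdiff.2 ⟨hx, hx'⟩)
  · intro x hx hx'
    have h1 : (x : WithBot ℕ) ≤ (B \ A).max := le_max (mem_sdiff.2 ⟨hx, hx'⟩)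
    have h2 : (x : WithBot ℕ) < (d : WithBot ℕ) := lt_of_le_of_lt h1 (hmax ▸ h)
    exact_mod_cast h2

lemma squashed_total {A B : Finset ℕ} (hcard : A.card = B.card) (hne : A ≠ B) :
    SquashedLT A B ∨ SquashedLT B A := by
  have hAB : (A \ B).Nonempty := by
    rw [sdiff_nonempty]
    intro hsub
    exact hne (eq_of_subset_of_card_le hsub (le_of_eq hcard.symm))
  have hBA : (B \ A).Nonempty := by
    rw [sdiff_nonempty]
    intro hsub
    exact hne (eq_of_subset_of_card_le hsub (le_of_eq hcard)).symm
  set d1 := (A \ B).max' hAB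
  set d2 := (B \ A).max' hBA
  have h1 : (A \ B).max = (d1 : WithBot ℕ) := (coe_max' hAB).symm
  have h2 : (B \ A).max = (d2 : WithBot ℕ) := (coe_max' hBA).symm
  have hd1 := mem_sdiff.1 ((A \ B).max'_mem hAB)
  have hd2 := mem_sdiff.1 ((B \ A).max'_mem hBA)
  have hd : d1 ≠ d2 := by
    intro h
    exact hd1.2 (show d1 ∈ B from h ▸ hd2.1)
  rcases Nat.lt_or_ge d1 d2 with h | h
  · left; unfold SquashedLT; rw [h1, h2]; exact_mod_cast h
  · right; unfold SquashedLT; rw [h1, h2]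
    have : d2 < d1 := by omega
    exact_mod_cast this

end Squashed

namespace SqAux
variable {a : ℕ → ℕ} {t k : ℕ}

lemma mem_fam_of (htk : t ≤ k) (hta : t ≤ a t)
    (hm : ∀ j, t ≤ j → j < k → a j < a (j + 1)) (c : ℕ → ℕ)
    {j : ℕ} {B : Finset ℕ} (htj : t ≤ j) (hjk : j ≤ k)
    (hsub : tail a k j ⊆ B) (hran : B \ tail a k j ⊆ range (a j))
    (hcard : B.card = c j + (k - j)) : B ∈ fam a t k c := by
  simp only [fam, mem_biUnion, mem_image, mem_powersetCard, mem_Icc]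
  refine ⟨j, ⟨htj, hjk⟩, B \ tail a k j, ⟨hran, ?_⟩, ?_⟩
  · rw [card_sdiff_of_subset hsub, tail_card htk hta hm htj, hcard]
    omega
  · rw [sdiff_union_of_subset hsub]

lemma fam_closed (htk : t ≤ k) (hta : t ≤ a t)
    (hm : ∀ j, t ≤ j → j < k → a j < a (j + 1)) {c : ℕ → ℕ} {r : ℕ}
    (hcr : ∀ j, t ≤ j → j ≤ k → c j + (k - j) = r) (hck : ∀ j, t ≤ j → j ≤ k → c j ≤ a j)
    {A B : Finset ℕ} (hA : A ∈ fam a t k c) (hBcard : B.card = r)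
    (hlt : SquashedLT B A) : B ∈ fam a t k c := by
  simp only [fam, mem_biUnion, mem_image, mem_powersetCard, mem_Icc] at hA
  obtain ⟨j, ⟨htj, hjk⟩, A₀, ⟨hA₀r, hA₀c⟩, rfl⟩ := hA
  obtain ⟨d, hdA, hdB, hAle, hBlt⟩ := exists_pivot hlt
  -- every element strictly above d is in A iff in B
  have hup : ∀ x, d < x → ((x ∈ A₀ ∪ tail a k j) ↔ x ∈ B) := by
    intro x hx
    constructor
    · intro h
      by_contra h'
      exact absurd (hAle x h h') (by omega)
    · intro h
      by_contra h'
      exact absurd (hBlt x h h') (by omega)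
  rcases mem_union.1 hdA with hd0 | hdt
  · -- pivot in the bottom part: B is in piece j
    have hdlt : d < a j := mem_range.1 (hA₀r hd0)
    refine mem_fam_of htk hta hm c htj hjk ?_ ?_ (by rw [hBcard, hcr j htj hjk])
    · intro x hx
      have hgt : a j < x := lt_of_mem_tail htk hta hm htj hx
      exact (hup x (by omega)).1 (mem_union_right _ hx)
    · intro x hx
      rw [mem_sdiff] at hx
      rw [mem_range]
      by_contra hge
      have hxd : d < x := by omega
      rcases mem_union.1 ((hup x hxd).2 hx.1) with h | h
      · have := mem_range.1 (hA₀r h); omega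
      · exact hx.2 h
  · -- pivot is some a i in the tail: B is in piece i
    simp only [tail, mem_image, mem_Ioc] at hdt
    obtain ⟨i, ⟨hji, hik⟩, rfl⟩ := hdt
    have hti : t ≤ i := by omega
    refine mem_fam_of htk hta hm c hti hik ?_ ?_ (by rw [hBcard, hcr i hti hik])
    · intro x hx
      have hgt : a i < x := lt_of_mem_tail htk hta hm hti hx
      have hxj : x ∈ tail a k j := by
        simp only [tail, mem_image, mem_Ioc] at hx ⊢
        obtain ⟨m, hm', rfl⟩ := hx
        exact ⟨m, ⟨by omega, hm'.2⟩, rfl⟩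
      exact (hup x hgt).1 (mem_union_right _ hxj)
    · intro x hx
      rw [mem_sdiff] at hx
      rw [mem_range]
      by_contra hge
      have hxne : x ≠ a i := by
        intro h; rw [h] at hx; exact hdB hx.1
      have hxd : a i < x := by omega
      rcases mem_union.1 ((hup x hxd).2 hx.1) with h | h
      · have h1 := mem_range.1 (hA₀r h)
        have h2 : a j < a i := mono htk hta hm htj hji hik
        omega
      · simp only [tail, mem_image, mem_Ioc] at h
        obtain ⟨m, ⟨hjm, hmk⟩, rfl⟩ := h
        have hmi : i < m := by
          by_contra hle
          rcases Nat.lt_or_ge m i with h' | h'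
          · have := mono htk hta hm (by omega) h' hik; omega
          · have : m = i := by omega
            exact hxne (by rw [this])
        exact hx.2 (by simp only [tail, mem_image, mem_Ioc]; exact ⟨m, ⟨hmi, hmk⟩, rfl⟩)

end SqAux

namespace SqAux
variable {a : ℕ → ℕ} {t k : ℕ}

lemma shadow_fam (ht1 : 1 ≤ t) (htk : t ≤ k) (hta : t ≤ a t)
    (hm : ∀ j, t ≤ j → j < k → a j < a (j + 1)) :
    Finset.shadow (fam a t k (fun j => j)) = fam a t k (fun j => j - 1) := by
  ext B
  constructor
  · intro hB
    rw [mem_shadow_iff] at hB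
    obtain ⟨C, hC, x, hx, rfl⟩ := hB
    simp only [fam, mem_biUnion, mem_image, mem_powersetCard, mem_Icc] at hC
    obtain ⟨j, ⟨htj, hjk⟩, A₀, ⟨hA₀r, hA₀c⟩, rfl⟩ := hC
    have hcardC : (A₀ ∪ tail a k j).card = j + (k - j) := by
      rw [card_union_of_disjoint (disj_tail htk hta hm htj hA₀r), hA₀c,
        tail_card htk hta hm htj]
    rcases mem_union.1 hx with h0 | h0
    · -- erased an element of the bottom part
      have hxlt : x < a j := mem_range.1 (hA₀r h0)
      refine mem_fam_of htk hta hm _ htj hjk ?_ ?_ ?_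
      · intro y hy
        have : a j < y := lt_of_mem_tail htk hta hm htj hy
        exact mem_erase.2 ⟨by omega, mem_union_right _ hy⟩
      · intro y hy
        rw [mem_sdiff] at hy
        have hy1 := mem_of_mem_erase hy.1
        rcases mem_union.1 hy1 with h | h
        · exact hA₀r h
        · exact absurd h hy.2
      · rw [card_erase_of_mem hx, hcardC]
        omega
    · -- erased an element `a i` of the tail
      simp only [tail, mem_image, mem_Ioc] at h0
      obtain ⟨i, ⟨hji, hik⟩, rfl⟩ := h0
      have hti : t ≤ i := by omega
      have hajlt : a j < a i := mono htk hta hm htj hji hik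
      refine mem_fam_of htk hta hm _ hti hik ?_ ?_ ?_
      · intro y hy
        have hgt : a i < y := lt_of_mem_tail htk hta hm hti hy
        have hyj : y ∈ tail a k j := by
          simp only [tail, mem_image, mem_Ioc] at hy ⊢
          obtain ⟨m, hm', rfl⟩ := hy
          exact ⟨m, ⟨by omega, hm'.2⟩, rfl⟩
        exact mem_erase.2 ⟨by omega, mem_union_right _ hyj⟩
      · intro y hy
        rw [mem_sdiff] at hy
        have hyne := ne_of_mem_erase hy.1
        have hy1 := mem_of_mem_erase hy.1
        rw [mem_range]
        rcases mem_union.1 hy1 with h | h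
        · have := mem_range.1 (hA₀r h); omega
        · simp only [tail, mem_image, mem_Ioc] at h
          obtain ⟨m, ⟨hjm, hmk⟩, rfl⟩ := h
          have hmi : m < i := by
            rcases Nat.lt_trichotomy m i with h' | h' | h'
            · exact h'
            · exact absurd (by rw [h']) hyne
            · exact absurd (by
                simp only [tail, mem_image, mem_Ioc]
                exact ⟨m, ⟨h', hmk⟩, rfl⟩) hy.2
          exact mono htk hta hm (by omega) hmi hik
      · rw [card_erase_of_mem hx, hcardC]
        omega
  · intro hB
    simp only [fam, mem_biUnion, mem_image, mem_powersetCard, mem_Icc] at hB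
    obtain ⟨j, ⟨htj, hjk⟩, B₀, ⟨hB₀r, hB₀c⟩, rfl⟩ := hB
    rw [mem_shadow_iff_insert_mem]
    have hja : j ≤ a j := le_self htk hta hm htj hjk
    have hss : B₀ ⊂ range (a j) := by
      refine hB₀r.ssubset_of_ne ?_
      intro h
      rw [h, card_range] at hB₀c
      omega
    obtain ⟨x, hxr, hxB₀⟩ := exists_of_ssubset hss
    have hxlt : x < a j := mem_range.1 hxr
    refine ⟨x, ?_, ?_⟩
    · intro hx
      rcases mem_union.1 hx with h | h
      · exact hxB₀ h
      · have := lt_of_mem_tail htk hta hm htj h; omega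
    · rw [← insert_union]
      simp only [fam, mem_biUnion, mem_image, mem_powersetCard, mem_Icc]
      refine ⟨j, ⟨htj, hjk⟩, insert x B₀, ⟨insert_subset hxr hB₀r, ?_⟩, rfl⟩
      rw [card_insert_of_notMem hxB₀, hB₀c]
      omega

end SqAux

lemma initseg_unique {k n : ℕ} {S S' : Finset (Finset ℕ)}
    (h : IsSquashedInitSeg k n S) (h' : IsSquashedInitSeg k n S') : S = S' := by
  obtain ⟨hc, hk, hcl⟩ := h
  obtain ⟨hc', hk', hcl'⟩ := h'
  refine eq_of_subset_of_card_le (fun A hA => ?_) (by rw [hc, hc'])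
  by_contra hA'
  have hsub : S' ⊆ S := by
    intro B hB
    have hne : B ≠ A := fun h => hA' (h ▸ hB)
    rcases squashed_total (by rw [hk' B hB, hk A hA]) hne with h | h
    · exact hcl A hA B (hk' B hB) h
    · exact absurd (hcl' B hB A (hk A hA) h) hA'
  have : S' = S := eq_of_subset_of_card_le hsub (by rw [hc, hc'])
  exact hA' (this ▸ hA)

namespace SqAux
variable {a : ℕ → ℕ} {t k : ℕ}

lemma fam_initseg (ht1 : 1 ≤ t) (htk : t ≤ k) (hta : t ≤ a t)
    (hm : ∀ j, t ≤ j → j < k → a j < a (j + 1)) :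
    IsSquashedInitSeg k (∑ j ∈ Icc t k, (a j).choose j) (fam a t k (fun j => j)) := by
  refine ⟨card_fam htk hta hm _, ?_, ?_⟩
  · intro A hA
    obtain ⟨j, htj, hjk, hcard⟩ := card_mem_fam htk hta hm _ hA
    rw [hcard]; omega
  · intro A hA B hBk hlt
    exact fam_closed htk hta hm (fun j htj hjk => by omega)
      (fun j htj hjk => le_self htk hta hm htj hjk) hA hBk hlt

end SqAux

/-- The size of the shadow of the initial segment `S_k(n)` of the squashed order is
`δ_{k-1}(n)`, computed from the cascade representation of `n`. -/
theorem card_shadow_initSeg (n k : ℕ) (hn : 0 < n) (hk : 0 < k)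
    (S : Finset (Finset ℕ)) (hS : IsSquashedInitSeg k n S)
    (t : ℕ) (a : ℕ → ℕ) (hc : IsCascade n k t a) :
    (Finset.shadow S).card = ∑ j ∈ Finset.Icc t k, (a j).choose (j - 1) := by
  obtain ⟨ht1, htk, hta, hm, hsum⟩ := hc
  have hF : IsSquashedInitSeg k n (SqAux.fam a t k (fun j => j)) := by
    rw [hsum]
    exact SqAux.fam_initseg ht1 htk hta hm
  have hSF : S = SqAux.fam a t k (fun j => j) := initseg_unique hS hF
  rw [hSF, SqAux.shadow_fam ht1 htk hta hm, SqAux.card_fam htk hta hm]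
end

section
/- The minimum of |∂U| over all families U of n distinct k-element sets equals δ_{k-1}(n) (with n, k positive integers). -/
open Finset

namespace KKAux
variable {α β : Type*} [DecidableEq α] [DecidableEq β]

lemma shadow_union' (𝒜 ℬ : Finset (Finset α)) : (𝒜 ∪ ℬ).shadow = 𝒜.shadow ∪ ℬ.shadow := by
  ext u
  simp only [mem_union, mem_shadow_iff]
  constructor
  · rintro ⟨s, hs | hs, h⟩
    exacts [Or.inl ⟨s, hs, h⟩, Or.inr ⟨s, hs, h⟩]
  · rintro (⟨s, hs, h⟩ | ⟨s, hs, h⟩)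
    exacts [⟨s, Or.inl hs, h⟩, ⟨s, Or.inr hs, h⟩]

lemma shadow_powersetCard (s : Finset α) (j : ℕ) (h : j + 1 ≤ s.card) :
    (Finset.powersetCard (j + 1) s).shadow = Finset.powersetCard j s := by
  ext u
  simp only [mem_shadow_iff_exists_mem_card_add_one, mem_powersetCard]
  constructor
  · rintro ⟨v, ⟨hvs, hvc⟩, huv, hc⟩
    exact ⟨huv.trans hvs, by omega⟩
  · rintro ⟨hus, hc⟩
    obtain ⟨v, huv, hvs, hvc⟩ := exists_subsuperset_card_eq (n := j + 1) hus (by omega) (by omega)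
    exact ⟨v, ⟨hvs, hvc⟩, huv, by omega⟩

lemma shadow_image_insert (x : α) (G : Finset (Finset α)) (hx : ∀ A ∈ G, x ∉ A) :
    (G.image (insert x)).shadow = G ∪ G.shadow.image (insert x) := by
  ext u
  simp only [mem_union, mem_shadow_iff, mem_image]
  constructor
  · rintro ⟨s, ⟨A, hA, rfl⟩, y, hy, rfl⟩
    rcases eq_or_ne y x with rfl | hyx
    · left; rwa [erase_insert (hx A hA)]
    · right
      have hyA : y ∈ A := by
        rcases mem_insert.1 hy with h | h
        · exact absurd h hyx
        · exact h
      exact ⟨A.erase y, ⟨A, hA, y, hyA, rfl⟩, (erase_insert_of_ne (Ne.symm hyx) ..).symm⟩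
  · rintro (hu | ⟨B, ⟨A, hA, y, hy, rfl⟩, rfl⟩)
    · exact ⟨insert x u, ⟨u, hu, rfl⟩, x, mem_insert_self _ _, erase_insert (hx u hu)⟩
    · refine ⟨insert x A, ⟨A, hA, rfl⟩, y, mem_insert_of_mem hy, ?_⟩
      exact erase_insert_of_ne (fun h => hx A hA (h ▸ hy)) ..

lemma card_image_insert (x : α) (G : Finset (Finset α)) (hx : ∀ A ∈ G, x ∉ A) :
    (G.image (insert x)).card = G.card :=
  card_image_of_injOn fun A hA B hB h => by
    rw [← erase_insert (hx A hA), ← erase_insert (hx B hB), h]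

lemma shadow_image (f : α → β) (hf : Function.Injective f) (𝒜 : Finset (Finset α)) :
    (𝒜.image (Finset.image f)).shadow = 𝒜.shadow.image (Finset.image f) := by
  ext u
  simp only [mem_shadow_iff, mem_image]
  constructor
  · rintro ⟨s, ⟨A, hA, rfl⟩, y, hy, rfl⟩
    obtain ⟨x, hx, rfl⟩ := mem_image.1 hy
    exact ⟨A.erase x, ⟨A, hA, x, hx, rfl⟩, image_erase hf A x⟩
  · rintro ⟨B, ⟨A, hA, x, hx, rfl⟩, rfl⟩
    exact ⟨A.image f, ⟨A, hA, rfl⟩, f x, mem_image_of_mem f hx, (image_erase hf A x).symm⟩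

/-- The extremal family: colex-style initial segment built from the cascade data. -/
def fam (a : ℕ → ℕ) (t : ℕ) : ℕ → Finset (Finset ℕ)
  | 0 => Finset.powersetCard t (Finset.range (a t))
  | j + 1 =>
    if j + 1 ≤ t then Finset.powersetCard t (Finset.range (a t))
    else Finset.powersetCard (j + 1) (Finset.range (a (j + 1))) ∪
      (fam a t j).image (insert (a (j + 1)))

lemma fam_self (a : ℕ → ℕ) (t : ℕ) :
    fam a t t = Finset.powersetCard t (Finset.range (a t)) := by
  cases t with
  | zero => rfl
  | succ s => rw [fam, if_pos le_rfl]

lemma fam_succ (a : ℕ → ℕ) {t j : ℕ} (h : t ≤ j) :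
    fam a t (j + 1) = Finset.powersetCard (j + 1) (Finset.range (a (j + 1))) ∪
      (fam a t j).image (insert (a (j + 1))) := by
  rw [fam, if_neg (by omega)]

lemma fam_props (a : ℕ → ℕ) (t : ℕ) (ht : 1 ≤ t) (hta : t ≤ a t) :
    ∀ j, t ≤ j → (∀ i, t ≤ i → i < j → a i < a (i + 1)) →
      (j ≤ a j) ∧
      (∀ A ∈ fam a t j, A.card = j ∧ A ⊆ Finset.range (a j + 1)) ∧
      (fam a t j).card = ∑ i ∈ Finset.Icc t j, (a i).choose i ∧
      ((fam a t j).shadow).card = ∑ i ∈ Finset.Icc t j, (a i).choose (i - 1) ∧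
      (∀ A ∈ fam a t j, ∀ B : Finset ℕ, B.card = j →
        toColex B ≤ toColex A → B ∈ fam a t j) := by
  intro j hj
  induction j, hj using Nat.le_induction with
  | base =>
    intro _
    rw [fam_self]
    have hcard : (Finset.range (a t)).card = a t := card_range _
    refine ⟨hta, ?_, ?_, ?_, ?_⟩
    · intro A hA
      rw [mem_powersetCard] at hA
      exact ⟨hA.2, hA.1.trans (range_subset_range.2 (Nat.le_succ _))⟩
    · rw [card_powersetCard, hcard, Icc_self, sum_singleton]
    · obtain ⟨t', rfl⟩ : ∃ t', t = t' + 1 := ⟨t - 1, by omega⟩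
      rw [shadow_powersetCard _ _ (by rwa [hcard]), card_powersetCard, hcard,
        Icc_self, sum_singleton]
      simp
    · intro A hA B hBc hBA
      rw [mem_powersetCard] at hA ⊢
      refine ⟨fun b hb => ?_, hBc⟩
      have : ∀ c ∈ A, c < a t := fun c hc => mem_range.1 (hA.1 hc)
      exact mem_range.2 (Colex.forall_lt_mono hBA this b hb)
  | succ j hj IH =>
    intro hmono
    obtain ⟨haj, hmem, hcard, hshadow, hseg⟩ :=
      IH (fun i h1 h2 => hmono i h1 (by omega))
    have hx : a j < a (j + 1) := hmono j hj (by omega)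
    have hxj : j + 1 ≤ a (j + 1) := by omega
    set x := a (j + 1) with hxdef
    have hnotin : ∀ A ∈ fam a t j, x ∉ A := fun A hA h =>
      by have := mem_range.1 ((hmem A hA).2 h); omega
    have hsubx : ∀ A ∈ fam a t j, A ⊆ Finset.range x := fun A hA =>
      (hmem A hA).2.trans (range_subset_range.2 (by omega))
    have hshadow_notin : ∀ B ∈ (fam a t j).shadow, x ∉ B := by
      intro B hB h
      obtain ⟨s, hs, hBs⟩ := exists_subset_of_mem_shadow hB
      exact hnotin s hs (hBs h)
    rw [fam_succ a hj, ← hxdef]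
    have hrange : (Finset.range x).card = x := card_range _
    have hdisj : Disjoint (Finset.powersetCard (j + 1) (Finset.range x))
        ((fam a t j).image (insert x)) := by
      rw [disjoint_left]
      rintro A hA hA'
      obtain ⟨B, hB, rfl⟩ := mem_image.1 hA'
      exact absurd ((mem_powersetCard.1 hA).1 (mem_insert_self x B)) (by simp)
    refine ⟨hxj, ?_, ?_, ?_, ?_⟩
    · intro A hA
      rcases mem_union.1 hA with hA | hA
      · rw [mem_powersetCard] at hA
        exact ⟨hA.2, hA.1.trans (range_subset_range.2 (Nat.le_succ _))⟩
      · obtain ⟨B, hB, rfl⟩ := mem_image.1 hA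
        refine ⟨?_, ?_⟩
        · rw [card_insert_of_notMem (hnotin B hB), (hmem B hB).1]
        · intro y hy
          rcases mem_insert.1 hy with rfl | hy
          · exact mem_range.2 (by omega)
          · exact mem_range.2 (by have := mem_range.1 ((hmem B hB).2 hy); omega)
    · rw [card_union_of_disjoint hdisj, card_powersetCard, hrange,
        card_image_insert x _ hnotin, hcard, Finset.sum_Icc_succ_top (by omega)]
      ring
    · rw [shadow_union', shadow_powersetCard _ _ (by rw [hrange]; omega),
        shadow_image_insert x _ hnotin]
      have habs : fam a t j ⊆ Finset.powersetCard j (Finset.range x) := by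
        intro A hA
        exact mem_powersetCard.2 ⟨hsubx A hA, (hmem A hA).1⟩
      rw [← union_assoc, union_eq_left.2 habs]
      have hdisj2 : Disjoint (Finset.powersetCard j (Finset.range x))
          (((fam a t j).shadow).image (insert x)) := by
        rw [disjoint_left]
        rintro A hA hA'
        obtain ⟨B, hB, rfl⟩ := mem_image.1 hA'
        exact absurd ((mem_powersetCard.1 hA).1 (mem_insert_self x B)) (by simp)
      rw [card_union_of_disjoint hdisj2, card_powersetCard, hrange,
        card_image_insert x _ hshadow_notin, hshadow,
        Finset.sum_Icc_succ_top (show t ≤ j + 1 by omega)]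
      simp only [Nat.add_sub_cancel]
      ring
    · intro A hA B hBc hBA
      rcases mem_union.1 hA with hA | hA
      · -- A is a (j+1)-subset of range x
        rw [mem_powersetCard] at hA
        have : ∀ c ∈ A, c < x := fun c hc => mem_range.1 (hA.1 hc)
        have hBsub : ∀ b ∈ B, b < x := Colex.forall_lt_mono hBA this
        exact mem_union_left _ (mem_powersetCard.2 ⟨fun b hb => mem_range.2 (hBsub b hb), hBc⟩)
      · obtain ⟨A', hA', rfl⟩ := mem_image.1 hA
        have hxA' : x ∉ A' := hnotin A' hA'
        by_cases hxB : x ∈ B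
        · -- strip off x from both
          have hErase : toColex (B.erase x) ≤ toColex A' := by
            rw [Colex.toColex_le_toColex]
            intro b hb hbA'
            have hbB : b ∈ B := mem_of_mem_erase hb
            have hbx : b ≠ x := ne_of_mem_erase hb
            have hbA : b ∉ insert x A' := by simp [hbx, hbA']
            obtain ⟨c, hc, hcB, hbc⟩ := Colex.toColex_le_toColex.1 hBA hbB hbA
            have hcx : c ≠ x := fun h => hcB (h ▸ hxB)
            have hcA' : c ∈ A' := by rcases mem_insert.1 hc with h | h; exacts [absurd h hcx, h]
            exact ⟨c, hcA', fun h => hcB (mem_of_mem_erase h), hbc⟩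
          have hBec : (B.erase x).card = j := by
            simp [card_erase_of_mem hxB, hBc]
          have := hseg A' hA' (B.erase x) hBec hErase
          refine mem_union_right _ (mem_image.2 ⟨B.erase x, this, ?_⟩)
          rw [insert_erase hxB]
        · -- B avoids x, so all its elements are < x
          have hAlt : ∀ c ∈ insert x A', c < x + 1 := by
            intro c hc
            rcases mem_insert.1 hc with rfl | hc
            · omega
            · have := mem_range.1 ((hmem A' hA').2 hc); omega
          have hBle : ∀ b ∈ B, b < x + 1 := Colex.forall_lt_mono hBA hAlt
          have hBlt : ∀ b ∈ B, b < x := fun b hb =>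
            lt_of_le_of_ne (by have := hBle b hb; omega) (fun h => hxB (h ▸ hb))
          exact mem_union_left _
            (mem_powersetCard.2 ⟨fun b hb => mem_range.2 (hBlt b hb), hBc⟩)

end KKAux


namespace KKAux2
open Colex

noncomputable def lift (N : ℕ) (𝒜 : Finset (Finset ℕ)) : Finset (Finset (Fin N)) :=
  𝒜.image (fun A => A.preimage Fin.val Fin.val_injective.injOn)

variable {N : ℕ} {𝒜 : Finset (Finset ℕ)}

lemma image_val_preimage (A : Finset ℕ) (hA : A ⊆ range N) :
    (A.preimage (Fin.val : Fin N → ℕ) Fin.val_injective.injOn).image Fin.val = A := by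
  ext y
  simp only [mem_image, mem_preimage]
  constructor
  · rintro ⟨z, hz, rfl⟩; exact hz
  · intro hy
    exact ⟨⟨y, mem_range.1 (hA hy)⟩, hy, rfl⟩

lemma mem_lift (h𝒜 : ∀ A ∈ 𝒜, A ⊆ range N) (B : Finset (Fin N)) :
    B ∈ lift N 𝒜 ↔ B.image Fin.val ∈ 𝒜 := by
  constructor
  · rintro hB
    obtain ⟨A, hA, rfl⟩ := mem_image.1 hB
    rwa [image_val_preimage A (h𝒜 A hA)]
  · intro h
    refine mem_image.2 ⟨B.image Fin.val, h, ?_⟩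
    ext y
    simp only [mem_preimage, mem_image]
    constructor
    · rintro ⟨z, hz, hzy⟩
      rwa [Fin.val_injective hzy] at hz
    · intro hy
      exact ⟨y, hy, rfl⟩

lemma image_lift (h𝒜 : ∀ A ∈ 𝒜, A ⊆ range N) :
    (lift N 𝒜).image (Finset.image Fin.val) = 𝒜 := by
  ext A
  simp only [mem_image]
  constructor
  · rintro ⟨B, hB, rfl⟩
    exact (mem_lift h𝒜 B).1 hB
  · intro hA
    exact ⟨A.preimage Fin.val Fin.val_injective.injOn, mem_image.2 ⟨A, hA, rfl⟩,
      image_val_preimage A (h𝒜 A hA)⟩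

lemma card_lift (h𝒜 : ∀ A ∈ 𝒜, A ⊆ range N) : (lift N 𝒜).card = 𝒜.card := by
  conv_rhs => rw [← image_lift h𝒜]
  rw [card_image_of_injective _ (Finset.image_injective Fin.val_injective)]

end KKAux2


open KKAux KKAux2 in
set_option maxHeartbeats 1000000 in
/-- The minimum of `|∂U|` over all families `U` of `n` distinct `k`-element sets
equals `δ_{k-1}(n)`, computed from the cascade representation of `n`. -/
theorem minShadow_eq_delta (n k : ℕ) (hn : 0 < n) (hk : 0 < k)
    (t : ℕ) (a : ℕ → ℕ) (hc : IsCascade n k t a) :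
    minShadow n k = ∑ j ∈ Finset.Icc t k, (a j).choose (j - 1) := by
  obtain ⟨ht, htk, hta, hmono, hsum⟩ := hc
  obtain ⟨hak, hmem, hcard, hshadow, hseg⟩ :=
    KKAux.fam_props a t ht hta k htk (fun i h1 h2 => hmono i h1 h2)
  set W := KKAux.fam a t k with hW
  set δ := ∑ j ∈ Finset.Icc t k, (a j).choose (j - 1) with hδ
  have hWn : W.card = n := by rw [hcard, hsum]
  have hWsized : ∀ A ∈ W, A.card = k := fun A hA => (hmem A hA).1
  have hmemS : δ ∈ {m | ∃ U : Finset (Finset ℕ),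
      U.card = n ∧ (∀ A ∈ U, A.card = k) ∧ (Finset.shadow U).card = m} :=
    ⟨W, hWn, hWsized, hshadow⟩
  refine le_antisymm (Nat.sInf_le hmemS) (le_csInf ⟨δ, hmemS⟩ ?_)
  rintro m ⟨U, hUn, hUsized, rfl⟩
  set N := ((U ∪ W).sup (fun A => A.sup id)) + 1 with hN
  have hbound : ∀ A ∈ U ∪ W, A ⊆ range N := by
    intro A hA y hy
    have h1 : A.sup id ≤ (U ∪ W).sup (fun A => A.sup id) := Finset.le_sup hA
    have h2 : y ≤ A.sup id := Finset.le_sup (f := id) hy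
    exact mem_range.2 (by omega)
  have hU : ∀ A ∈ U, A ⊆ range N := fun A hA => hbound A (mem_union_left _ hA)
  have hWb : ∀ A ∈ W, A ⊆ range N := fun A hA => hbound A (mem_union_right _ hA)
  have hliftU_sized : ((lift N U : Finset (Finset (Fin N))) : Set (Finset (Fin N))).Sized k := by
    intro B hB
    have h1 := (mem_lift hU B).1 (mem_coe.1 hB)
    have h2 := hUsized _ h1
    rwa [card_image_of_injective _ Fin.val_injective] at h2
  have hinit : Finset.Colex.IsInitSeg (lift N W) k := by
    constructor
    · intro B hB
      have h1 := (mem_lift hWb B).1 (mem_coe.1 hB)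
      have h2 := hWsized _ h1
      rwa [card_image_of_injective _ Fin.val_injective] at h2
    · rintro s B hs ⟨hlt, hBc⟩
      rw [mem_lift hWb] at hs ⊢
      have hlt' : toColex (B.image Fin.val) < toColex (s.image Fin.val) :=
        (Colex.toColex_image_lt_toColex_image Fin.val_strictMono).2 hlt
      exact hseg _ hs _ (by rw [card_image_of_injective _ Fin.val_injective, hBc]) hlt'.le
  have hcards : (lift N W).card ≤ (lift N U).card := by
    rw [card_lift hWb, card_lift hU, hWn, hUn]
  have hkk := Finset.kruskal_katona hliftU_sized hcards hinit
  have hshW : ((lift N W).shadow).card = W.shadow.card := by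
    conv_rhs => rw [← image_lift hWb]
    rw [shadow_image _ Fin.val_injective,
      card_image_of_injective _ (Finset.image_injective Fin.val_injective)]
  have hshU : ((lift N U).shadow).card = U.shadow.card := by
    conv_rhs => rw [← image_lift hU]
    rw [shadow_image _ Fin.val_injective,
      card_image_of_injective _ (Finset.image_injective Fin.val_injective)]
  calc δ = ((lift N W).shadow).card := by rw [hshW, hshadow]
    _ ≤ ((lift N U).shadow).card := by convert hkk using 3
    _ = U.shadow.card := hshU
end

section
/- Let U be a finite family of n distinct k-element sets (k ≥ 1), let V = ⋃_{A∈U} A with |V| > k, and for i ∈ V set B_i = {A ∈ U : i ∉ A}. Then Σ_{i∈V} |∂B_i| ≥ k·n. (Counting inequality used in the proof of Lemma 2.1: each A ∈ U contributes k distinct sets of its boundary to ∂B_i for every i ∉ A, and each (k-1)-set in ∂B_i arises from at most |V|−k members of U.) -/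
open Finset

/-- Counting inequality: for a family `U` of `n` distinct `k`-element sets with
underlying set `V = ⋃_{A ∈ U} A`, `|V| > k`, and `B i = {A ∈ U : i ∉ A}`, one has
`∑_{i ∈ V} |∂(B i)| ≥ k * n`. -/
theorem sum_card_shadow_B (n k : ℕ) (hk : 1 ≤ k)
    (U : Finset (Finset ℕ)) (hUn : U.card = n) (hUk : ∀ A ∈ U, A.card = k)
    (hV : k < (U.sup id).card) :
    k * n ≤ ∑ i ∈ U.sup id, (Finset.shadow (U.filter fun A => i ∉ A)).card := by
  classical
  set V := U.sup id with hVdef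
  have hAV : ∀ A ∈ U, A ⊆ V := fun A hA => Finset.le_sup (f := id) hA
  set B : ℕ → Finset (Finset ℕ) := fun i => U.filter fun A => i ∉ A with hB
  set m : ℕ := V.card - k with hm
  have hm0 : 0 < m := by omega
  -- facts about S in shadow (B i)
  have hmem : ∀ i ∈ V, ∀ S ∈ Finset.shadow (B i),
      S.card = k - 1 ∧ S ⊆ V ∧ i ∉ S := by
    intro i hi S hS
    rw [Finset.mem_shadow_iff_insert_mem] at hS
    obtain ⟨a, ha, hins⟩ := hS
    rw [hB, Finset.mem_filter] at hins
    obtain ⟨hinsU, hiins⟩ := hins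
    have hcard := hUk _ hinsU
    rw [Finset.card_insert_of_notMem ha] at hcard
    refine ⟨by omega, ?_, ?_⟩
    · exact (Finset.subset_insert a S).trans (hAV _ hinsU)
    · intro hiS; exact hiins (Finset.mem_insert_of_mem hiS)
  -- Lemma A : each shadow set lies in at most m members of B i
  have hfib : ∀ i ∈ V, ∀ S ∈ Finset.shadow (B i),
      ((B i).filter fun A => S ⊆ A).card ≤ m := by
    intro i hi S hS
    obtain ⟨hScard, hSV, hiS⟩ := hmem i hi S hS
    have hsub : ((B i).filter fun A => S ⊆ A)
        ⊆ (V \ insert i S).image (fun a => insert a S) := by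
      intro A hA
      rw [Finset.mem_filter, hB, Finset.mem_filter] at hA
      obtain ⟨⟨hAU, hiA⟩, hSA⟩ := hA
      have hAk := hUk _ hAU
      have hne : (A \ S).Nonempty := by
        rw [← Finset.card_pos, Finset.card_sdiff_of_subset hSA]
        omega
      obtain ⟨a, haAS⟩ := hne
      have haA : a ∈ A := (Finset.mem_sdiff.mp haAS).1
      have haS : a ∉ S := (Finset.mem_sdiff.mp haAS).2
      have hAeq : insert a S = A := by
        apply Finset.eq_of_subset_of_card_le
        · exact Finset.insert_subset haA hSA
        · rw [Finset.card_insert_of_notMem haS]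
          omega
      refine Finset.mem_image.mpr ⟨a, ?_, hAeq⟩
      rw [Finset.mem_sdiff, Finset.mem_insert]
      refine ⟨hAV _ hAU haA, ?_⟩
      push_neg
      exact ⟨fun h => hiA (h ▸ haA), haS⟩
    calc ((B i).filter fun A => S ⊆ A).card
        ≤ ((V \ insert i S).image (fun a => insert a S)).card :=
          Finset.card_le_card hsub
      _ ≤ (V \ insert i S).card := Finset.card_image_le
      _ = V.card - (insert i S).card := by
          rw [Finset.card_sdiff_of_subset (Finset.insert_subset hi hSV)]
      _ = m := by rw [Finset.card_insert_of_notMem hiS]; omega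
  -- Lemma B : each A ∈ B i contains exactly k shadow sets of B i
  have hAfib : ∀ i ∈ V, ∀ A ∈ B i,
      ((Finset.shadow (B i)).filter fun S => S ⊆ A).card = k := by
    intro i hi A hA
    have hAU : A ∈ U := (Finset.mem_filter.mp hA).1
    have hAk := hUk _ hAU
    have heq : ((Finset.shadow (B i)).filter fun S => S ⊆ A) = A.image A.erase := by
      ext S
      rw [Finset.mem_filter, Finset.mem_image]
      constructor
      · rintro ⟨hS, hSA⟩
        obtain ⟨hScard, -, -⟩ := hmem i hi S hS
        have hne : (A \ S).Nonempty := by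
          rw [← Finset.card_pos, Finset.card_sdiff_of_subset hSA]
          omega
        obtain ⟨a, haAS⟩ := hne
        have haA : a ∈ A := (Finset.mem_sdiff.mp haAS).1
        have haS : a ∉ S := (Finset.mem_sdiff.mp haAS).2
        refine ⟨a, haA, ?_⟩
        have hsub : S ⊆ A.erase a := fun x hx =>
          Finset.mem_erase.mpr ⟨fun h => haS (h ▸ hx), hSA hx⟩
        exact (Finset.eq_of_subset_of_card_le hsub
          (by rw [Finset.card_erase_of_mem haA]; omega)).symm
      · rintro ⟨a, haA, rfl⟩
        refine ⟨?_, Finset.erase_subset a A⟩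
        exact Finset.erase_mem_shadow hA haA
    rw [heq, Finset.card_image_of_injOn (Finset.erase_injOn A), hAk]
  -- pointwise: k * |B i| ≤ m * |∂(B i)|
  have hpt : ∀ i ∈ V, k * (B i).card ≤ m * (Finset.shadow (B i)).card := by
    intro i hi
    have hdc : ∑ A ∈ B i, ((Finset.shadow (B i)).filter fun S => S ⊆ A).card
        = ∑ S ∈ Finset.shadow (B i), ((B i).filter fun A => S ⊆ A).card := by
      simp only [Finset.card_filter]
      exact Finset.sum_comm
    calc k * (B i).card = ∑ A ∈ B i, k := by rw [Finset.sum_const, smul_eq_mul, mul_comm]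
      _ = ∑ A ∈ B i, ((Finset.shadow (B i)).filter fun S => S ⊆ A).card :=
          Finset.sum_congr rfl fun A hA => (hAfib i hi A hA).symm
      _ = ∑ S ∈ Finset.shadow (B i), ((B i).filter fun A => S ⊆ A).card := hdc
      _ ≤ ∑ S ∈ Finset.shadow (B i), m := Finset.sum_le_sum (hfib i hi)
      _ = m * (Finset.shadow (B i)).card := by rw [Finset.sum_const, smul_eq_mul, mul_comm]
  -- total count of B i
  have hsumB : ∑ i ∈ V, (B i).card = m * n := by
    have h1 : ∀ i ∈ V, (B i).card = n - (U.filter fun A => i ∈ A).card := by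
      intro i hi
      have h := Finset.card_filter_add_card_filter_not (s := U)
        (p := fun A => i ∈ A)
      show (U.filter fun A => i ∉ A).card = n - (U.filter fun A => i ∈ A).card
      omega
    have h2 : ∑ i ∈ V, (U.filter fun A => i ∈ A).card = k * n := by
      simp only [Finset.card_filter]
      rw [Finset.sum_comm]
      have : ∀ A ∈ U, (∑ i ∈ V, if i ∈ A then 1 else 0) = k := by
        intro A hA
        rw [← Finset.card_filter]
        have : V.filter (fun i => i ∈ A) = A := by
          ext x
          simp only [Finset.mem_filter]
          exact ⟨fun h => h.2, fun h => ⟨hAV _ hA h, h⟩⟩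
        rw [this, hUk _ hA]
      rw [Finset.sum_congr rfl this, Finset.sum_const, smul_eq_mul, hUn]
      ring
    have h3 : ∀ i ∈ V, (U.filter fun A => i ∈ A).card ≤ n := by
      intro i hi
      rw [← hUn]
      exact Finset.card_filter_le _ _
    rw [Finset.sum_congr rfl h1]
    have h4 : (∑ x ∈ V, (n - (U.filter fun A => x ∈ A).card))
        + ∑ x ∈ V, (U.filter fun A => x ∈ A).card = ∑ x ∈ V, n := by
      rw [← Finset.sum_add_distrib]
      exact Finset.sum_congr rfl fun x hx => Nat.sub_add_cancel (h3 x hx)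
    rw [Finset.sum_const, smul_eq_mul] at h4
    have h5 : V.card * n = m * n + k * n := by
      have hvk : V.card = m + k := by omega
      rw [hvk]; ring
    omega
  -- finish
  have key : m * (k * n) ≤ m * ∑ i ∈ V, (Finset.shadow (B i)).card := by
    calc m * (k * n) = k * (m * n) := by ring
      _ = k * ∑ i ∈ V, (B i).card := by rw [hsumB]
      _ = ∑ i ∈ V, k * (B i).card := by rw [Finset.mul_sum]
      _ ≤ ∑ i ∈ V, m * (Finset.shadow (B i)).card := Finset.sum_le_sum hpt
      _ = m * ∑ i ∈ V, (Finset.shadow (B i)).card := by rw [Finset.mul_sum]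
  exact Nat.le_of_mul_le_mul_left key hm0
end

section
/- Let U be a finite family of k-element sets (k ≥ 2), let i ∈ ⋃_{A∈U} A, and set B_i = {A ∈ U : i ∉ A} and C_i = {A∖{i} : i ∈ A ∈ U}. Then ∂U = ∂B_i ∪ C_i ∪ ({i}(∪)∂C_i), where {i}(∪)F := {{i}∪A : A ∈ F}; moreover ∂B_i and {i}(∪)∂C_i are disjoint. Consequently |∂U| ≥ |∂B_i| + |∂C_i| and |∂U| ≥ |C_i ∪ ∂B_i| + |∂C_i|. -/
open Finset

/-- Decomposition of the shadow: for a family `U` of `k`-element sets (`k ≥ 2`),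
`i ∈ ⋃_{A ∈ U} A`, `B = {A ∈ U : i ∉ A}` and `C = {A \ {i} : i ∈ A ∈ U}`, one has
`∂U = ∂B ∪ C ∪ ({i}(∪)∂C)`, the families `∂B` and `{i}(∪)∂C` are disjoint, and
consequently `|∂U| ≥ |∂B| + |∂C|` and `|∂U| ≥ |C ∪ ∂B| + |∂C|`. -/
theorem shadow_decomposition (k : ℕ) (hk : 2 ≤ k)
    (U : Finset (Finset ℕ)) (hUk : ∀ A ∈ U, A.card = k)
    (i : ℕ) (hi : i ∈ U.sup id)
    (B C : Finset (Finset ℕ))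
    (hB : B = U.filter fun A => i ∉ A)
    (hC : C = (U.filter fun A => i ∈ A).image fun A => A.erase i) :
    Finset.shadow U = Finset.shadow B ∪ C ∪ (Finset.shadow C).image (insert i) ∧
    Disjoint (Finset.shadow B) ((Finset.shadow C).image (insert i)) ∧
    (Finset.shadow B).card + (Finset.shadow C).card ≤ (Finset.shadow U).card ∧
    (C ∪ Finset.shadow B).card + (Finset.shadow C).card ≤ (Finset.shadow U).card := by
  -- elements of ∂B don't contain i
  have hBnoti : ∀ s ∈ Finset.shadow B, i ∉ s := by
    intro s hs
    rw [mem_shadow_iff] at hs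
    obtain ⟨t, ht, a, ha, rfl⟩ := hs
    rw [hB, mem_filter] at ht
    exact fun h => ht.2 (mem_erase.1 h).2
  -- elements of C don't contain i
  have hCnoti : ∀ s ∈ C, i ∉ s := by
    intro s hs
    rw [hC, mem_image] at hs
    obtain ⟨t, _, rfl⟩ := hs
    exact notMem_erase i t
  -- elements of ∂C don't contain i
  have hsCnoti : ∀ s ∈ Finset.shadow C, i ∉ s := by
    intro s hs
    rw [mem_shadow_iff] at hs
    obtain ⟨t, ht, a, ha, rfl⟩ := hs
    exact fun h => hCnoti t ht (mem_erase.1 h).2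
  -- main equality
  have heq : Finset.shadow U = Finset.shadow B ∪ C ∪ (Finset.shadow C).image (insert i) := by
    ext s
    simp only [mem_union, mem_image]
    constructor
    · rintro hs
      rw [mem_shadow_iff] at hs
      obtain ⟨A, hA, a, ha, rfl⟩ := hs
      by_cases hiA : i ∈ A
      · by_cases hai : a = i
        · subst hai
          exact Or.inl (Or.inr (by rw [hC, mem_image]; exact ⟨A, mem_filter.2 ⟨hA, hiA⟩, rfl⟩))
        · refine Or.inr ⟨(A.erase a).erase i, ?_, ?_⟩
          · rw [mem_shadow_iff]
            refine ⟨A.erase i, by rw [hC, mem_image]; exact ⟨A, mem_filter.2 ⟨hA, hiA⟩, rfl⟩, a,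
              mem_erase.2 ⟨hai, ha⟩, ?_⟩
            rw [erase_right_comm]
          · rw [insert_erase (mem_erase.2 ⟨fun h => hai h.symm, hiA⟩)]
      · exact Or.inl (Or.inl (mem_shadow_iff.2 ⟨A, by rw [hB]; exact mem_filter.2 ⟨hA, hiA⟩, a, ha, rfl⟩))
    · rintro ((hs | hs) | ⟨t, ht, rfl⟩)
      · rw [mem_shadow_iff] at hs ⊢
        obtain ⟨A, hA, a, ha, rfl⟩ := hs
        rw [hB, mem_filter] at hA
        exact ⟨A, hA.1, a, ha, rfl⟩
      · rw [hC, mem_image] at hs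
        obtain ⟨A, hA, rfl⟩ := hs
        rw [mem_filter] at hA
        exact mem_shadow_iff.2 ⟨A, hA.1, i, hA.2, rfl⟩
      · rw [mem_shadow_iff] at ht
        obtain ⟨c, hc, a, ha, rfl⟩ := ht
        rw [hC, mem_image] at hc
        obtain ⟨A, hA, rfl⟩ := hc
        rw [mem_filter] at hA
        rw [mem_shadow_iff]
        refine ⟨A, hA.1, a, (mem_erase.1 ha).2, ?_⟩
        rw [← insert_erase (mem_erase.2 ⟨fun h => (mem_erase.1 ha).1 h.symm, hA.2⟩), erase_right_comm]
  -- disjointness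
  have hdisj : Disjoint (Finset.shadow B) ((Finset.shadow C).image (insert i)) := by
    rw [disjoint_left]
    intro s hs h
    obtain ⟨t, -, rfl⟩ := mem_image.1 h
    exact hBnoti _ hs (mem_insert_self i t)
  have hdisj2 : Disjoint (C ∪ Finset.shadow B) ((Finset.shadow C).image (insert i)) := by
    rw [disjoint_left]
    intro s hs h'
    obtain ⟨t, -, rfl⟩ := mem_image.1 h'
    rcases mem_union.1 hs with h | h
    · exact hCnoti _ h (mem_insert_self i t)
    · exact hBnoti _ h (mem_insert_self i t)
  have hcardimg : ((Finset.shadow C).image (insert i)).card = (Finset.shadow C).card := by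
    apply card_image_of_injOn
    intro t ht t' ht' h
    have := congrArg (fun s => Finset.erase s i) h
    simpa [erase_insert (hsCnoti _ ht), erase_insert (hsCnoti _ ht')] using this
  refine ⟨heq, hdisj, ?_, ?_⟩
  · calc (Finset.shadow B).card + (Finset.shadow C).card
        ≤ (C ∪ Finset.shadow B).card + (Finset.shadow C).card := by
          exact Nat.add_le_add_right (card_le_card subset_union_right) _
      _ ≤ (Finset.shadow U).card := by
          rw [heq, union_comm (Finset.shadow B) C, ← hcardimg]
          exact (card_union_of_disjoint hdisj2).symm.le
  · rw [heq, union_comm (Finset.shadow B) C, ← hcardimg]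
    exact (card_union_of_disjoint hdisj2).symm.le
end
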